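/- arXiv:1312.5119 — 3 statements merged into one kernel-verified Lean document; each statement's English description precedes it below -/
import Mathlib

section
/- Let m and α_1,…,α_m be fixed positive integers with α_1 + ⋯ + α_m even, and let 𝔫_o(α) = #{i ∈ {1,…,m} : α_i is odd}. Then there is a constant C, depending only on m and α_1,…,α_m, such that for every integer n ≥ m and any mutually distinct indices l_1,…,l_m ∈ {1,…,n}, |E[Z_{l_1}^{α_1} ⋯ Z_{l_m}^{α_m}]| ≤ C·n^{−𝔫_o(α)/2}. -/
open MeasureTheory ProbabilityTheory Finset

noncomputable section

instance permMS (n : ℕ) : MeasurableSpace (Equiv.Perm (Fin n)) := ⊤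

/-- The uniform probability measure on the set of all `n!` permutations of `{1,…,n}`. -/
def permMeasure (n : ℕ) : Measure (Equiv.Perm (Fin n)) :=
  (PMF.uniformOfFintype (Equiv.Perm (Fin n))).toMeasure

/-- The rank `Q_i` of the random permutation, as a real number in `{1,…,n}`. -/
def Qr (n : ℕ) (i : Fin n) (σ : Equiv.Perm (Fin n)) : ℝ := (σ i : ℕ) + 1

/-- The centralized and normalized rank `Z_i = sqrt(12/(n²−1))·(Q_i − (n+1)/2)`. -/
def Zr (n : ℕ) (i : Fin n) (σ : Equiv.Perm (Fin n)) : ℝ :=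
  Real.sqrt (12 / ((n : ℝ) ^ 2 - 1)) * (Qr n i σ - ((n : ℝ) + 1) / 2)



instance permMSC (n : ℕ) : MeasurableSingletonClass (Equiv.Perm (Fin n)) :=
  ⟨fun _ => MeasurableSpace.measurableSet_top⟩


noncomputable def zval (n : ℕ) (q : Fin n) : ℝ :=
  Real.sqrt (12 / ((n : ℝ) ^ 2 - 1)) * (((q : ℕ) : ℝ) + 1 - ((n : ℝ) + 1) / 2)

def Inj (n k : ℕ) : Finset (Fin k → Fin n) := univ.filter Function.Injective

noncomputable def T (n k : ℕ) (β : Fin k → ℕ) : ℝ :=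
  ∑ q ∈ Inj n k, ∏ i, zval n (q i) ^ β i

lemma T_zero (n : ℕ) (β : Fin 0 → ℕ) : T n 0 β = 1 := by
  have : Inj n 0 = univ := by
    apply Finset.filter_true_of_mem
    intro f _ a
    exact a.elim0
  rw [T, this]
  simp [Finset.card_univ]

lemma T_succ (n k : ℕ) (β : Fin (k+1) → ℕ) :
    T n (k+1) β = (∑ x : Fin n, zval n x ^ β (Fin.last k)) * T n k (β ∘ Fin.castSucc)
      - ∑ j : Fin k, T n k
          (Function.update (β ∘ Fin.castSucc) j (β (Fin.castSucc j) + β (Fin.last k))) := by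
  classical
  -- step 1: reindex by (init, last)
  have step1 : T n (k+1) β =
      ∑ q ∈ Inj n k, ∑ x ∈ (univ \ image q univ : Finset (Fin n)),
        (∏ i : Fin k, zval n (q i) ^ β i.castSucc) * zval n x ^ β (Fin.last k) := by
    rw [T]
    rw [Finset.sum_sigma' (Inj n k) (fun q => (univ \ image q univ))]
    apply Finset.sum_nbij' (fun q => (⟨Fin.init q, q (Fin.last k)⟩ :
        (_ : Fin k → Fin n) × Fin n)) (fun p => Fin.snoc p.1 p.2)
    · intro q hq
      simp only [Inj, Finset.mem_filter, Finset.mem_univ, true_and] at hq ⊢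
      rw [Finset.mem_sigma]
      constructor
      · simp only [Inj, Finset.mem_filter, Finset.mem_univ, true_and]
        exact fun a b hab => Fin.castSucc_injective k (hq hab)
      · simp only [Finset.mem_sdiff, Finset.mem_univ, true_and, Finset.mem_image, not_exists]
        intro i hi
        exact (Fin.castSucc_lt_last i).ne (hq hi)
    · rintro ⟨p, x⟩ hp
      rw [Finset.mem_sigma] at hp
      obtain ⟨hp1, hp2⟩ := hp
      simp only [Inj, Finset.mem_filter, Finset.mem_univ, true_and] at hp1 ⊢
      simp only [Finset.mem_sdiff, Finset.mem_univ, true_and, Finset.mem_image, not_exists] at hp2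
      intro a b hab
      rcases Fin.eq_castSucc_or_eq_last a with ⟨a', rfl⟩ | rfl <;>
        rcases Fin.eq_castSucc_or_eq_last b with ⟨b', rfl⟩ | rfl
      · simp only [Fin.snoc_castSucc] at hab
        exact congrArg _ (hp1 hab)
      · simp only [Fin.snoc_castSucc, Fin.snoc_last] at hab
        exact absurd hab (hp2 a')
      · simp only [Fin.snoc_castSucc, Fin.snoc_last] at hab
        exact absurd hab.symm (hp2 b')
      · rfl
    · intro q _; exact Fin.snoc_init_self q
    · rintro ⟨p, x⟩ _
      simp only [Fin.init_snoc, Fin.snoc_last]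
    · intro q _
      rw [Fin.prod_univ_castSucc]
      rfl
  rw [step1]
  -- step 2: inner sum
  have step2 : ∀ q ∈ Inj n k,
      ∑ x ∈ (univ \ image q univ : Finset (Fin n)),
        (∏ i : Fin k, zval n (q i) ^ β i.castSucc) * zval n x ^ β (Fin.last k)
      = (∑ x : Fin n, zval n x ^ β (Fin.last k)) * (∏ i : Fin k, zval n (q i) ^ β i.castSucc)
        - ∑ j : Fin k, ∏ i : Fin k, zval n (q i) ^
            (Function.update (β ∘ Fin.castSucc) j (β (Fin.castSucc j) + β (Fin.last k))) i := by
    intro q hq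
    simp only [Inj, Finset.mem_filter, Finset.mem_univ, true_and] at hq
    rw [Finset.sum_sdiff_eq_sub (Finset.subset_univ _), ← Finset.mul_sum, ← Finset.mul_sum]
    rw [Finset.sum_image (fun a _ b _ h => hq h)]
    have hupdate : ∀ j : Fin k,
        ∏ i : Fin k, zval n (q i) ^
          (Function.update (β ∘ Fin.castSucc) j (β (Fin.castSucc j) + β (Fin.last k))) i
        = zval n (q j) ^ β (Fin.last k) * ∏ i : Fin k, zval n (q i) ^ β i.castSucc := by
      intro j
      have : (fun i => zval n (q i) ^
          (Function.update (β ∘ Fin.castSucc) j (β (Fin.castSucc j) + β (Fin.last k))) i)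
          = Function.update (fun i => zval n (q i) ^ β i.castSucc) j
              (zval n (q j) ^ (β (Fin.castSucc j) + β (Fin.last k))) := by
        funext i
        by_cases h : i = j
        · subst h; simp [Function.update_self]
        · simp [Function.update_of_ne h]
      rw [this, Finset.prod_update_of_mem (Finset.mem_univ j), pow_add]
      rw [Finset.prod_eq_prod_diff_singleton_mul (Finset.mem_univ j)
        (fun i => zval n (q i) ^ β i.castSucc)]
      ring
    simp only [hupdate]
    rw [← Finset.sum_mul]
    ring
  rw [Finset.sum_congr rfl step2, Finset.sum_sub_distrib]
  congr 1
  · rw [← Finset.mul_sum]; rfl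
  · rw [Finset.sum_comm]
    apply Finset.sum_congr rfl
    intro j _
    rfl
lemma abs_zval_le (n : ℕ) (q : Fin n) : |zval n q| ≤ Real.sqrt 3 := by
  rcases Nat.lt_or_ge n 2 with h | h
  · interval_cases n
    · exact q.elim0
    · have : ((1:ℕ):ℝ) ^ 2 - 1 = 0 := by norm_num
      simp [zval, this, Real.sqrt_nonneg]
  · have hn : (2:ℝ) ≤ (n:ℝ) := by exact_mod_cast h
    have hpos : (0:ℝ) < (n:ℝ)^2 - 1 := by nlinarith
    have hq0 : (0:ℝ) ≤ ((q:ℕ):ℝ) := Nat.cast_nonneg _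
    have hq1 : ((q:ℕ):ℝ) ≤ (n:ℝ) - 1 := by
      have := q.isLt
      have : ((q:ℕ):ℝ) + 1 ≤ (n:ℝ) := by exact_mod_cast this
      linarith
    rw [← Real.sqrt_sq_eq_abs]
    apply Real.sqrt_le_sqrt
    rw [zval, mul_pow, Real.sq_sqrt (by positivity)]
    rw [div_mul_eq_mul_div, div_le_iff₀ hpos]
    nlinarith [sq_nonneg (((q:ℕ):ℝ) + 1 - ((n:ℝ)+1)/2)]

lemma sum_zval_odd (n : ℕ) {β : ℕ} (hβ : Odd β) : ∑ q : Fin n, zval n q ^ β = 0 := by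
  have key : ∀ q : Fin n, zval n q.rev = - zval n q := by
    intro q
    have hv : ((q.rev : ℕ) : ℝ) = (n : ℝ) - ((q:ℕ):ℝ) - 1 := by
      rw [Fin.val_rev]
      have := q.isLt
      push_cast [Nat.cast_sub (by omega : (q:ℕ) + 1 ≤ n)]
      ring
    simp only [zval, hv]
    ring
  have h1 : ∑ q : Fin n, zval n q ^ β = ∑ q : Fin n, zval n q.rev ^ β :=
    (Fintype.sum_bijective Fin.rev Fin.rev_involutive.bijective _ _ (fun q => rfl)).symm
  have h2 : ∑ q : Fin n, zval n q.rev ^ β = - ∑ q : Fin n, zval n q ^ β := by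
    simp only [key]
    rw [← Finset.sum_neg_distrib]
    exact Finset.sum_congr rfl fun q _ => hβ.neg_pow _
  linarith [h1, h2]

lemma sum_zval_pow_le (n β : ℕ) : |∑ q : Fin n, zval n q ^ β| ≤ (n:ℝ) * 3 ^ β := by
  calc |∑ q : Fin n, zval n q ^ β| ≤ ∑ q : Fin n, |zval n q ^ β| := Finset.abs_sum_le_sum_abs _ _
    _ ≤ ∑ _q : Fin n, (3:ℝ) ^ β := by
        apply Finset.sum_le_sum
        intro q _
        rw [abs_pow]
        calc |zval n q| ^ β ≤ Real.sqrt 3 ^ β := by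
              exact pow_le_pow_left₀ (abs_nonneg _) (abs_zval_le n q) β
          _ ≤ 3 ^ β := by
              apply pow_le_pow_left₀ (Real.sqrt_nonneg _)
              nlinarith [Real.sq_sqrt (by norm_num : (3:ℝ) ≥ 0), Real.sqrt_nonneg 3]
    _ = (n:ℝ) * 3 ^ β := by simp [mul_comm]

def oddCount {k : ℕ} (β : Fin k → ℕ) : ℕ := (univ.filter fun i => Odd (β i)).card

lemma oddCount_le {k : ℕ} (β : Fin k → ℕ) : oddCount β ≤ k := by
  simpa [oddCount] using Finset.card_filter_le univ fun i => Odd (β i)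

lemma oddCount_succ {k : ℕ} (β : Fin (k+1) → ℕ) :
    oddCount β = oddCount (β ∘ Fin.castSucc) + (if Odd (β (Fin.last k)) then 1 else 0) := by
  simp only [oddCount, Finset.card_filter]
  rw [Fin.sum_univ_castSucc]
  rfl

lemma oddCount_update {k : ℕ} (β : Fin k → ℕ) (j : Fin k) (v : ℕ) :
    oddCount (Function.update β j v) + (if Odd (β j) then 1 else 0)
      = oddCount β + (if Odd v then 1 else 0) := by
  classical
  simp only [oddCount, Finset.card_filter]
  have h1 : (fun i => if Odd (Function.update β j v i) then 1 else 0)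
      = Function.update (fun i => if Odd (β i) then (1:ℕ) else 0) j (if Odd v then 1 else 0) := by
    funext i
    by_cases h : i = j
    · subst h; simp
    · simp [Function.update_of_ne h]
  rw [h1, Finset.sum_update_of_mem (Finset.mem_univ j)]
  rw [Finset.sum_eq_sum_sdiff_singleton_add (Finset.mem_univ j) (fun i => if Odd (β i) then (1:ℕ) else 0)]
  ring

lemma sum_update {k : ℕ} (β : Fin k → ℕ) (j : Fin k) (v : ℕ) :
    ∑ i, Function.update β j v i + β j = ∑ i, β i + v := by
  classical
  have h1 : (fun i => Function.update β j v i) = Function.update β j v := rfl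
  rw [Finset.sum_update_of_mem (Finset.mem_univ j)]
  rw [Finset.sum_eq_sum_sdiff_singleton_add (Finset.mem_univ j) β]
  ring

lemma ite_odd (x : ℕ) : (if Odd x then (1:ℕ) else 0) = x % 2 := by
  by_cases h : Odd x
  · simp [h, Nat.odd_iff.mp h]
  · have := Nat.even_iff.mp (Nat.not_odd_iff_even.mp h)
    simp [h, this]

lemma T_bound (k : ℕ) : ∀ (n : ℕ), 1 ≤ n → ∀ β : Fin k → ℕ,
    |T n k β| ≤ 3 ^ (∑ i, β i) * (k.factorial : ℝ) *
      (n:ℝ) ^ (k - (oddCount β + 1)/2) := by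
  induction k with
  | zero =>
    intro n hn β
    rw [T_zero]
    simp [oddCount]
  | succ k ih =>
    intro n hn β
    have hn1 : (1:ℝ) ≤ (n:ℝ) := by exact_mod_cast hn
    have hn0 : (0:ℝ) ≤ (n:ℝ) := by positivity
    have hsum : ∑ i, β i = (∑ i, β (Fin.castSucc i)) + β (Fin.last k) :=
      Fin.sum_univ_castSucc β
    have hocount := oddCount_succ β
    have ho'le := oddCount_le (β ∘ Fin.castSucc)
    simp only [ite_odd] at hocount
    set M : ℝ := 3 ^ (∑ i, β i) * (k.factorial : ℝ) *
      (n:ℝ) ^ (k + 1 - (oddCount β + 1)/2) with hM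
    have hMnonneg : 0 ≤ M := by positivity
    have term1 : |∑ x : Fin n, zval n x ^ β (Fin.last k)| * |T n k (β ∘ Fin.castSucc)| ≤ M := by
      by_cases hb : Odd (β (Fin.last k))
      · rw [sum_zval_odd n hb, abs_zero, zero_mul]
        exact hMnonneg
      · have hb2 : β (Fin.last k) % 2 = 0 := by
          rcases Nat.even_or_odd (β (Fin.last k)) with h | h
          · exact Nat.even_iff.mp h
          · exact absurd h hb
        have hexp1 : 1 + (k - (oddCount (β ∘ Fin.castSucc) + 1)/2)
            = k + 1 - (oddCount β + 1)/2 := by omega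
        calc |∑ x : Fin n, zval n x ^ β (Fin.last k)| * |T n k (β ∘ Fin.castSucc)|
            ≤ ((n:ℝ) * 3 ^ β (Fin.last k)) *
              (3 ^ (∑ i, β (Fin.castSucc i)) * (k.factorial : ℝ) *
                (n:ℝ) ^ (k - (oddCount (β ∘ Fin.castSucc) + 1)/2)) := by
              apply mul_le_mul (sum_zval_pow_le n _) (ih n hn _) (abs_nonneg _) (by positivity)
          _ = M := by
              rw [hM, hsum, ← hexp1, pow_add, pow_add, pow_one]
              ring
    have term2 : ∀ j : Fin k,
        |T n k (Function.update (β ∘ Fin.castSucc) j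
          (β (Fin.castSucc j) + β (Fin.last k)))| ≤ M := by
      intro j
      have h1 := ih n hn (Function.update (β ∘ Fin.castSucc) j
        (β (Fin.castSucc j) + β (Fin.last k)))
      have hs := sum_update (β ∘ Fin.castSucc) j (β (Fin.castSucc j) + β (Fin.last k))
      have hoc := oddCount_update (β ∘ Fin.castSucc) j (β (Fin.castSucc j) + β (Fin.last k))
      simp only [ite_odd] at hoc
      have hs2 : ∑ i, Function.update (β ∘ Fin.castSucc) j
          (β (Fin.castSucc j) + β (Fin.last k)) i = ∑ i, β i := by
        simp only [Function.comp] at hs ⊢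
        omega
      have hexp2 : k - (oddCount (Function.update (β ∘ Fin.castSucc) j
          (β (Fin.castSucc j) + β (Fin.last k))) + 1)/2
          ≤ k + 1 - (oddCount β + 1)/2 := by omega
      rw [hs2] at h1
      refine h1.trans ?_
      rw [hM]
      gcongr
    calc |T n (k+1) β| ≤ |∑ x : Fin n, zval n x ^ β (Fin.last k)| * |T n k (β ∘ Fin.castSucc)|
          + ∑ j : Fin k, |T n k (Function.update (β ∘ Fin.castSucc) j
              (β (Fin.castSucc j) + β (Fin.last k)))| := by
          rw [T_succ, sub_eq_add_neg]
          refine (abs_add_le _ _).trans ?_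
          rw [abs_neg, abs_mul]
          gcongr
          exact Finset.abs_sum_le_sum_abs _ _
      _ ≤ M + ∑ _j : Fin k, M := by
          gcongr with j hj
          exact term2 j
      _ = 3 ^ (∑ i, β i) * ((k+1).factorial : ℝ) * (n:ℝ) ^ (k + 1 - (oddCount β + 1)/2) := by
          rw [Finset.sum_const, Finset.card_univ, Fintype.card_fin, nsmul_eq_mul,
            Nat.factorial_succ, hM]
          push_cast
          ring



lemma exists_perm_comp {n m : ℕ} {l q : Fin m → Fin n} (hl : Function.Injective l)
    (hq : Function.Injective q) : ∃ τ : Equiv.Perm (Fin n), ∀ i, τ (l i) = q i := by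
  classical
  have hcard : Fintype.card ↥(Set.range l)ᶜ = Fintype.card ↥(Set.range q)ᶜ := by
    rw [Fintype.card_compl_set, Fintype.card_compl_set,
      Set.card_range_of_injective hl, Set.card_range_of_injective hq]
  refine ⟨(Equiv.Set.sumCompl (Set.range l)).symm.trans
    (((((Equiv.ofInjective l hl).symm.trans (Equiv.ofInjective q hq)).sumCongr
      (Fintype.equivOfCardEq hcard)).trans
    (Equiv.Set.sumCompl (Set.range q)))), fun i => ?_⟩
  simp only [Equiv.trans_apply]
  rw [Equiv.Set.sumCompl_symm_apply_of_mem (Set.mem_range_self i)]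
  simp [Equiv.sumCongr_apply]

lemma fiber_card {n m : ℕ} {l : Fin m → Fin n} (hl : Function.Injective l)
    {q : Fin m → Fin n} (hq : Function.Injective q) :
    (univ.filter fun σ : Equiv.Perm (Fin n) => (fun i => σ (l i)) = q).card
      = (univ.filter fun σ : Equiv.Perm (Fin n) => (fun i => σ (l i)) = l).card := by
  classical
  obtain ⟨τ, hτ⟩ := exists_perm_comp hl hq
  apply Finset.card_nbij' (fun σ => τ⁻¹ * σ) (fun σ => τ * σ)
  · intro σ hσ
    simp only [Finset.mem_coe, Finset.mem_filter, Finset.mem_univ, true_and] at hσ ⊢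
    funext i
    have := congrFun hσ i
    simp [Equiv.Perm.mul_apply, this, ← hτ i]
  · intro σ hσ
    simp only [Finset.mem_coe, Finset.mem_filter, Finset.mem_univ, true_and] at hσ ⊢
    funext i
    have := congrFun hσ i
    simp [Equiv.Perm.mul_apply, this, hτ i]
  · intro σ _; simp [mul_assoc]
  · intro σ _; simp [← mul_assoc]

lemma sum_perm_comp {n m : ℕ} {l : Fin m → Fin n} (hl : Function.Injective l)
    (G : (Fin m → Fin n) → ℝ) :
    ∑ σ : Equiv.Perm (Fin n), G (fun i => σ (l i))
      = ((univ.filter fun σ : Equiv.Perm (Fin n) => (fun i => σ (l i)) = l).card : ℝ)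
          * ∑ q ∈ Inj n m, G q := by
  classical
  have hmaps : ∀ σ : Equiv.Perm (Fin n), σ ∈ (univ : Finset (Equiv.Perm (Fin n))) →
      (fun i => σ (l i)) ∈ Inj n m := by
    intro σ _
    simp only [Inj, Finset.mem_filter, Finset.mem_univ, true_and]
    exact σ.injective.comp hl
  rw [← Finset.sum_fiberwise_of_maps_to hmaps (fun σ => G (fun i => σ (l i)))]
  rw [Finset.mul_sum]
  apply Finset.sum_congr rfl
  intro q hq
  have hqinj : Function.Injective q := by
    simpa [Inj, Finset.mem_filter] using hq
  rw [Finset.sum_congr rfl (g := fun _ => G q) ?_, Finset.sum_const, nsmul_eq_mul,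
    fiber_card hl hqinj]
  intro σ hσ
  simp only [Finset.mem_filter] at hσ
  rw [hσ.2]

lemma card_perm_eq_fiber_mul {n m : ℕ} {l : Fin m → Fin n} (hl : Function.Injective l) :
    (Fintype.card (Fin n)).factorial
      = (univ.filter fun σ : Equiv.Perm (Fin n) => (fun i => σ (l i)) = l).card
        * (Inj n m).card := by
  classical
  have hmaps : ∀ σ : Equiv.Perm (Fin n), σ ∈ (univ : Finset (Equiv.Perm (Fin n))) →
      (fun i => σ (l i)) ∈ Inj n m := fun σ _ => by
    simp only [Inj, Finset.mem_filter, Finset.mem_univ, true_and]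
    exact σ.injective.comp hl
  have h1 : (univ : Finset (Equiv.Perm (Fin n))).card
      = ∑ q ∈ Inj n m, (univ.filter fun σ : Equiv.Perm (Fin n) => (fun i => σ (l i)) = q).card :=
    Finset.card_eq_sum_card_fiberwise hmaps
  rw [← Fintype.card_perm, ← Finset.card_univ, h1]
  rw [Finset.sum_congr rfl fun q hq => fiber_card hl (by simpa [Inj, Finset.mem_filter] using hq)]
  rw [Finset.sum_const, smul_eq_mul, mul_comm]

lemma card_Inj (n m : ℕ) : (Inj n m).card = n.descFactorial m := by
  classical
  rw [Inj, ← Fintype.card_subtype,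
    Fintype.card_congr (Equiv.subtypeInjectiveEquivEmbedding (Fin m) (Fin n)),
    Fintype.card_embedding_eq, Fintype.card_fin, Fintype.card_fin]

lemma desc_lb {n m : ℕ} (h : m ≤ n) : n ^ m ≤ m ^ m * n.descFactorial m := by
  rw [Nat.descFactorial_eq_prod_range]
  have e1 : n ^ m = ∏ _i ∈ range m, n := by simp [Finset.prod_const, Finset.card_range]
  have e2 : m ^ m * ∏ i ∈ range m, (n - i) = ∏ i ∈ range m, m * (n - i) := by
    rw [Finset.prod_mul_distrib]
    simp [Finset.prod_const, Finset.card_range]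
  rw [e1, e2]
  apply Finset.prod_le_prod'
  intro i hi
  rw [Finset.mem_range] at hi
  obtain ⟨j, hj⟩ : ∃ j, n = i + j := ⟨n - i, by omega⟩
  subst hj
  rw [Nat.add_sub_cancel_left]
  have hj1 : 1 ≤ j := by omega
  calc i + j ≤ i * j + j := by
        have : i ≤ i * j := Nat.le_mul_of_pos_right i (by omega)
        omega
    _ = (i + 1) * j := by ring
    _ ≤ m * j := Nat.mul_le_mul_right j hi


/-- If `α_1 + ⋯ + α_m` is even, then there is a constant `C` (depending only on `m` and `α`)
such that for all `n ≥ m` and mutually distinct indices `l_1,…,l_m`,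
`|E[Z_{l_1}^{α_1} ⋯ Z_{l_m}^{α_m}]| ≤ C·n^{−𝔫_o(α)/2}`, where `𝔫_o(α)` is the number of odd
exponents. -/
theorem spearman_even_moment_bound (m : ℕ) (hm : 0 < m) (α : Fin m → ℕ)
    (hα : ∀ i, 0 < α i) (heven : Even (∑ i, α i)) :
    ∃ C : ℝ, ∀ n : ℕ, m ≤ n → ∀ l : Fin m → Fin n, Function.Injective l →
      |∫ σ, ∏ i, (Zr n (l i) σ) ^ (α i) ∂(permMeasure n)| ≤
        C * (n : ℝ) ^
          (-(((Finset.univ.filter fun i => Odd (α i)).card : ℝ) / 2)) := by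
  classical
  refine ⟨3 ^ (∑ i, α i) * (m.factorial : ℝ) * (m : ℝ) ^ m, ?_⟩
  intro n hmn l hl
  have hn1 : 1 ≤ n := le_trans hm hmn
  have hnR0 : (0:ℝ) < (n:ℝ) := by exact_mod_cast hn1
  -- odd count facts
  have hoc_eq : (Finset.univ.filter fun i => Odd (α i)).card = oddCount α := rfl
  have hpar : oddCount α % 2 = 0 := by
    have h1 : oddCount α = ∑ i, α i % 2 := by
      rw [oddCount, Finset.card_filter]
      exact Finset.sum_congr rfl fun i _ => ite_odd _
    have h2 : (∑ i, α i) % 2 = (∑ i, α i % 2) % 2 := Finset.sum_nat_mod _ _ _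
    have h3 : (∑ i, α i) % 2 = 0 := Nat.even_iff.mp heven
    omega
  have hole : oddCount α ≤ m := oddCount_le α
  set t : ℕ := oddCount α / 2 with ht
  -- the integral as a normalized sum
  have hint : ∫ σ, ∏ i, (Zr n (l i) σ) ^ (α i) ∂(permMeasure n)
      = ((n.factorial : ℝ))⁻¹ * ∑ σ : Equiv.Perm (Fin n), ∏ i, zval n (σ (l i)) ^ α i := by
    rw [permMeasure, PMF.integral_eq_sum, Finset.mul_sum]
    apply Finset.sum_congr rfl
    intro σ _
    rw [PMF.uniformOfFintype_apply, smul_eq_mul]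
    congr 1
    simp [ENNReal.toReal_inv, Fintype.card_perm]
  have hsum := sum_perm_comp hl (fun q => ∏ i, zval n (q i) ^ α i)
  simp only at hsum
  set cfib : ℕ := (univ.filter fun σ : Equiv.Perm (Fin n) => (fun i => σ (l i)) = l).card
    with hcfib
  set desc : ℕ := n.descFactorial m with hdesc
  have hfact : n.factorial = cfib * desc := by
    have := card_perm_eq_fiber_mul hl
    rwa [Fintype.card_fin, card_Inj] at this
  have hdlb : n ^ m ≤ m ^ m * desc := desc_lb hmn
  have hdesc_pos : 0 < desc := by
    have h1 : 1 ≤ n ^ m := Nat.one_le_pow _ _ (by omega)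
    rcases Nat.eq_zero_or_pos desc with h | h
    · rw [h, Nat.mul_zero] at hdlb; omega
    · exact h
  have hcfib_pos : 0 < cfib := by
    have := n.factorial_pos
    rcases Nat.eq_zero_or_pos cfib with h | h
    · rw [h, Nat.zero_mul] at hfact; omega
    · exact h
  have hdR : (0:ℝ) < (desc:ℝ) := by exact_mod_cast hdesc_pos
  have hcR : (0:ℝ) < (cfib:ℝ) := by exact_mod_cast hcfib_pos
  -- |integral| = |T| / desc
  have habs : |∫ σ, ∏ i, (Zr n (l i) σ) ^ (α i) ∂(permMeasure n)|
      = ((desc:ℝ))⁻¹ * |T n m α| := by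
    rw [hint, hsum, abs_mul, abs_mul, abs_of_nonneg (by positivity : (0:ℝ) ≤ ((n.factorial:ℝ))⁻¹),
      abs_of_nonneg (by positivity : (0:ℝ) ≤ (cfib:ℝ))]
    have hfR : (n.factorial : ℝ) = (cfib : ℝ) * (desc : ℝ) := by exact_mod_cast hfact
    have hTdef : T n m α = ∑ q ∈ Inj n m, ∏ i, zval n (q i) ^ α i := rfl
    rw [hfR, ← hTdef]
    field_simp
  -- bound on T
  have hTb := T_bound m n hn1 α
  have hexp : (oddCount α + 1)/2 = t := by omega
  rw [hexp] at hTb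
  -- rpow form
  have horpow : (n:ℝ) ^ (-((oddCount α : ℝ)/2)) = ((n:ℝ) ^ t)⁻¹ := by
    have h2t : ((oddCount α : ℝ))/2 = (t : ℕ) := by
      have : oddCount α = 2 * t := by omega
      rw [this]; push_cast; ring
    rw [h2t, Real.rpow_neg (le_of_lt hnR0), Real.rpow_natCast]
  have hmain : (n:ℝ)^(m - t) / (desc:ℝ) ≤ ((m:ℝ)^m) / ((n:ℝ)^t) := by
    rw [div_le_div_iff₀ hdR (by positivity), ← pow_add]
    have hmt : m - t + t = m := by omega
    rw [hmt]
    exact_mod_cast hdlb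
  rw [hoc_eq, habs, horpow]
  calc ((desc:ℝ))⁻¹ * |T n m α|
      ≤ ((desc:ℝ))⁻¹ * (3 ^ (∑ i, α i) * (m.factorial : ℝ) * (n:ℝ) ^ (m - t)) := by
        apply mul_le_mul_of_nonneg_left hTb (by positivity)
    _ = (3 ^ (∑ i, α i) * (m.factorial : ℝ)) * ((n:ℝ)^(m - t) / (desc:ℝ)) := by ring
    _ ≤ (3 ^ (∑ i, α i) * (m.factorial : ℝ)) * (((m:ℝ)^m) / ((n:ℝ)^t)) := by
        apply mul_le_mul_of_nonneg_left hmain (by positivity)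
    _ = 3 ^ (∑ i, α i) * (m.factorial : ℝ) * (m : ℝ) ^ m * ((n:ℝ) ^ t)⁻¹ := by
        rw [div_eq_mul_inv]; ring
end
end

section
/- Let s, t be fixed nonnegative integers with s + t ≥ 3 and t ≥ 1. There is a constant C, depending only on s and t, such that for every integer n ≥ 2 and all indices l_1,…,l_s, h_1,…,h_{2t} ∈ {1,…,n}, the joint cumulant of the 2s+2t variables (Z_{l_1}, Z_{l_1}, Z_{l_2}, Z_{l_2}, …, Z_{l_s}, Z_{l_s}, Z_{h_1}, …, Z_{h_{2t}}) (each l-index appearing twice) satisfies |C(Z_{l_1},Z_{l_1},…,Z_{l_s},Z_{l_s},Z_{h_1},…,Z_{h_{2t}})| ≤ C·Σ_{σ ∈ L_{2t}^2} |E_σ(Z_{h_1},…,Z_{h_{2t}})|, where for a perfect matching σ of {1,…,2t}, E_σ(Z_{h_1},…,Z_{h_{2t}}) = Π_{{a,b}∈σ} E[Z_{h_a} Z_{h_b}]. -/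
open MeasureTheory ProbabilityTheory Finset

noncomputable section

attribute [local instance] Classical.propDecidable

/-- `P` is a set partition of the (finite) index type `ι`: its blocks are nonempty and
every index lies in exactly one block. -/
def IsSetPartition {ι : Type*} [Fintype ι] (P : Finset (Finset ι)) : Prop :=
  (∀ A ∈ P, A.Nonempty) ∧ ∀ i : ι, ∃! A : Finset ι, A ∈ P ∧ i ∈ A

/-- A perfect matching: a set partition all of whose blocks have two elements. -/
def IsPerfectMatching {ι : Type*} [Fintype ι] (P : Finset (Finset ι)) : Prop :=
  IsSetPartition P ∧ ∀ A ∈ P, A.card = 2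

/-- The joint cumulant `C(ξ_1,…,ξ_N) = Σ_{π} (−1)^{#π−1}(#π−1)! Π_{A∈π} E[Π_{i∈A} ξ_i]`,
where the sum runs over all set partitions of the index set. -/
def jointCumulant {Ω : Type*} [MeasurableSpace Ω] (μ : Measure Ω)
    {ι : Type*} [Fintype ι] (ξ : ι → Ω → ℝ) : ℝ :=
  ∑ P ∈ Finset.univ.filter (fun P : Finset (Finset ι) => IsSetPartition P),
    (-1 : ℝ) ^ (P.card - 1) * (Nat.factorial (P.card - 1) : ℝ) *
      ∏ A ∈ P, ∫ ω, (∏ i ∈ A, ξ i ω) ∂μ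

/-- `E_σ(ξ) = Π_{A∈σ} E[Π_{i∈A} ξ_i]`. -/
def momProd {Ω : Type*} [MeasurableSpace Ω] (μ : Measure Ω)
    {ι : Type*} (P : Finset (Finset ι)) (ξ : ι → Ω → ℝ) : ℝ :=
  ∏ A ∈ P, ∫ ω, (∏ i ∈ A, ξ i ω) ∂μ

/-- `C_π(ξ) = Π_{A∈π} C({ξ_i}_{i∈A})`, the product over the blocks of `π` of the joint
cumulants of the variables indexed by each block. -/
def cumProd {Ω : Type*} [MeasurableSpace Ω] (μ : Measure Ω)
    {ι : Type*} [Fintype ι] (P : Finset (Finset ι)) (ξ : ι → Ω → ℝ) : ℝ :=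
  ∏ A ∈ P, jointCumulant μ (fun a : {x // x ∈ A} => ξ a.1)

/-- The relation generating the join `P ∨ Q` of two set partitions: the equivalence closure
of "lying in a common block of `P` or of `Q`". -/
def joinRel {ι : Type*} (P Q : Finset (Finset ι)) : ι → ι → Prop :=
  Relation.EqvGen fun a b => (∃ A ∈ P, a ∈ A ∧ b ∈ A) ∨ (∃ A ∈ Q, a ∈ A ∧ b ∈ A)

/-- `B` is a block of the join `P ∨ Q`, i.e. an equivalence class of `joinRel P Q`. -/
def IsJoinBlock {ι : Type*} [Fintype ι] (P Q : Finset (Finset ι)) (B : Finset ι) : Prop :=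
  ∃ a : ι, B = Finset.univ.filter (fun b => joinRel P Q a b)

/-- The set of blocks of the join `P ∨ Q`. -/
def joinBlocks {ι : Type*} [Fintype ι] (P Q : Finset (Finset ι)) : Finset (Finset ι) :=
  Finset.univ.filter (fun B : Finset ι => IsJoinBlock P Q B)

/-- `#(P ∨ Q)`, the number of blocks of the join of two set partitions. -/
def joinCard {ι : Type*} [Fintype ι] (P Q : Finset (Finset ι)) : ℕ :=
  (joinBlocks P Q).card

/-- A word `j` is `π`-measurable if `j_α = j_β` whenever `α, β` lie in the same block. -/
def WordMeasurable {ι κ : Type*} (P : Finset (Finset ι)) (j : ι → κ) : Prop :=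
  ∀ A ∈ P, ∀ a ∈ A, ∀ b ∈ A, j a = j b


/-- The deterministic value pattern. -/
def zf (n : ℕ) (p : Fin n) : ℝ :=
  Real.sqrt (12 / ((n : ℝ) ^ 2 - 1)) * (((p : ℕ) : ℝ) + 1 - ((n : ℝ) + 1) / 2)

/-- Power sums of `zf`. -/
def Mp (n c : ℕ) : ℝ := ∑ p : Fin n, zf n p ^ c

/-- Sum over all permutations of a monomial supported on `V` with exponents `c`. -/
def permSum (n : ℕ) (V : Finset (Fin n)) (c : Fin n → ℕ) : ℝ :=
  ∑ σ : Equiv.Perm (Fin n), ∏ v ∈ V, zf n (σ v) ^ c v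

/-- The weight of an exponent pattern. -/
def wgt (n : ℕ) (V : Finset (Fin n)) (c : Fin n → ℕ) : ℕ :=
  ∑ v ∈ V, if Even (c v) then 2 else 1

lemma zf_sq_le (n : ℕ) (hn : 2 ≤ n) (p : Fin n) : zf n p ^ 2 ≤ 3 := by
  have hn2 : (2:ℝ) ≤ (n:ℝ) := by exact_mod_cast hn
  have hpos : (0:ℝ) < (n:ℝ)^2 - 1 := by nlinarith
  have h12 : (0:ℝ) ≤ 12 / ((n:ℝ)^2 - 1) := by positivity
  have hsq : zf n p ^ 2 = 12 / ((n:ℝ)^2 - 1) * (((p : ℕ) : ℝ) + 1 - ((n : ℝ) + 1) / 2)^2 := by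
    rw [zf, mul_pow, Real.sq_sqrt h12]
  have hp1 : ((p : ℕ) : ℝ) ≤ (n:ℝ) - 1 := by
    have h : ((p:ℕ) + 1 : ℕ) ≤ n := p.isLt
    have h' : ((p:ℕ):ℝ) + 1 ≤ (n:ℝ) := by exact_mod_cast h
    linarith
  have hp0 : (0:ℝ) ≤ ((p : ℕ) : ℝ) := by positivity
  have hx : (((p : ℕ) : ℝ) + 1 - ((n : ℝ) + 1) / 2)^2 ≤ (((n:ℝ)-1)/2)^2 := by
    have h1 : -(((n:ℝ)-1)/2) ≤ ((p : ℕ) : ℝ) + 1 - ((n : ℝ) + 1) / 2 := by linarith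
    have h2 : ((p : ℕ) : ℝ) + 1 - ((n : ℝ) + 1) / 2 ≤ ((n:ℝ)-1)/2 := by linarith
    nlinarith
  rw [hsq]
  rw [div_mul_eq_mul_div, div_le_iff₀ hpos]
  nlinarith

lemma zf_abs_le (n : ℕ) (hn : 2 ≤ n) (p : Fin n) : |zf n p| ≤ 2 := by
  have h := zf_sq_le n hn p
  have := abs_nonneg (zf n p)
  nlinarith [sq_abs (zf n p)]

lemma zf_rev (n : ℕ) (p : Fin n) : zf n p.rev = - zf n p := by
  have hp : ((p.rev : ℕ) : ℝ) = (n : ℝ) - ((p : ℕ) : ℝ) - 1 := by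
    rw [Fin.val_rev]
    have := p.isLt
    have h1 : (p:ℕ) + 1 ≤ n := this
    push_cast [Nat.cast_sub h1]
    ring
  rw [zf, zf, hp]
  ring

lemma Mp_odd (n : ℕ) {c : ℕ} (hc : Odd c) : Mp n c = 0 := by
  refine Finset.sum_involution (fun p _ => p.rev) ?_ ?_ (fun _ _ => Finset.mem_univ _) ?_
  · intro p _
    rw [zf_rev, hc.neg_pow]
    ring
  · intro p _ hne heq
    apply hne
    have hz : zf n p = 0 := by
      have := zf_rev n p
      rw [heq] at this
      linarith
    rw [hz]
    obtain ⟨k, hk⟩ := hc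
    exact zero_pow (by omega : c ≠ 0)
  · intro p _
    exact Fin.rev_rev p

lemma sum_sq_aux (n : ℕ) :
    ∑ p : Fin n, (((p : ℕ) : ℝ) + 1)^2 = (n:ℝ) * ((n:ℝ)+1) * (2*(n:ℝ)+1) / 6 := by
  induction n with
  | zero => simp
  | succ m ih =>
    rw [Fin.sum_univ_castSucc]
    simp only [Fin.coe_castSucc, Fin.val_last] at *
    rw [ih]
    push_cast
    ring

lemma sum_lin_aux (n : ℕ) :
    ∑ p : Fin n, (((p : ℕ) : ℝ) + 1) = (n:ℝ) * ((n:ℝ)+1) / 2 := by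
  induction n with
  | zero => simp
  | succ m ih =>
    rw [Fin.sum_univ_castSucc]
    simp only [Fin.coe_castSucc, Fin.val_last] at *
    rw [ih]
    push_cast
    ring

lemma Mp_two (n : ℕ) (hn : 2 ≤ n) : Mp n 2 = n := by
  have hn2 : (2:ℝ) ≤ (n:ℝ) := by exact_mod_cast hn
  have hpos : (0:ℝ) < (n:ℝ)^2 - 1 := by nlinarith
  have h12 : (0:ℝ) ≤ 12 / ((n:ℝ)^2 - 1) := by positivity
  have : Mp n 2 = 12 / ((n:ℝ)^2 - 1) * ∑ p : Fin n, (((p : ℕ) : ℝ) + 1 - ((n : ℝ) + 1) / 2)^2 := by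
    rw [Mp, Finset.mul_sum]
    refine Finset.sum_congr rfl fun p _ => ?_
    rw [zf, mul_pow, Real.sq_sqrt h12]
  rw [this]
  have hexp : ∑ p : Fin n, (((p : ℕ) : ℝ) + 1 - ((n : ℝ) + 1) / 2)^2
      = (∑ p : Fin n, (((p : ℕ) : ℝ) + 1)^2) - ((n:ℝ)+1) * (∑ p : Fin n, (((p : ℕ) : ℝ) + 1))
        + (n:ℝ) * (((n:ℝ)+1)/2)^2 := by
    rw [Finset.mul_sum, ← Finset.sum_sub_distrib]
    rw [show ((n:ℝ) * (((n:ℝ)+1)/2)^2) = ∑ _p : Fin n, (((n:ℝ)+1)/2)^2 by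
      rw [Finset.sum_const]; simp [mul_comm]]
    rw [← Finset.sum_add_distrib]
    refine Finset.sum_congr rfl fun p _ => ?_
    ring
  rw [hexp, sum_sq_aux, sum_lin_aux]
  field_simp
  ring

lemma Mp_abs_le (n c : ℕ) (hn : 2 ≤ n) : |Mp n c| ≤ (n:ℝ) * 2 ^ c := by
  calc |Mp n c| ≤ ∑ p : Fin n, |zf n p ^ c| := Finset.abs_sum_le_sum_abs _ _
    _ ≤ ∑ _p : Fin n, (2:ℝ) ^ c := by
        refine Finset.sum_le_sum fun p _ => ?_
        rw [abs_pow]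
        exact pow_le_pow_left₀ (abs_nonneg _) (zf_abs_le n hn p) c
    _ = (n:ℝ) * 2 ^ c := by rw [Finset.sum_const]; simp [mul_comm]

lemma permSum_empty (n : ℕ) (c : Fin n → ℕ) : permSum n ∅ c = (n.factorial : ℝ) := by
  rw [permSum]
  simp [Finset.card_univ, Fintype.card_perm]

lemma permSum_rec (n : ℕ) (V : Finset (Fin n)) (c : Fin n → ℕ) (v0 : Fin n) (hv0 : v0 ∉ V) :
    ((n:ℝ) - V.card) * permSum n (insert v0 V) c
      = Mp n (c v0) * permSum n V c
        - ∑ u ∈ V, permSum n V (Function.update c u (c u + c v0)) := by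
  classical
  set X : Finset (Equiv.Perm (Fin n) × Fin n) :=
    univ.filter (fun x => x.2 ∉ V.image (⇑x.1)) with hX
  have hcard : ∀ σ : Equiv.Perm (Fin n),
      (univ.filter (fun p : Fin n => p ∉ V.image (⇑σ))).card = n - V.card := by
    intro σ
    have h1 : univ.filter (fun p : Fin n => p ∉ V.image (⇑σ)) = (V.image (⇑σ))ᶜ := by
      ext p; simp
    rw [h1, Finset.card_compl, Finset.card_image_of_injective V σ.injective]
    simp
  have hVn : V.card ≤ n := by
    simpa using Finset.card_le_univ V
  -- key1 : sum over X of the "σ v0" integrand equals (n - k) * permSum (insert v0 V)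
  have key1 : ∑ x ∈ X, zf n (x.1 v0) ^ c v0 * ∏ v ∈ V, zf n (x.1 v) ^ c v
      = ((n:ℝ) - V.card) * permSum n (insert v0 V) c := by
    rw [hX, Finset.sum_filter, ← Finset.univ_product_univ, Finset.sum_product]
    rw [permSum, Finset.mul_sum]
    refine Finset.sum_congr rfl fun σ _ => ?_
    dsimp only
    rw [← Finset.sum_filter, Finset.sum_const, hcard σ]
    rw [Finset.prod_insert hv0]
    rw [nsmul_eq_mul, Nat.cast_sub hVn]
  -- key2 : involution
  have key2 : ∑ x ∈ X, zf n x.2 ^ c v0 * ∏ v ∈ V, zf n (x.1 v) ^ c v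
      = ∑ x ∈ X, zf n (x.1 v0) ^ c v0 * ∏ v ∈ V, zf n (x.1 v) ^ c v := by
    have hmemX : ∀ x : Equiv.Perm (Fin n) × Fin n, x ∈ X ↔ ∀ v ∈ V, x.1 v ≠ x.2 := by
      intro x; rw [hX]; simp [Finset.mem_image]
    set i : Equiv.Perm (Fin n) × Fin n → Equiv.Perm (Fin n) × Fin n :=
      fun x => (Equiv.swap x.2 (x.1 v0) * x.1, x.1 v0) with hi
    have himg : ∀ x ∈ X, ∀ v ∈ V, (i x).1 v = x.1 v := by
      intro x hx v hv
      have h1 : x.1 v ≠ x.2 := (hmemX x).mp hx v hv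
      have h2 : x.1 v ≠ x.1 v0 := fun h => hv0 (by rwa [x.1.injective h] at hv)
      simp only [hi, Equiv.Perm.mul_apply]
      exact Equiv.swap_apply_of_ne_of_ne h1 h2
    have hmem : ∀ x ∈ X, i x ∈ X := by
      intro x hx
      rw [hmemX]
      intro v hv
      rw [himg x hx v hv]
      simp only [hi]
      intro h
      exact hv0 (by rwa [x.1.injective h] at hv)
    have hv0i : ∀ x : Equiv.Perm (Fin n) × Fin n, (i x).1 v0 = x.2 := by
      intro x
      simp only [hi, Equiv.Perm.mul_apply]
      exact Equiv.swap_apply_right _ _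
    have hinv : ∀ x ∈ X, i (i x) = x := by
      intro x hx
      have h2 : (i x).2 = x.1 v0 := rfl
      refine Prod.ext ?_ ?_
      · show Equiv.swap (i x).2 ((i x).1 v0) * (i x).1 = x.1
        rw [hv0i, h2]
        show Equiv.swap (x.1 v0) x.2 * (Equiv.swap x.2 (x.1 v0) * x.1) = x.1
        rw [← mul_assoc, Equiv.swap_comm, Equiv.swap_mul_self, one_mul]
      · show (i x).1 v0 = x.2
        exact hv0i x
    refine Finset.sum_nbij' i i hmem hmem hinv hinv ?_
    intro x hx
    rw [hv0i]
    congr 1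
    refine Finset.prod_congr rfl fun v hv => ?_
    rw [himg x hx v hv]
  -- key3 : algebraic expansion
  have key3 : ∑ x ∈ X, zf n x.2 ^ c v0 * ∏ v ∈ V, zf n (x.1 v) ^ c v
      = Mp n (c v0) * permSum n V c
        - ∑ u ∈ V, permSum n V (Function.update c u (c u + c v0)) := by
    rw [hX, Finset.sum_filter, ← Finset.univ_product_univ, Finset.sum_product]
    simp only
    have hstep : ∀ σ : Equiv.Perm (Fin n),
        (∑ p : Fin n, if p ∉ V.image (⇑σ) then zf n p ^ c v0 * ∏ v ∈ V, zf n (σ v) ^ c v else 0)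
        = Mp n (c v0) * ∏ v ∈ V, zf n (σ v) ^ c v
          - ∑ u ∈ V, ∏ v ∈ V, zf n (σ v) ^ (Function.update c u (c u + c v0) v) := by
      intro σ
      rw [← Finset.sum_filter]
      have h1 : univ.filter (fun p : Fin n => p ∉ V.image (⇑σ)) = (V.image (⇑σ))ᶜ := by
        ext p; simp
      rw [h1, ← Finset.sum_mul]
      have h2 : ∑ p ∈ (V.image (⇑σ))ᶜ, zf n p ^ c v0
          = Mp n (c v0) - ∑ p ∈ V.image (⇑σ), zf n p ^ c v0 := by
        have := Finset.sum_add_sum_compl (V.image (⇑σ)) (fun p => zf n p ^ c v0)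
        rw [Mp]
        linarith
      rw [h2, Finset.sum_image (fun a _ b _ h => σ.injective h), sub_mul, Finset.sum_mul]
      congr 1
      refine Finset.sum_congr rfl fun u hu => ?_
      rw [← Finset.prod_erase_mul V _ hu, ← Finset.prod_erase_mul V _ hu]
      have h3 : ∏ v ∈ V.erase u, zf n (σ v) ^ (Function.update c u (c u + c v0) v)
          = ∏ v ∈ V.erase u, zf n (σ v) ^ c v := by
        refine Finset.prod_congr rfl fun v hv => ?_
        rw [Function.update_of_ne (Finset.ne_of_mem_erase hv)]
      rw [h3, Function.update_self, pow_add]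
      ring
    rw [Finset.sum_congr rfl (fun σ _ => hstep σ), Finset.sum_sub_distrib]
    congr 1
    · rw [permSum, Finset.mul_sum]
    · rw [Finset.sum_comm]
      refine Finset.sum_congr rfl fun u _ => ?_
      rw [permSum]
  rw [← key1, ← key2, key3]


lemma permSum_single (n : ℕ) (hn : 1 ≤ n) (v : Fin n) (c : Fin n → ℕ) :
    (n : ℝ) * permSum n {v} c = Mp n (c v) * (n.factorial : ℝ) := by
  have h := permSum_rec n ∅ c v (Finset.notMem_empty v)
  simpa [permSum_empty] using h

instance permDMS (n : ℕ) : DiscreteMeasurableSpace (Equiv.Perm (Fin n)) :=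
  ⟨fun _ => MeasurableSpace.measurableSet_top⟩

lemma integral_perm (n : ℕ) (f : Equiv.Perm (Fin n) → ℝ) :
    ∫ ω, f ω ∂permMeasure n = (∑ σ : Equiv.Perm (Fin n), f σ) / (n.factorial : ℝ) := by
  rw [permMeasure, MeasureTheory.integral_fintype (hf := MeasureTheory.Integrable.of_finite)]
  rw [Finset.sum_div]
  refine Finset.sum_congr rfl fun σ _ => ?_
  rw [Measure.real, PMF.toMeasure_apply_singleton _ _ (MeasurableSpace.measurableSet_top),
    PMF.uniformOfFintype_apply, Fintype.card_perm, Fintype.card_fin]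
  rw [smul_eq_mul]
  rw [ENNReal.toReal_inv]
  simp [div_eq_inv_mul]

lemma Zr_eq_zf (n : ℕ) (i : Fin n) (σ : Equiv.Perm (Fin n)) : Zr n i σ = zf n (σ i) := rfl

lemma integral_block {ι : Type*} [Fintype ι] (n : ℕ) (idx : ι → Fin n) (A : Finset ι) :
    ∫ ω, (∏ α ∈ A, Zr n (idx α) ω) ∂permMeasure n
      = permSum n (A.image idx) (fun v => (A.filter (fun α => idx α = v)).card)
          / (n.factorial : ℝ) := by
  rw [integral_perm]
  congr 1
  rw [permSum]
  refine Finset.sum_congr rfl fun σ _ => ?_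
  have : ∀ α ∈ A, Zr n (idx α) σ = (fun v => zf n (σ v)) (idx α) := fun α _ => rfl
  rw [Finset.prod_congr rfl this, Finset.prod_comp (fun v => zf n (σ v)) idx]

lemma integral_sq (n : ℕ) (hn : 2 ≤ n) (v : Fin n) :
    ∫ ω, (Zr n v ω * Zr n v ω) ∂permMeasure n = 1 := by
  have hn0 : (0:ℝ) < n := by positivity
  have h1 : ∀ ω, Zr n v ω * Zr n v ω = ∏ w ∈ ({v} : Finset (Fin n)), zf n (ω w) ^ 2 := by
    intro ω
    rw [Finset.prod_singleton, Zr_eq_zf]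
    ring
  calc ∫ ω, (Zr n v ω * Zr n v ω) ∂permMeasure n
      = ∫ ω, (∏ w ∈ ({v} : Finset (Fin n)), zf n (ω w) ^ 2) ∂permMeasure n := by
        congr 1; funext ω; exact h1 ω
    _ = permSum n {v} (fun _ => 2) / (n.factorial : ℝ) := by
        rw [integral_perm]
        congr 1
    _ = 1 := by
        have h2 := permSum_single n (by omega) v (fun _ => 2)
        rw [Mp_two n hn] at h2
        have hf : (0:ℝ) < (n.factorial : ℝ) := by exact_mod_cast n.factorial_pos
        have hP : permSum n {v} (fun _ => 2) = (n.factorial : ℝ) :=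
          mul_left_cancel₀ (ne_of_gt hn0) h2
        rw [hP, div_self (ne_of_gt hf)]


lemma integral_mul (n : ℕ) (hn : 2 ≤ n) (v w : Fin n) (hvw : v ≠ w) :
    ∫ ω, (Zr n v ω * Zr n w ω) ∂permMeasure n = -1 / ((n:ℝ) - 1) := by
  have hn0 : (0:ℝ) < n := by positivity
  have hn1 : (0:ℝ) < (n:ℝ) - 1 := by
    have : (2:ℝ) ≤ (n:ℝ) := by exact_mod_cast hn
    linarith
  have hf : (0:ℝ) < (n.factorial : ℝ) := by exact_mod_cast n.factorial_pos
  have hP2 : permSum n {v} (Function.update (fun _ => 1) v (1 + 1)) = (n.factorial : ℝ) := by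
    have h2 := permSum_single n (by omega) v (Function.update (fun _ => 1) v (1 + 1))
    rw [Function.update_self] at h2
    rw [show (1+1) = 2 from rfl, Mp_two n hn] at h2
    exact mul_left_cancel₀ (ne_of_gt hn0) h2
  have hrec := permSum_rec n {v} (fun _ => 1) w (by simp [hvw.symm])
  have hM1 : Mp n 1 = 0 := Mp_odd n (by norm_num)
  have hcard : (({v} : Finset (Fin n)).card : ℝ) = 1 := by simp
  rw [hM1, zero_mul, Finset.sum_singleton, hP2, hcard] at hrec
  have hPvw : permSum n (insert w {v}) (fun _ => 1) = -(n.factorial : ℝ) / ((n:ℝ) - 1) := by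
    field_simp at hrec ⊢
    linarith
  have h1 : ∀ ω : Equiv.Perm (Fin n), Zr n v ω * Zr n w ω
      = ∏ u ∈ (insert w {v} : Finset (Fin n)), zf n (ω u) ^ (fun _ => 1 : Fin n → ℕ) u := by
    intro ω
    rw [Finset.prod_insert (by simp [hvw.symm]), Finset.prod_singleton, Zr_eq_zf, Zr_eq_zf]
    ring
  calc ∫ ω, (Zr n v ω * Zr n w ω) ∂permMeasure n
      = permSum n (insert w {v}) (fun _ => 1) / (n.factorial : ℝ) := by
        rw [integral_perm]
        congr 1
        rw [permSum]
        exact Finset.sum_congr rfl fun σ _ => h1 σ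
    _ = -1 / ((n:ℝ) - 1) := by
        rw [hPvw]
        field_simp

lemma permSum_crude (n D : ℕ) (hn : 2 ≤ n) (V : Finset (Fin n)) (c : Fin n → ℕ)
    (hD : ∑ v ∈ V, c v ≤ D) :
    |permSum n V c| ≤ (n.factorial : ℝ) * 2 ^ D := by
  calc |permSum n V c| ≤ ∑ σ : Equiv.Perm (Fin n), |∏ v ∈ V, zf n (σ v) ^ c v| :=
        Finset.abs_sum_le_sum_abs _ _
    _ ≤ ∑ _σ : Equiv.Perm (Fin n), (2:ℝ) ^ D := by
        refine Finset.sum_le_sum fun σ _ => ?_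
        rw [Finset.abs_prod]
        calc ∏ v ∈ V, |zf n (σ v) ^ c v| ≤ ∏ v ∈ V, (2:ℝ) ^ c v := by
              refine Finset.prod_le_prod (fun v _ => abs_nonneg _) fun v _ => ?_
              rw [abs_pow]
              exact pow_le_pow_left₀ (abs_nonneg _) (zf_abs_le n hn (σ v)) _
          _ = (2:ℝ) ^ (∑ v ∈ V, c v) := by rw [Finset.prod_pow_eq_pow_sum]
          _ ≤ (2:ℝ) ^ D := by exact pow_le_pow_right₀ (by norm_num) hD
    _ = (n.factorial : ℝ) * 2 ^ D := by
        rw [Finset.sum_const, Finset.card_univ, Fintype.card_perm, Fintype.card_fin,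
          nsmul_eq_mul]

lemma permSum_main_bound (n D : ℕ) (hn : 2 ≤ n) (V : Finset (Fin n)) :
    ∀ c : Fin n → ℕ, 2 * (V.card + 1) ≤ n + 1 →
      (∀ v ∈ V, 1 ≤ c v) → (∑ v ∈ V, c v ≤ D) →
      |permSum n V c| * (n:ℝ) ^ V.card
        ≤ (2 * (2^D + D) : ℝ) ^ V.card * (n.factorial : ℝ)
            * (Real.sqrt n) ^ (wgt n V c) := by
  induction V using Finset.induction_on with
  | empty =>
      intro c _ _ _
      rw [permSum_empty, wgt]
      simp [abs_of_nonneg (by positivity : (0:ℝ) ≤ (n.factorial:ℝ))]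
  | insert a s ha ih =>
      intro c hcardn h1 hsum
      set k := s.card with hk
      have hcardins : (insert a s).card = k + 1 := Finset.card_insert_of_notMem ha
      rw [hcardins] at hcardn ⊢
      have h2k : 2 * k + 2 ≤ n := by omega
      have hnk : ((k:ℝ)) ≤ (n:ℝ) / 2 - 1 := by
        have : (2 * k + 2 : ℝ) ≤ (n:ℝ) := by exact_mod_cast h2k
        linarith
      have hnkpos : (0:ℝ) < (n:ℝ) - k := by
        have hn2 : (2:ℝ) ≤ (n:ℝ) := by exact_mod_cast hn
        linarith
      have hsqrt1 : (1:ℝ) ≤ Real.sqrt n := by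
        rw [show (1:ℝ) = Real.sqrt 1 by simp]
        exact Real.sqrt_le_sqrt (by exact_mod_cast (by omega : 1 ≤ n))
      have hsqrt0 : (0:ℝ) ≤ Real.sqrt n := Real.sqrt_nonneg _
      have hsq : Real.sqrt n ^ 2 = (n:ℝ) := Real.sq_sqrt (by positivity)
      have hca : c a ≤ D := by
        refine le_trans ?_ hsum
        exact Finset.single_le_sum (f := c) (fun v _ => Nat.zero_le _) (Finset.mem_insert_self a s)
      have hkD : k ≤ D := by
        have h2 : k ≤ ∑ v ∈ s, c v := by
          rw [hk, Finset.card_eq_sum_ones]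
          exact Finset.sum_le_sum fun v hv => h1 v (Finset.mem_insert_of_mem hv)
        have h3 : ∑ v ∈ s, c v ≤ ∑ v ∈ insert a s, c v := by
          rw [Finset.sum_insert ha]; omega
        omega
      set B : ℝ := 2 * (2^D + D) with hB
      have hB1 : (1:ℝ) ≤ B := by
        rw [hB]
        have : (1:ℝ) ≤ 2^D := one_le_pow₀ (by norm_num)
        have : (0:ℝ) ≤ D := by positivity
        nlinarith
      have hB0 : (0:ℝ) ≤ B := by linarith
      -- IH for the untouched exponents
      have ihc := ih c (by omega) (fun v hv => h1 v (Finset.mem_insert_of_mem hv))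
        (le_trans (by rw [Finset.sum_insert ha]; omega) hsum)
      -- IH for merged exponents
      have ihu : ∀ u ∈ s,
          |permSum n s (Function.update c u (c u + c a))| * (n:ℝ) ^ k
            ≤ B ^ k * (n.factorial : ℝ) * (Real.sqrt n) ^ (wgt n (insert a s) c) := by
        intro u hu
        have hupd1 : ∀ v ∈ s, 1 ≤ Function.update c u (c u + c a) v := by
          intro v hv
          rcases eq_or_ne v u with rfl | hne
          · rw [Function.update_self]
            have := h1 v (Finset.mem_insert_of_mem hv)
            omega
          · rw [Function.update_of_ne hne]
            exact h1 v (Finset.mem_insert_of_mem hv)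
        have hupds : ∑ v ∈ s, Function.update c u (c u + c a) v ≤ D := by
          rw [Finset.sum_update_of_mem hu, Finset.sdiff_singleton_eq_erase]
          have : ∑ v ∈ s.erase u, c v ≤ ∑ v ∈ s, c v - c u := by
            rw [← Finset.add_sum_erase s c hu]
            omega
          have hins : ∑ v ∈ insert a s, c v = c a + ∑ v ∈ s, c v := Finset.sum_insert ha
          have hcu : c u ≤ ∑ v ∈ s, c v :=
            Finset.single_le_sum (f := c) (fun v _ => Nat.zero_le _) hu
          omega
        have ihraw := ih (Function.update c u (c u + c a)) (by omega) hupd1 hupds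
        refine le_trans ihraw ?_
        have hwle : wgt n s (Function.update c u (c u + c a)) ≤ wgt n (insert a s) c := by
          rw [wgt, wgt, Finset.sum_insert ha]
          rw [← Finset.add_sum_erase s _ hu, ← Finset.add_sum_erase s
            (fun v => if Even (c v) then 2 else 1) hu]
          have herase : ∑ v ∈ s.erase u, (if Even (Function.update c u (c u + c a) v) then 2 else 1)
              = ∑ v ∈ s.erase u, (if Even (c v) then 2 else 1) := by
            refine Finset.sum_congr rfl fun v hv => ?_
            rw [Function.update_of_ne (Finset.ne_of_mem_erase hv)]
          rw [herase, Function.update_self]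
          rcases Nat.even_or_odd (c a) with hpa | hpa <;>
            rcases Nat.even_or_odd (c u) with hpu | hpu
          · have h' : Even (c u + c a) := hpu.add hpa
            simp only [if_pos hpa, if_pos hpu, if_pos h']
            omega
          · have h' : ¬ Even (c u + c a) := Nat.not_even_iff_odd.mpr (hpu.add_even hpa)
            simp only [if_pos hpa, if_neg (Nat.not_even_iff_odd.mpr hpu), if_neg h']
            omega
          · have h' : ¬ Even (c u + c a) := Nat.not_even_iff_odd.mpr (hpu.add_odd hpa)
            simp only [if_neg (Nat.not_even_iff_odd.mpr hpa), if_pos hpu, if_neg h']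
            omega
          · have h' : Even (c u + c a) := hpu.add_odd hpa
            simp only [if_neg (Nat.not_even_iff_odd.mpr hpa),
              if_neg (Nat.not_even_iff_odd.mpr hpu), if_pos h']
            omega
        have hmono := pow_le_pow_right₀ hsqrt1 hwle
        have hfac : (0:ℝ) ≤ (n.factorial : ℝ) := by positivity
        exact mul_le_mul_of_nonneg_left hmono (mul_nonneg (pow_nonneg hB0 k) hfac)
      have hrec := permSum_rec n s c a ha
      rw [← hk] at hrec
      have hPabs : ((n:ℝ) - k) * |permSum n (insert a s) c|
          = |Mp n (c a) * permSum n s c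
              - ∑ u ∈ s, permSum n s (Function.update c u (c u + c a))| := by
        rw [← hrec, abs_mul, abs_of_pos hnkpos]
      set E : ℝ := B ^ k * (n.factorial : ℝ) * Real.sqrt n ^ (wgt n (insert a s) c) with hE
      have hfac : (0:ℝ) ≤ (n.factorial : ℝ) := by positivity
      have hE0 : 0 ≤ E := by
        rw [hE]
        exact mul_nonneg (mul_nonneg (pow_nonneg hB0 k) hfac)
          (pow_nonneg hsqrt0 _)
      have hterm1 : |Mp n (c a)| * (|permSum n s c| * (n:ℝ) ^ k) ≤ 2 ^ D * E := by
        rcases Nat.even_or_odd (c a) with hpa | hpa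
        · have hWeven : wgt n (insert a s) c = 2 + wgt n s c := by
            rw [wgt, wgt, Finset.sum_insert ha, if_pos hpa]
          have hMb : |Mp n (c a)| ≤ (n:ℝ) * 2 ^ D := by
            refine (Mp_abs_le n (c a) hn).trans ?_
            have : (2:ℝ) ^ (c a) ≤ 2 ^ D := pow_le_pow_right₀ (by norm_num) hca
            nlinarith [(by positivity : (0:ℝ) ≤ (n:ℝ))]
          calc |Mp n (c a)| * (|permSum n s c| * (n:ℝ) ^ k)
              ≤ |Mp n (c a)| * (B ^ k * (n.factorial : ℝ) * Real.sqrt n ^ (wgt n s c)) :=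
                mul_le_mul_of_nonneg_left ihc (abs_nonneg _)
            _ ≤ ((n:ℝ) * 2 ^ D) * (B ^ k * (n.factorial : ℝ) * Real.sqrt n ^ (wgt n s c)) := by
                refine mul_le_mul_of_nonneg_right hMb ?_
                exact mul_nonneg (mul_nonneg (pow_nonneg hB0 k) hfac) (pow_nonneg hsqrt0 _)
            _ = 2 ^ D * E := by
                rw [hE, hWeven, pow_add, hsq]
                ring
        · rw [Mp_odd n hpa, abs_zero, zero_mul]
          positivity
      have hterm2 : (∑ u ∈ s, |permSum n s (Function.update c u (c u + c a))|) * (n:ℝ) ^ k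
          ≤ (D:ℝ) * E := by
        rw [Finset.sum_mul]
        calc ∑ u ∈ s, |permSum n s (Function.update c u (c u + c a))| * (n:ℝ) ^ k
            ≤ ∑ _u ∈ s, E := Finset.sum_le_sum fun u hu => ihu u hu
          _ = (k : ℝ) * E := by rw [Finset.sum_const, nsmul_eq_mul, hk]
          _ ≤ (D:ℝ) * E := by
              have : (k:ℝ) ≤ (D:ℝ) := by exact_mod_cast hkD
              exact mul_le_mul_of_nonneg_right this hE0
      have hR1 : |Mp n (c a) * permSum n s c
            - ∑ u ∈ s, permSum n s (Function.update c u (c u + c a))|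
          ≤ |Mp n (c a)| * |permSum n s c|
            + ∑ u ∈ s, |permSum n s (Function.update c u (c u + c a))| := by
        have h := abs_add_le (Mp n (c a) * permSum n s c)
          (-(∑ u ∈ s, permSum n s (Function.update c u (c u + c a))))
        rw [← sub_eq_add_neg, abs_neg] at h
        refine h.trans ?_
        rw [abs_mul]
        exact add_le_add le_rfl (Finset.abs_sum_le_sum_abs _ _)
      have h2nk : (n:ℝ) ≤ 2 * ((n:ℝ) - k) := by linarith
      have hnp : (0:ℝ) ≤ (n:ℝ) ^ k := by positivity
      calc |permSum n (insert a s) c| * (n:ℝ) ^ (k + 1)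
          = ((n:ℝ) * |permSum n (insert a s) c|) * (n:ℝ) ^ k := by
            rw [pow_succ]; ring
        _ ≤ ((2 * ((n:ℝ) - k)) * |permSum n (insert a s) c|) * (n:ℝ) ^ k := by
            refine mul_le_mul_of_nonneg_right
              (mul_le_mul_of_nonneg_right h2nk (abs_nonneg _)) hnp
        _ = 2 * ((((n:ℝ) - k) * |permSum n (insert a s) c|) * (n:ℝ) ^ k) := by ring
        _ = 2 * (|Mp n (c a) * permSum n s c
              - ∑ u ∈ s, permSum n s (Function.update c u (c u + c a))| * (n:ℝ) ^ k) := by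
            rw [hPabs]
        _ ≤ 2 * ((|Mp n (c a)| * |permSum n s c|
              + ∑ u ∈ s, |permSum n s (Function.update c u (c u + c a))|) * (n:ℝ) ^ k) := by
            have := mul_le_mul_of_nonneg_right hR1 hnp
            linarith
        _ = 2 * (|Mp n (c a)| * (|permSum n s c| * (n:ℝ) ^ k)
              + (∑ u ∈ s, |permSum n s (Function.update c u (c u + c a))|) * (n:ℝ) ^ k) := by
            ring
        _ ≤ 2 * (2 ^ D * E + (D:ℝ) * E) := by linarith
        _ = B ^ (k + 1) * (n.factorial : ℝ) * Real.sqrt n ^ (wgt n (insert a s) c) := by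
            rw [pow_succ, hE, hB]
            push_cast
            ring


/-- Uniform constant for the block moment bound. -/
def KB (D : ℕ) : ℝ := (2 * (2^D + D))^D + 2^D * (2*(D:ℝ))^D

lemma block_bound {ι : Type*} [Fintype ι] (n D : ℕ) (hn : 2 ≤ n) (hD1 : 1 ≤ D)
    (idx : ι → Fin n) (A : Finset ι) (hA : A.card ≤ D) :
    |∫ ω, (∏ α ∈ A, Zr n (idx α) ω) ∂permMeasure n|
        * Real.sqrt n
            ^ ((Finset.univ.filter fun v : Fin n =>
                Odd ((A.filter fun α => idx α = v)).card).card)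
      ≤ KB D := by
  classical
  set cB : Fin n → ℕ := fun v => (A.filter fun α => idx α = v).card with hcB
  set V : Finset (Fin n) := A.image idx with hV
  set o : ℕ := (Finset.univ.filter fun v : Fin n => Odd (cB v)).card with ho
  have hfac : (0:ℝ) < (n.factorial : ℝ) := by exact_mod_cast n.factorial_pos
  have hn0 : (0:ℝ) < (n:ℝ) := by positivity
  have hsqrt0 : (0:ℝ) ≤ Real.sqrt n := Real.sqrt_nonneg _
  have hsqrt1 : (1:ℝ) ≤ Real.sqrt n := by
    rw [show (1:ℝ) = Real.sqrt 1 by simp]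
    exact Real.sqrt_le_sqrt (by exact_mod_cast (by omega : 1 ≤ n))
  have hsq : Real.sqrt n ^ 2 = (n:ℝ) := Real.sq_sqrt (by positivity)
  have hcV : ∀ v ∈ V, 1 ≤ cB v := by
    intro v hv
    rw [hV, Finset.mem_image] at hv
    obtain ⟨α, hα, rfl⟩ := hv
    have : α ∈ A.filter fun β => idx β = idx α := Finset.mem_filter.mpr ⟨hα, rfl⟩
    have h2 := Finset.card_pos.mpr ⟨α, this⟩
    simp only [hcB]
    omega
  have hsumc : ∑ v ∈ V, cB v = A.card := (Finset.card_eq_sum_card_image idx A).symm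
  have hkD : V.card ≤ D := le_trans (Finset.card_image_le) hA
  have hfilter_eq : (Finset.univ.filter fun v : Fin n => Odd (cB v))
      = V.filter fun v => Odd (cB v) := by
    ext v
    simp only [Finset.mem_filter, Finset.mem_univ, true_and]
    refine ⟨fun hodd => ⟨?_, hodd⟩, fun h => h.2⟩
    have hne : cB v ≠ 0 := by
      rcases hodd with ⟨k, hk⟩; omega
    simp only [hcB] at hne
    have : (A.filter fun α => idx α = v).Nonempty := by
      rw [← Finset.card_pos]; omega
    obtain ⟨α, hα⟩ := this
    rw [hV, Finset.mem_image]
    exact ⟨α, (Finset.mem_filter.mp hα).1, (Finset.mem_filter.mp hα).2⟩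
  have hoV : o ≤ V.card := by
    rw [ho, hfilter_eq]
    exact Finset.card_filter_le _ _
  have hwo : wgt n V cB + o = 2 * V.card := by
    rw [ho, hfilter_eq, wgt, Finset.card_filter, ← Finset.sum_add_distrib]
    rw [show 2 * V.card = ∑ _v ∈ V, 2 by rw [Finset.sum_const]; ring]
    refine Finset.sum_congr rfl fun v _ => ?_
    rcases Nat.even_or_odd (cB v) with hp | hp
    · rw [if_pos hp, if_neg (Nat.not_odd_iff_even.mpr hp)]
    · rw [if_neg (Nat.not_even_iff_odd.mpr hp), if_pos hp]
  rw [integral_block, abs_div, abs_of_pos hfac]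
  set P : ℝ := permSum n V cB with hP
  rcases lt_or_ge (2 * D) n with hbig | hsmall
  · -- large n : use the main bound
    have hmain := permSum_main_bound n D hn V cB (by omega) hcV (by omega)
    set B : ℝ := 2 * (2^D + D) with hB
    have hB1 : (1:ℝ) ≤ B := by
      rw [hB]
      have h1 : (1:ℝ) ≤ 2^D := one_le_pow₀ (by norm_num)
      have h2 : (0:ℝ) ≤ D := by positivity
      nlinarith
    have hnk : (0:ℝ) < (n:ℝ) ^ V.card := by positivity
    have h1 : |P| * Real.sqrt n ^ o * (n:ℝ) ^ V.card
        ≤ B ^ V.card * (n.factorial : ℝ) * (n:ℝ) ^ V.card := by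
      calc |P| * Real.sqrt n ^ o * (n:ℝ) ^ V.card
          = (|P| * (n:ℝ) ^ V.card) * Real.sqrt n ^ o := by ring
        _ ≤ (B ^ V.card * (n.factorial : ℝ) * Real.sqrt n ^ (wgt n V cB))
              * Real.sqrt n ^ o := mul_le_mul_of_nonneg_right hmain (pow_nonneg hsqrt0 _)
        _ = B ^ V.card * (n.factorial : ℝ) * Real.sqrt n ^ (wgt n V cB + o) := by
            rw [pow_add]; ring
        _ = B ^ V.card * (n.factorial : ℝ) * (n:ℝ) ^ V.card := by
            rw [hwo, pow_mul, hsq]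
    have h2 : |P| * Real.sqrt n ^ o ≤ B ^ V.card * (n.factorial : ℝ) :=
      le_of_mul_le_mul_right h1 hnk
    have h3 : |P| / (n.factorial : ℝ) * Real.sqrt n ^ o ≤ B ^ V.card := by
      rw [div_mul_eq_mul_div, div_le_iff₀ hfac]
      linarith
    refine h3.trans ?_
    rw [KB]
    have hBk : B ^ V.card ≤ B ^ D := pow_le_pow_right₀ hB1 hkD
    have : (0:ℝ) ≤ 2^D * (2*(D:ℝ))^D := by positivity
    rw [← hB]
    linarith
  · -- small n : crude bound
    have hcrude : |P| ≤ (n.factorial : ℝ) * 2 ^ D := permSum_crude n D hn V cB (by omega)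
    have hs2D : Real.sqrt n ≤ (2*(D:ℝ)) := by
      have h1 : Real.sqrt n ≤ (n:ℝ) := by
        have h0 : Real.sqrt n ≤ Real.sqrt ((n:ℝ)^2) := by
          refine Real.sqrt_le_sqrt ?_
          have hone : (1:ℝ) ≤ (n:ℝ) := by exact_mod_cast (by omega : 1 ≤ n)
          nlinarith
        rwa [Real.sqrt_sq hn0.le] at h0
      have h2 : (n:ℝ) ≤ 2*(D:ℝ) := by exact_mod_cast hsmall
      linarith
    have h2D1 : (1:ℝ) ≤ 2*(D:ℝ) := by
      have : (1:ℝ) ≤ (D:ℝ) := by exact_mod_cast hD1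
      linarith
    have hso : Real.sqrt n ^ o ≤ (2*(D:ℝ)) ^ D := by
      calc Real.sqrt n ^ o ≤ (2*(D:ℝ)) ^ o := pow_le_pow_left₀ hsqrt0 hs2D o
        _ ≤ (2*(D:ℝ)) ^ D := pow_le_pow_right₀ h2D1 (by omega)
    have h4 : |P| / (n.factorial : ℝ) ≤ 2 ^ D := by
      rw [div_le_iff₀ hfac]
      linarith
    rw [KB]
    have hfirst : (0:ℝ) ≤ (2 * (2^D + (D:ℝ)))^D := by positivity
    have := mul_le_mul h4 hso (pow_nonneg hsqrt0 _) (by positivity)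
    linarith

lemma partition_filter_card {ι : Type*} [Fintype ι] (π : Finset (Finset ι))
    (hπ : IsSetPartition π) (p : ι → Prop) [DecidablePred p] :
    ∑ A ∈ π, (A.filter p).card = (Finset.univ.filter p).card := by
  classical
  have huniv : Finset.univ.filter p = π.biUnion (fun A => A.filter p) := by
    ext x
    simp only [Finset.mem_filter, Finset.mem_biUnion, Finset.mem_univ, true_and]
    constructor
    · intro hx
      obtain ⟨A, ⟨hA, hxA⟩, _⟩ := hπ.2 x
      exact ⟨A, hA, hxA, hx⟩
    · rintro ⟨A, _, hx⟩
      exact hx.2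
  rw [huniv, Finset.card_biUnion]
  intro A hA B hB hAB
  refine Finset.disjoint_left.mpr ?_
  intro x hxA hxB
  obtain ⟨C, _, huniq⟩ := hπ.2 x
  exact hAB ((huniq A ⟨hA, (Finset.mem_filter.mp hxA).1⟩).trans
    (huniq B ⟨hB, (Finset.mem_filter.mp hxB).1⟩).symm)

lemma sum_odd_ge {ι : Type*} [Fintype ι] (n : ℕ) (π : Finset (Finset ι))
    (hπ : IsSetPartition π) (idx : ι → Fin n) :
    (Finset.univ.filter fun v : Fin n =>
        Odd ((Finset.univ.filter fun α => idx α = v)).card).card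
      ≤ ∑ A ∈ π, (Finset.univ.filter fun v : Fin n =>
          Odd ((A.filter fun α => idx α = v)).card).card := by
  classical
  rw [Finset.card_filter]
  have hrw : ∀ A : Finset ι, (Finset.univ.filter fun v : Fin n =>
      Odd ((A.filter fun α => idx α = v)).card).card
      = ∑ v : Fin n, if Odd ((A.filter fun α => idx α = v)).card then 1 else 0 := by
    intro A; rw [Finset.card_filter]
  rw [Finset.sum_congr rfl fun A _ => hrw A, Finset.sum_comm]
  refine Finset.sum_le_sum fun v _ => ?_
  by_cases hv : Odd ((Finset.univ.filter fun α => idx α = v)).card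
  · rw [if_pos hv]
    have hsum := partition_filter_card π hπ (fun α => idx α = v)
    have hex : ∃ A ∈ π, Odd ((A.filter fun α => idx α = v)).card := by
      by_contra hcon
      push_neg at hcon
      have : Even (∑ A ∈ π, ((A.filter fun α => idx α = v)).card) :=
        Finset.even_sum _ fun A hA => Nat.not_odd_iff_even.mp (hcon A hA)
      rw [hsum] at this
      exact (Nat.not_odd_iff_even.mpr this) hv
    obtain ⟨A, hA, hodd⟩ := hex
    calc (1:ℕ) = (if Odd ((A.filter fun α => idx α = v)).card then 1 else 0) := by
          rw [if_pos hodd]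
      _ ≤ ∑ A ∈ π, if Odd ((A.filter fun α => idx α = v)).card then 1 else 0 :=
          Finset.single_le_sum
            (f := fun B : Finset ι => if Odd ((B.filter fun α => idx α = v)).card then (1:ℕ) else 0)
            (fun B _ => Nat.zero_le _) hA
  · rw [if_neg hv]
    positivity


lemma matching_exists {γ κ : Type*} [DecidableEq γ] [Fintype κ] [DecidableEq κ]
    (f : γ → κ) (s : Finset γ) : Even s.card →
    ∃ P : Finset (Finset γ),
      (∀ A ∈ P, A.card = 2) ∧
      (∀ A ∈ P, A ⊆ s) ∧
      (∀ A ∈ P, ∀ B ∈ P, A ≠ B → Disjoint A B) ∧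
      (P.biUnion id = s) ∧
      2 * (P.filter fun A => ¬ ∀ x ∈ A, ∀ y ∈ A, f x = f y).card
        ≤ (Finset.univ.filter fun w : κ => Odd ((s.filter fun α => f α = w)).card).card := by
  classical
  induction s using Finset.strongInduction with
  | _ s ih =>
    intro hs
    rcases s.eq_empty_or_nonempty with rfl | ⟨a, ha⟩
    · exact ⟨∅, by simp, by simp, by simp, by simp, by simp⟩
    · have hcard2 : 2 ≤ s.card := by
        obtain ⟨k, hk⟩ := hs
        have := Finset.card_pos.mpr ⟨a, ha⟩
        omega
      by_cases hdup : ∃ u ∈ s, ∃ v ∈ s, u ≠ v ∧ f u = f v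
      · obtain ⟨u, hu, v, hv, huv, hfuv⟩ := hdup
        have hvu : v ∈ s.erase u := Finset.mem_erase.mpr ⟨fun h => huv h.symm, hv⟩
        set s' : Finset γ := (s.erase u).erase v with hs'
        have hsub : s' ⊆ s := (Finset.erase_subset _ _).trans (Finset.erase_subset _ _)
        have hssub : s' ⊂ s := by
          refine Finset.ssubset_iff_of_subset hsub |>.mpr ⟨u, hu, ?_⟩
          simp [hs']
        have hcards' : s'.card = s.card - 2 := by
          rw [hs', Finset.card_erase_of_mem hvu, Finset.card_erase_of_mem hu]
          omega
        have heven' : Even s'.card := by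
          obtain ⟨k, hk⟩ := hs
          exact ⟨k - 1, by omega⟩
        obtain ⟨P', h2', hsub', hdisj', hbi', hcount'⟩ := ih s' hssub heven'
        have hus' : u ∉ s' := by simp [hs']
        have hvs' : v ∉ s' := by simp [hs']
        refine ⟨insert {u, v} P', ?_, ?_, ?_, ?_, ?_⟩
        · intro A hA
          rcases Finset.mem_insert.mp hA with rfl | hA
          · exact Finset.card_pair huv
          · exact h2' A hA
        · intro A hA
          rcases Finset.mem_insert.mp hA with rfl | hA
          · intro x hx
            rcases Finset.mem_insert.mp hx with rfl | hx
            · exact hu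
            · rw [Finset.mem_singleton.mp hx]; exact hv
          · exact (hsub' A hA).trans hsub
        · intro A hA B hB hAB
          have hdisjnew : ∀ C ∈ P', Disjoint ({u, v} : Finset γ) C := by
            intro C hC
            refine Finset.disjoint_left.mpr ?_
            intro x hx hxC
            have hxs' := hsub' C hC hxC
            rcases Finset.mem_insert.mp hx with rfl | hx
            · exact hus' hxs'
            · rw [Finset.mem_singleton.mp hx] at hxs'
              exact hvs' hxs'
          rcases Finset.mem_insert.mp hA with rfl | hA <;>
            rcases Finset.mem_insert.mp hB with rfl | hB
          · exact absurd rfl hAB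
          · exact hdisjnew B hB
          · exact (hdisjnew A hA).symm
          · exact hdisj' A hA B hB hAB
        · rw [Finset.biUnion_insert, hbi']
          show ({u, v} : Finset γ) ∪ s' = s
          ext x
          constructor
          · intro hx
            rcases Finset.mem_union.mp hx with hx | hx
            · rcases Finset.mem_insert.mp hx with rfl | hx
              · exact hu
              · rw [Finset.mem_singleton.mp hx]; exact hv
            · exact hsub hx
          · intro hx
            by_cases hxu : x = u
            · exact Finset.mem_union_left _ (by rw [hxu]; exact Finset.mem_insert_self _ _)
            by_cases hxv : x = v
            · exact Finset.mem_union_left _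
                (by rw [hxv]; exact Finset.mem_insert_of_mem (Finset.mem_singleton_self _))
            · refine Finset.mem_union_right _ ?_
              rw [hs']
              exact Finset.mem_erase.mpr ⟨hxv, Finset.mem_erase.mpr ⟨hxu, hx⟩⟩
        · have hval : ∀ z ∈ ({u, v} : Finset γ), f z = f u := by
            intro z hz
            rcases Finset.mem_insert.mp hz with rfl | hz
            · rfl
            · rw [Finset.mem_singleton.mp hz]; exact hfuv.symm
          have hconst : ¬ ¬ ∀ x ∈ ({u, v} : Finset γ), ∀ y ∈ ({u, v} : Finset γ), f x = f y := by
            push_neg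
            intro x hx y hy
            rw [hval x hx, hval y hy]
          rw [Finset.filter_insert, if_neg hconst]
          refine hcount'.trans (le_of_eq ?_)
          congr 1
          ext w
          simp only [Finset.mem_filter, Finset.mem_univ, true_and]
          have hfe : s'.filter (fun α => f α = w)
              = ((s.filter fun α => f α = w).erase u).erase v := by
            rw [hs', Finset.filter_erase, Finset.filter_erase]
          by_cases hw : w = f u
          · have huf : u ∈ s.filter fun α => f α = w :=
              Finset.mem_filter.mpr ⟨hu, hw.symm⟩
            have hvf : v ∈ (s.filter fun α => f α = w).erase u :=
              Finset.mem_erase.mpr ⟨fun h => huv h.symm,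
                Finset.mem_filter.mpr ⟨hv, by rw [← hfuv, hw]⟩⟩
            have hge : 2 ≤ (s.filter fun α => f α = w).card := by
              have h1 := Finset.card_erase_of_mem huf
              have h2 := Finset.card_pos.mpr ⟨v, hvf⟩
              omega
            rw [hfe, Finset.card_erase_of_mem hvf, Finset.card_erase_of_mem huf]
            rw [Nat.odd_iff, Nat.odd_iff]
            omega
          · have huf : u ∉ s.filter fun α => f α = w := by
              simp only [Finset.mem_filter]
              rintro ⟨_, h⟩; exact hw h.symm
            have hvf : v ∉ (s.filter fun α => f α = w).erase u := by
              simp only [Finset.mem_erase, Finset.mem_filter]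
              rintro ⟨_, _, h⟩
              rw [← hfuv] at h
              exact hw h.symm
            rw [hfe, Finset.erase_eq_of_notMem hvf, Finset.erase_eq_of_notMem huf]
      · -- injective case
        push_neg at hdup
        have hinj : Set.InjOn f s := by
          intro x hx y hy hf
          by_contra hne
          exact hdup x hx y hy hne hf
        have herase : (s.erase a).Nonempty := by
          rw [← Finset.card_pos, Finset.card_erase_of_mem ha]
          omega
        obtain ⟨b, hb⟩ := herase
        have hba : b ≠ a := (Finset.mem_erase.mp hb).1
        have hbs : b ∈ s := (Finset.mem_erase.mp hb).2
        set s' : Finset γ := (s.erase a).erase b with hs'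
        have hab' : a ∈ s.erase b := Finset.mem_erase.mpr ⟨fun h => hba h.symm, ha⟩
        have hsub : s' ⊆ s := (Finset.erase_subset _ _).trans (Finset.erase_subset _ _)
        have hssub : s' ⊂ s := by
          refine Finset.ssubset_iff_of_subset hsub |>.mpr ⟨a, ha, ?_⟩
          simp [hs']
        have hcards' : s'.card = s.card - 2 := by
          rw [hs', Finset.card_erase_of_mem (Finset.mem_erase.mpr ⟨hba, hbs⟩),
            Finset.card_erase_of_mem ha]
          omega
        have heven' : Even s'.card := by
          obtain ⟨k, hk⟩ := hs
          exact ⟨k - 1, by omega⟩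
        obtain ⟨P', h2', hsub', hdisj', hbi', hcount'⟩ := ih s' hssub heven'
        have has' : a ∉ s' := by simp [hs']
        have hbs' : b ∉ s' := by simp [hs']
        have hcount_eq : ∀ (t : Finset γ), t ⊆ s →
            (Finset.univ.filter fun w : κ => Odd ((t.filter fun α => f α = w)).card).card
              = t.card := by
          intro t hts
          have himg : (Finset.univ.filter fun w : κ =>
              Odd ((t.filter fun α => f α = w)).card) = t.image f := by
            ext w
            simp only [Finset.mem_filter, Finset.mem_univ, true_and, Finset.mem_image]
            constructor
            · intro hodd
              have hne : (t.filter fun α => f α = w).card ≠ 0 := by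
                rcases hodd with ⟨k, hk⟩; omega
              have : (t.filter fun α => f α = w).Nonempty := by
                rw [← Finset.card_pos]; omega
              obtain ⟨x, hx⟩ := this
              exact ⟨x, (Finset.mem_filter.mp hx).1, (Finset.mem_filter.mp hx).2⟩
            · rintro ⟨x, hx, rfl⟩
              have hone : (t.filter fun α => f α = f x) = {x} := by
                ext y
                simp only [Finset.mem_filter, Finset.mem_singleton]
                constructor
                · rintro ⟨hy, hfy⟩
                  exact hinj (hts hy) (hts hx) hfy
                · rintro rfl
                  exact ⟨hx, rfl⟩
              rw [hone]
              simp
          rw [himg, Finset.card_image_of_injOn (hinj.mono (by exact_mod_cast hts))]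
        refine ⟨insert {a, b} P', ?_, ?_, ?_, ?_, ?_⟩
        · intro A hA
          rcases Finset.mem_insert.mp hA with rfl | hA
          · exact Finset.card_pair (fun h => hba h.symm)
          · exact h2' A hA
        · intro A hA
          rcases Finset.mem_insert.mp hA with rfl | hA
          · intro x hx
            rcases Finset.mem_insert.mp hx with rfl | hx
            · exact ha
            · rw [Finset.mem_singleton.mp hx]; exact hbs
          · exact (hsub' A hA).trans hsub
        · intro A hA B hB hAB
          have hdisjnew : ∀ C ∈ P', Disjoint ({a, b} : Finset γ) C := by
            intro C hC
            refine Finset.disjoint_left.mpr ?_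
            intro x hx hxC
            have hxs' := hsub' C hC hxC
            rcases Finset.mem_insert.mp hx with rfl | hx
            · exact has' hxs'
            · rw [Finset.mem_singleton.mp hx] at hxs'
              exact hbs' hxs'
          rcases Finset.mem_insert.mp hA with rfl | hA <;>
            rcases Finset.mem_insert.mp hB with rfl | hB
          · exact absurd rfl hAB
          · exact hdisjnew B hB
          · exact (hdisjnew A hA).symm
          · exact hdisj' A hA B hB hAB
        · rw [Finset.biUnion_insert, hbi']
          show ({a, b} : Finset γ) ∪ s' = s
          ext x
          constructor
          · intro hx
            rcases Finset.mem_union.mp hx with hx | hx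
            · rcases Finset.mem_insert.mp hx with rfl | hx
              · exact ha
              · rw [Finset.mem_singleton.mp hx]; exact hbs
            · exact hsub hx
          · intro hx
            by_cases hxa : x = a
            · exact Finset.mem_union_left _ (by rw [hxa]; exact Finset.mem_insert_self _ _)
            by_cases hxb : x = b
            · exact Finset.mem_union_left _
                (by rw [hxb]; exact Finset.mem_insert_of_mem (Finset.mem_singleton_self _))
            · refine Finset.mem_union_right _ ?_
              rw [hs']
              exact Finset.mem_erase.mpr ⟨hxb, Finset.mem_erase.mpr ⟨hxa, hx⟩⟩
        · rw [hcount_eq s (subset_refl s)]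
          rw [hcount_eq s' hsub, hcards'] at hcount'
          calc 2 * ((insert {a, b} P').filter
                fun A => ¬ ∀ x ∈ A, ∀ y ∈ A, f x = f y).card
              ≤ 2 * ((P'.filter fun A => ¬ ∀ x ∈ A, ∀ y ∈ A, f x = f y).card + 1) := by
                rw [Finset.filter_insert]
                split
                · exact Nat.mul_le_mul_left 2 (Finset.card_insert_le _ _)
                · omega
            _ ≤ s.card := by omega

set_option maxHeartbeats 2000000 in
/-- Crude bound: for `s + t ≥ 3`, `t ≥ 1`, the joint cumulant of
`(Z_{l_1},Z_{l_1},…,Z_{l_s},Z_{l_s},Z_{h_1},…,Z_{h_{2t}})` (each `l`-index appearing twice)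
is bounded by `C·Σ_{σ ∈ L_{2t}^2} |E_σ(Z_{h_1},…,Z_{h_{2t}})|`, the sum running over the
perfect matchings of `{1,…,2t}`. -/
theorem spearman_cumulant_crude_bound (s t : ℕ) (hst : 3 ≤ s + t) (ht : 1 ≤ t) :
    ∃ C : ℝ, ∀ n : ℕ, 2 ≤ n → ∀ l : Fin s → Fin n, ∀ h : Fin (2 * t) → Fin n,
      |jointCumulant (permMeasure n)
          (fun x : (Fin s × Fin 2) ⊕ Fin (2 * t) =>
            Sum.elim (fun i : Fin s × Fin 2 => Zr n (l i.1)) (fun a => Zr n (h a)) x)| ≤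
        C * ∑ P ∈ Finset.univ.filter
              (fun P : Finset (Finset (Fin (2 * t))) => IsPerfectMatching P),
            |momProd (permMeasure n) P (fun a => Zr n (h a))| := by
  classical
  set D : ℕ := 2*s + 2*t with hD
  have hD1 : 1 ≤ D := by omega
  set NN : ℕ := 2 ^ D with hNN
  set C1 : ℝ := (2:ℝ)^NN * ((NN).factorial : ℝ) * (KB D) ^ NN with hC1
  have hKB1 : (1:ℝ) ≤ KB D := by
    rw [KB]
    have h1 : (1:ℝ) ≤ (2*(2^D + (D:ℝ)))^D := by
      refine one_le_pow₀ ?_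
      have : (1:ℝ) ≤ 2^D := one_le_pow₀ (by norm_num)
      have : (0:ℝ) ≤ (D:ℝ) := by positivity
      nlinarith
    have h2 : (0:ℝ) ≤ 2^D * (2*(D:ℝ))^D := by positivity
    linarith
  have hC10 : (0:ℝ) ≤ C1 := by
    rw [hC1]
    positivity
  refine ⟨C1, ?_⟩
  intro n hn l h
  have hn0 : (0:ℝ) < (n:ℝ) := by positivity
  have hfac : (0:ℝ) < (n.factorial : ℝ) := by exact_mod_cast n.factorial_pos
  have hsqrt0 : (0:ℝ) ≤ Real.sqrt n := Real.sqrt_nonneg _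
  have hsqrt1 : (1:ℝ) ≤ Real.sqrt n := by
    rw [show (1:ℝ) = Real.sqrt 1 by simp]
    exact Real.sqrt_le_sqrt (by exact_mod_cast (by omega : 1 ≤ n))
  have hsq : Real.sqrt n ^ 2 = (n:ℝ) := Real.sq_sqrt (by positivity)
  set idx : (Fin s × Fin 2) ⊕ Fin (2*t) → Fin n := Sum.elim (fun i => l i.1) h with hidx
  have hxi : (fun x : (Fin s × Fin 2) ⊕ Fin (2*t) =>
      Sum.elim (fun i : Fin s × Fin 2 => Zr n (l i.1)) (fun a => Zr n (h a)) x)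
      = fun α => Zr n (idx α) := by
    funext α
    cases α <;> rfl
  rw [hxi]
  set r : ℕ := (Finset.univ.filter fun v : Fin n =>
    Odd ((Finset.univ.filter fun a : Fin (2*t) => h a = v)).card).card with hr
  -- parity transfer : the idx-fibers have the same parity as the h-fibers
  have hparity : ∀ v : Fin n,
      ((Finset.univ.filter fun α : (Fin s × Fin 2) ⊕ Fin (2*t) => idx α = v)).card
        = 2 * ((Finset.univ.filter fun i : Fin s => l i = v)).card
          + ((Finset.univ.filter fun a : Fin (2*t) => h a = v)).card := by
    intro v
    rw [Finset.card_filter, Fintype.sum_sum_type]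
    congr 1
    · rw [Fintype.sum_prod_type]
      have : ∀ i : Fin s, (∑ _j : Fin 2, if idx (Sum.inl (i, _j)) = v then 1 else 0)
          = 2 * (if l i = v then 1 else 0) := by
        intro i
        have : ∀ j : Fin 2, (if idx (Sum.inl (i, j)) = v then (1:ℕ) else 0)
            = (if l i = v then 1 else 0) := by
          intro j; rfl
        rw [Finset.sum_congr rfl fun j _ => this j, Finset.sum_const]
        simp [two_mul]
      rw [Finset.sum_congr rfl fun i _ => this i, ← Finset.mul_sum, Finset.card_filter]
    · rw [Finset.card_filter]
      rfl
  have hrfilters : (Finset.univ.filter fun v : Fin n =>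
      Odd ((Finset.univ.filter fun α : (Fin s × Fin 2) ⊕ Fin (2*t) => idx α = v)).card) =
      (Finset.univ.filter fun v : Fin n =>
      Odd ((Finset.univ.filter fun a : Fin (2*t) => h a = v)).card) := by
    ext v
    simp only [Finset.mem_filter, Finset.mem_univ, true_and]
    rw [hparity v, Nat.odd_iff, Nat.odd_iff]
    omega
  -- Step B : bound on the cumulant
  have hcum : |jointCumulant (permMeasure n)
      (fun α : (Fin s × Fin 2) ⊕ Fin (2*t) => Zr n (idx α))| * Real.sqrt n ^ r ≤ C1 := by
    rw [jointCumulant]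
    have habs := Finset.abs_sum_le_sum_abs
      (fun P : Finset (Finset ((Fin s × Fin 2) ⊕ Fin (2*t))) =>
        (-1 : ℝ) ^ (P.card - 1) * (Nat.factorial (P.card - 1) : ℝ) *
          ∏ A ∈ P, ∫ ω, (∏ i ∈ A, Zr n (idx i) ω) ∂permMeasure n)
      (Finset.univ.filter (fun P : Finset (Finset ((Fin s × Fin 2) ⊕ Fin (2*t))) =>
        IsSetPartition P))
    have hterm : ∀ P ∈ (Finset.univ.filter
        (fun P : Finset (Finset ((Fin s × Fin 2) ⊕ Fin (2*t))) => IsSetPartition P)),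
        |(-1 : ℝ) ^ (P.card - 1) * (Nat.factorial (P.card - 1) : ℝ) *
          ∏ A ∈ P, ∫ ω, (∏ i ∈ A, Zr n (idx i) ω) ∂permMeasure n| * Real.sqrt n ^ r
          ≤ ((NN).factorial : ℝ) * (KB D) ^ NN := by
      intro P hP
      have hPpart : IsSetPartition P := (Finset.mem_filter.mp hP).2
      have hPcard : P.card ≤ NN := by
        rw [hNN]
        calc P.card ≤ Fintype.card (Finset ((Fin s × Fin 2) ⊕ Fin (2*t))) :=
              Finset.card_le_univ P
          _ = 2 ^ (Fintype.card ((Fin s × Fin 2) ⊕ Fin (2*t))) := Fintype.card_finset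
          _ = 2 ^ D := by
              rw [hD]
              simp [Fintype.card_sum, Fintype.card_prod]
              ring
      have hfact : ((P.card - 1).factorial : ℝ) ≤ ((NN).factorial : ℝ) := by
        exact_mod_cast Nat.factorial_le (by omega)
      -- r ≤ sum of block odd-counts
      have hrle : r ≤ ∑ A ∈ P, (Finset.univ.filter fun v : Fin n =>
          Odd ((A.filter fun α => idx α = v)).card).card := by
        rw [hr, ← hrfilters]
        exact sum_odd_ge n P hPpart idx
      have hblock : ∀ A ∈ P,
          |∫ ω, (∏ i ∈ A, Zr n (idx i) ω) ∂permMeasure n|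
            * Real.sqrt n ^ ((Finset.univ.filter fun v : Fin n =>
                Odd ((A.filter fun α => idx α = v)).card).card)
          ≤ KB D := by
        intro A hA
        refine block_bound n D hn hD1 idx A ?_
        calc A.card ≤ Fintype.card ((Fin s × Fin 2) ⊕ Fin (2*t)) := Finset.card_le_univ A
          _ = D := by
              rw [hD]
              simp [Fintype.card_sum, Fintype.card_prod]
              ring
      calc |(-1 : ℝ) ^ (P.card - 1) * (Nat.factorial (P.card - 1) : ℝ) *
            ∏ A ∈ P, ∫ ω, (∏ i ∈ A, Zr n (idx i) ω) ∂permMeasure n| * Real.sqrt n ^ r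
          = ((P.card - 1).factorial : ℝ) *
              (∏ A ∈ P, |∫ ω, (∏ i ∈ A, Zr n (idx i) ω) ∂permMeasure n|) *
              Real.sqrt n ^ r := by
            rw [abs_mul, abs_mul, abs_pow, abs_neg, abs_one, one_pow, one_mul,
              Finset.abs_prod, abs_of_nonneg (by positivity : (0:ℝ) ≤ ((P.card - 1).factorial : ℝ))]
        _ ≤ ((P.card - 1).factorial : ℝ) *
              (∏ A ∈ P, |∫ ω, (∏ i ∈ A, Zr n (idx i) ω) ∂permMeasure n|) *
              Real.sqrt n ^ (∑ A ∈ P, (Finset.univ.filter fun v : Fin n =>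
                Odd ((A.filter fun α => idx α = v)).card).card) := by
            refine mul_le_mul_of_nonneg_left (pow_le_pow_right₀ hsqrt1 hrle) ?_
            positivity
        _ = ((P.card - 1).factorial : ℝ) *
              ∏ A ∈ P, (|∫ ω, (∏ i ∈ A, Zr n (idx i) ω) ∂permMeasure n|
                * Real.sqrt n ^ ((Finset.univ.filter fun v : Fin n =>
                    Odd ((A.filter fun α => idx α = v)).card).card)) := by
            rw [← Finset.prod_pow_eq_pow_sum, mul_assoc, ← Finset.prod_mul_distrib]
        _ ≤ ((P.card - 1).factorial : ℝ) * ∏ _A ∈ P, KB D := by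
            refine mul_le_mul_of_nonneg_left ?_ (by positivity)
            exact Finset.prod_le_prod (fun A _ => by positivity) hblock
        _ = ((P.card - 1).factorial : ℝ) * (KB D) ^ P.card := by
            rw [Finset.prod_const]
        _ ≤ ((NN).factorial : ℝ) * (KB D) ^ NN := by
            have h1 : (KB D) ^ P.card ≤ (KB D) ^ NN := pow_le_pow_right₀ hKB1 hPcard
            have h2 : (0:ℝ) ≤ (KB D) ^ P.card := by positivity
            nlinarith
    calc |∑ P ∈ Finset.univ.filter
            (fun P : Finset (Finset ((Fin s × Fin 2) ⊕ Fin (2*t))) => IsSetPartition P),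
            (-1 : ℝ) ^ (P.card - 1) * (Nat.factorial (P.card - 1) : ℝ) *
              ∏ A ∈ P, ∫ ω, (∏ i ∈ A, Zr n (idx i) ω) ∂permMeasure n| * Real.sqrt n ^ r
        ≤ (∑ P ∈ Finset.univ.filter
            (fun P : Finset (Finset ((Fin s × Fin 2) ⊕ Fin (2*t))) => IsSetPartition P),
            |(-1 : ℝ) ^ (P.card - 1) * (Nat.factorial (P.card - 1) : ℝ) *
              ∏ A ∈ P, ∫ ω, (∏ i ∈ A, Zr n (idx i) ω) ∂permMeasure n|) * Real.sqrt n ^ r := by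
          exact mul_le_mul_of_nonneg_right habs (by positivity)
      _ = ∑ P ∈ Finset.univ.filter
            (fun P : Finset (Finset ((Fin s × Fin 2) ⊕ Fin (2*t))) => IsSetPartition P),
            |(-1 : ℝ) ^ (P.card - 1) * (Nat.factorial (P.card - 1) : ℝ) *
              ∏ A ∈ P, ∫ ω, (∏ i ∈ A, Zr n (idx i) ω) ∂permMeasure n| * Real.sqrt n ^ r := by
          rw [Finset.sum_mul]
      _ ≤ ∑ _P ∈ Finset.univ.filter
            (fun P : Finset (Finset ((Fin s × Fin 2) ⊕ Fin (2*t))) => IsSetPartition P),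
            ((NN).factorial : ℝ) * (KB D) ^ NN := Finset.sum_le_sum hterm
      _ ≤ C1 := by
          rw [Finset.sum_const, nsmul_eq_mul, hC1]
          have hcount : ((Finset.univ.filter
              (fun P : Finset (Finset ((Fin s × Fin 2) ⊕ Fin (2*t))) => IsSetPartition P)).card : ℝ)
              ≤ (2:ℝ)^NN := by
            have h1 : (Finset.univ.filter
                (fun P : Finset (Finset ((Fin s × Fin 2) ⊕ Fin (2*t))) =>
                  IsSetPartition P)).card
                ≤ Fintype.card (Finset (Finset ((Fin s × Fin 2) ⊕ Fin (2*t)))) :=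
              Finset.card_le_univ _
            have h2 : Fintype.card (Finset (Finset ((Fin s × Fin 2) ⊕ Fin (2*t)))) = 2 ^ (2^D) := by
              rw [Fintype.card_finset, Fintype.card_finset]
              congr 1
              rw [hD]
              simp [Fintype.card_sum, Fintype.card_prod]
              ring
            calc ((Finset.univ.filter
                (fun P : Finset (Finset ((Fin s × Fin 2) ⊕ Fin (2*t))) =>
                  IsSetPartition P)).card : ℝ)
                ≤ (Fintype.card (Finset (Finset ((Fin s × Fin 2) ⊕ Fin (2*t)))) : ℝ) := by
                  exact_mod_cast h1
              _ = (2:ℝ)^NN := by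
                  rw [h2, hNN]
                  push_cast
                  ring
          have hpos : (0:ℝ) ≤ ((NN).factorial : ℝ) * (KB D) ^ NN := by positivity
          nlinarith
  -- Step C : construct a good perfect matching
  have hevenuniv : Even (Finset.univ : Finset (Fin (2*t))).card := by
    rw [Finset.card_univ, Fintype.card_fin]
    exact ⟨t, by ring⟩
  obtain ⟨Pm, hPm2, _hPmsub, hPmdisj, hPmbi, hPmcount⟩ :=
    matching_exists h (Finset.univ : Finset (Fin (2*t))) hevenuniv
  have hPMperf : IsPerfectMatching Pm := by
    refine ⟨⟨?_, ?_⟩, hPm2⟩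
    · intro A hA
      rw [← Finset.card_pos, hPm2 A hA]; omega
    · intro α
      have hmem : α ∈ Pm.biUnion id := by rw [hPmbi]; exact Finset.mem_univ α
      obtain ⟨A, hA, hαA⟩ := Finset.mem_biUnion.mp hmem
      refine ⟨A, ⟨hA, hαA⟩, ?_⟩
      rintro B ⟨hB, hαB⟩
      by_contra hne
      exact (Finset.disjoint_left.mp (hPmdisj B hB A hA hne) hαB) hαA
  set cross : ℕ := (Pm.filter fun A => ¬ ∀ x ∈ A, ∀ y ∈ A, h x = h y).card with hcross
  have hcross2 : 2 * cross ≤ r := by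
    rw [hcross, hr]
    convert hPmcount using 3
    congr!
  -- momProd lower bound
  have hmomlb : ((1:ℝ)/n) ^ cross ≤ |momProd (permMeasure n) Pm (fun a => Zr n (h a))| := by
    rw [momProd, Finset.abs_prod]
    have hblockval : ∀ A ∈ Pm,
        (if (¬ ∀ x ∈ A, ∀ y ∈ A, h x = h y) then (1:ℝ)/n else 1)
          ≤ |∫ ω, (∏ i ∈ A, Zr n (h i) ω) ∂permMeasure n| := by
      intro A hA
      obtain ⟨x, y, hxy, hAxy⟩ := Finset.card_eq_two.mp (hPm2 A hA)
      have hint : ∫ ω, (∏ i ∈ A, Zr n (h i) ω) ∂permMeasure n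
          = ∫ ω, (Zr n (h x) ω * Zr n (h y) ω) ∂permMeasure n := by
        congr 1
        funext ω
        rw [hAxy, Finset.prod_pair hxy]
      by_cases hcst : ∀ x' ∈ A, ∀ y' ∈ A, h x' = h y'
      · rw [if_neg (not_not_intro hcst)]
        have hxmem : x ∈ A := by rw [hAxy]; exact Finset.mem_insert_self _ _
        have hymem : y ∈ A := by
          rw [hAxy]; exact Finset.mem_insert_of_mem (Finset.mem_singleton_self _)
        have hxyv : h x = h y := hcst x hxmem y hymem
        rw [hint, hxyv, integral_sq n hn (h y)]
        norm_num
      · rw [if_pos hcst]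
        have hxyv : h x ≠ h y := by
          intro heq
          apply hcst
          have hval : ∀ z ∈ A, h z = h x := by
            intro z hz
            rw [hAxy] at hz
            rcases Finset.mem_insert.mp hz with rfl | hz
            · rfl
            · rw [Finset.mem_singleton.mp hz]; exact heq.symm
          intro x' hx' y' hy'
          rw [hval x' hx', hval y' hy']
        rw [hint, integral_mul n hn (h x) (h y) hxyv]
        have hn1 : (0:ℝ) < (n:ℝ) - 1 := by
          have : (2:ℝ) ≤ (n:ℝ) := by exact_mod_cast hn
          linarith
        rw [abs_div, abs_neg, abs_one, abs_of_pos hn1]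
        rw [div_le_div_iff₀ hn0 hn1]
        linarith
    calc ((1:ℝ)/n)^cross
        = ∏ A ∈ Pm, (if (¬ ∀ x ∈ A, ∀ y ∈ A, h x = h y) then (1:ℝ)/n else 1) := by
          rw [Finset.prod_ite, Finset.prod_const, Finset.prod_const, one_pow, mul_one, hcross]
      _ ≤ ∏ A ∈ Pm, |∫ ω, (∏ i ∈ A, Zr n (h i) ω) ∂permMeasure n| := by
          refine Finset.prod_le_prod (fun A _ => ?_) hblockval
          split <;> positivity
  have hPmmem : Pm ∈ Finset.univ.filter
      (fun P : Finset (Finset (Fin (2*t))) => IsPerfectMatching P) :=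
    Finset.mem_filter.mpr ⟨Finset.mem_univ _, hPMperf⟩
  have hRHS1 : |momProd (permMeasure n) Pm (fun a => Zr n (h a))|
      ≤ ∑ P ∈ Finset.univ.filter
          (fun P : Finset (Finset (Fin (2*t))) => IsPerfectMatching P),
        |momProd (permMeasure n) P (fun a => Zr n (h a))| :=
    Finset.single_le_sum
      (f := fun P : Finset (Finset (Fin (2*t))) =>
        |momProd (permMeasure n) P (fun a => Zr n (h a))|)
      (fun P _ => abs_nonneg _) hPmmem
  -- Step D : r is even
  have hreven : Even r := by
    have h1 : ∑ v : Fin n, ((Finset.univ.filter fun a : Fin (2*t) => h a = v)).card = 2*t := by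
      rw [← Finset.card_eq_sum_card_fiberwise (fun a _ => Finset.mem_univ (h a))]
      rw [Finset.card_univ, Fintype.card_fin]
    have h2 := Finset.sum_nat_mod (Finset.univ : Finset (Fin n)) 2
      (fun v => ((Finset.univ.filter fun a : Fin (2*t) => h a = v)).card)
    have h3 : ∀ v : Fin n, ((Finset.univ.filter fun a : Fin (2*t) => h a = v)).card % 2
        = if Odd ((Finset.univ.filter fun a : Fin (2*t) => h a = v)).card then 1 else 0 := by
      intro v
      rcases Nat.even_or_odd ((Finset.univ.filter fun a : Fin (2*t) => h a = v)).card with hp | hp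
      · rw [if_neg (Nat.not_odd_iff_even.mpr hp)]
        exact Nat.even_iff.mp hp
      · rw [if_pos hp]
        exact Nat.odd_iff.mp hp
    have h4 : ∑ v : Fin n, (if Odd ((Finset.univ.filter
        fun a : Fin (2*t) => h a = v)).card then 1 else 0) = r := by
      rw [hr, Finset.card_filter]
    rw [Nat.even_iff]
    have h6 : r = ∑ v : Fin n,
        ((Finset.univ.filter fun a : Fin (2*t) => h a = v)).card % 2 := by
      rw [← h4]
      exact Finset.sum_congr rfl fun v _ => (h3 v).symm
    have h5 : r % 2 = (2*t) % 2 := by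
      rw [h6, ← h2, h1]
    omega
  obtain ⟨r2, hr2⟩ := hreven
  -- Step E : the final chain
  have hsnr : Real.sqrt n ^ r = (n:ℝ) ^ r2 := by
    rw [hr2, ← two_mul, pow_mul, hsq]
  have hnr2 : (0:ℝ) < (n:ℝ) ^ r2 := by positivity
  rw [hsnr] at hcum
  have hpow_eq : ((1:ℝ)/n) ^ r2 = 1 / (n:ℝ) ^ r2 := by
    rw [div_pow, one_pow]
  have hcum2 : |jointCumulant (permMeasure n)
      (fun α : (Fin s × Fin 2) ⊕ Fin (2*t) => Zr n (idx α))| ≤ C1 * ((1:ℝ)/n) ^ r2 := by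
    rw [hpow_eq, mul_one_div, le_div_iff₀ hnr2]
    exact hcum
  have hc2r : cross ≤ r2 := by omega
  have hmono : ((1:ℝ)/n) ^ r2 ≤ ((1:ℝ)/n) ^ cross := by
    refine pow_le_pow_of_le_one (by positivity) ?_ hc2r
    rw [div_le_one hn0]
    exact_mod_cast (by omega : 1 ≤ n)
  calc |jointCumulant (permMeasure n)
        (fun α : (Fin s × Fin 2) ⊕ Fin (2*t) => Zr n (idx α))|
      ≤ C1 * ((1:ℝ)/n) ^ r2 := hcum2
    _ ≤ C1 * ((1:ℝ)/n) ^ cross := mul_le_mul_of_nonneg_left hmono hC10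
    _ ≤ C1 * |momProd (permMeasure n) Pm (fun a => Zr n (h a))| :=
        mul_le_mul_of_nonneg_left hmomlb hC10
    _ ≤ C1 * ∑ P ∈ Finset.univ.filter
          (fun P : Finset (Finset (Fin (2*t))) => IsPerfectMatching P),
        |momProd (permMeasure n) P (fun a => Zr n (h a))| :=
        mul_le_mul_of_nonneg_left hRHS1 hC10
end
end

section
/- Let s ≥ 2 be a fixed integer. There is a constant C, depending only on s, such that for every integer n large enough and all indices l_1,…,l_s, h_1, h_2 ∈ {1,…,n} with l_1 = l_2, with l_2,…,l_s mutually distinct and each of l_2,…,l_s distinct from both h_1 and h_2, the joint cumulant of the 2s+2 variables (Z_{l_1}, Z_{l_1}, …, Z_{l_s}, Z_{l_s}, Z_{h_1}, Z_{h_2}) satisfies |C(Z_{l_1},Z_{l_1},…,Z_{l_s},Z_{l_s},Z_{h_1},Z_{h_2})| ≤ C·n^{−1}·|E[Z_{h_1} Z_{h_2}]|. -/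
open MeasureTheory ProbabilityTheory Finset

noncomputable section

attribute [local instance] Classical.propDecidable

namespace SpearmanProof

abbrev Om (n : ℕ) := Equiv.Perm (Fin n)

def cardP (n : ℕ) : ℝ := (Fintype.card (Om n) : ℝ)

lemma cardP_pos (n : ℕ) : 0 < cardP n := by
  unfold cardP; exact_mod_cast Fintype.card_pos

lemma cardP_ne (n : ℕ) : cardP n ≠ 0 := ne_of_gt (cardP_pos n)

lemma integral_perm {n : ℕ} (f : Om n → ℝ) :
    ∫ σ, f σ ∂(permMeasure n) = (∑ σ : Om n, f σ) / cardP n := by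
  rw [permMeasure, PMF.integral_eq_sum, Finset.sum_div]
  refine Finset.sum_congr rfl fun σ _ => ?_
  rw [PMF.uniformOfFintype_apply, smul_eq_mul, ENNReal.toReal_inv]
  simp [cardP, div_eq_inv_mul]

def zval (n : ℕ) (q : Fin n) : ℝ :=
  Real.sqrt (12 / ((n : ℝ) ^ 2 - 1)) * (((q : ℕ) : ℝ) + 1 - ((n : ℝ) + 1) / 2)

lemma Zr_eq {n : ℕ} (i : Fin n) : Zr n i = fun σ => zval n (σ i) := rfl

lemma sum_range_cast (m : ℕ) : ∑ i ∈ Finset.range m, (i : ℝ) = m * (m - 1) / 2 := by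
  induction m with
  | zero => simp
  | succ k ih => rw [Finset.sum_range_succ, ih]; push_cast; ring

lemma sum_range_sq_cast (m : ℕ) :
    ∑ i ∈ Finset.range m, (i : ℝ) ^ 2 = m * (m - 1) * (2 * m - 1) / 6 := by
  induction m with
  | zero => simp
  | succ k ih => rw [Finset.sum_range_succ, ih]; push_cast; ring

lemma sum_zval (n : ℕ) : ∑ q, zval n q = 0 := by
  unfold zval
  rw [← Finset.mul_sum]
  have : ∑ q : Fin n, (((q : ℕ) : ℝ) + 1 - ((n : ℝ) + 1) / 2) = 0 := by
    rw [Fin.sum_univ_eq_sum_range (fun i => ((i : ℝ) + 1 - ((n : ℝ) + 1) / 2))]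
    rw [Finset.sum_sub_distrib, Finset.sum_add_distrib, sum_range_cast,
      Finset.sum_const, Finset.sum_const, Finset.card_range, nsmul_eq_mul, nsmul_eq_mul]
    ring
  rw [this, mul_zero]

lemma sum_zval_sq {n : ℕ} (hn : 2 ≤ n) : ∑ q, zval n q * zval n q = n := by
  have hn' : (2 : ℝ) ≤ (n : ℝ) := by exact_mod_cast hn
  have hpos : (0 : ℝ) < (n : ℝ) ^ 2 - 1 := by nlinarith
  have hsq : Real.sqrt (12 / ((n : ℝ) ^ 2 - 1)) * Real.sqrt (12 / ((n : ℝ) ^ 2 - 1))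
      = 12 / ((n : ℝ) ^ 2 - 1) := Real.mul_self_sqrt (by positivity)
  unfold zval
  have hre : ∀ q : Fin n, (Real.sqrt (12 / ((n : ℝ) ^ 2 - 1)) * (((q : ℕ) : ℝ) + 1 - ((n : ℝ) + 1) / 2))
      * (Real.sqrt (12 / ((n : ℝ) ^ 2 - 1)) * (((q : ℕ) : ℝ) + 1 - ((n : ℝ) + 1) / 2))
      = (12 / ((n : ℝ) ^ 2 - 1)) * ((((q : ℕ) : ℝ) + 1 - ((n : ℝ) + 1) / 2)) ^ 2 := by
    intro q; linear_combination ((((q : ℕ) : ℝ)) + 1 - ((n : ℝ) + 1) / 2) ^ 2 * hsq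
  rw [Finset.sum_congr rfl fun q _ => hre q, ← Finset.mul_sum]
  have hin : ∑ q : Fin n, ((((q : ℕ) : ℝ)) + 1 - ((n : ℝ) + 1) / 2) ^ 2
      = (n : ℝ) * ((n : ℝ) ^ 2 - 1) / 12 := by
    rw [Fin.sum_univ_eq_sum_range (fun i => (((i : ℝ)) + 1 - ((n : ℝ) + 1) / 2) ^ 2)]
    have expand : ∀ i ∈ Finset.range n, ((i : ℝ) + 1 - ((n : ℝ) + 1) / 2) ^ 2
        = (i : ℝ) ^ 2 + (2 - ((n : ℝ) + 1)) * (i : ℝ) + (1 - ((n : ℝ) + 1) / 2) ^ 2 := by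
      intro i _; ring
    rw [Finset.sum_congr rfl expand, Finset.sum_add_distrib, Finset.sum_add_distrib,
      sum_range_sq_cast, ← Finset.mul_sum, sum_range_cast, Finset.sum_const,
      Finset.card_range, nsmul_eq_mul]
    ring
  rw [hin]
  field_simp

lemma abs_zval_le {n : ℕ} (hn : 2 ≤ n) (q : Fin n) : |zval n q| ≤ 2 := by
  have hn' : (2 : ℝ) ≤ (n : ℝ) := by exact_mod_cast hn
  have hpos : (0 : ℝ) < (n : ℝ) ^ 2 - 1 := by nlinarith
  have h1 : Real.sqrt (12 / ((n : ℝ) ^ 2 - 1)) ≤ 4 / n := by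
    have h2 : (12 : ℝ) / ((n : ℝ) ^ 2 - 1) ≤ (4 / n) ^ 2 := by
      rw [div_pow, div_le_div_iff₀ hpos (by positivity)]
      nlinarith
    calc Real.sqrt (12 / ((n : ℝ) ^ 2 - 1)) ≤ Real.sqrt ((4 / n) ^ 2) := Real.sqrt_le_sqrt h2
      _ = 4 / n := Real.sqrt_sq (by positivity)
  have h3 : |(((q : ℕ) : ℝ) + 1 - ((n : ℝ) + 1) / 2)| ≤ ((n : ℝ) - 1) / 2 := by
    have hq1 : ((q : ℕ) : ℝ) ≤ (n : ℝ) - 1 := by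
      have := q.isLt
      have : ((q : ℕ) : ℝ) ≤ (n : ℝ) - 1 := by
        have h := Nat.lt_iff_add_one_le.mp q.isLt
        have : ((q : ℕ) + 1 : ℝ) ≤ (n : ℝ) := by exact_mod_cast h
        linarith
      exact this
    have hq0 : (0 : ℝ) ≤ ((q : ℕ) : ℝ) := by positivity
    rw [abs_le]; constructor <;> [linarith; linarith]
  have h4 : |zval n q| ≤ (4 / n) * (((n : ℝ) - 1) / 2) := by
    unfold zval
    rw [abs_mul, abs_of_nonneg (Real.sqrt_nonneg _)]
    exact mul_le_mul h1 h3 (abs_nonneg _) (by positivity)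
  have h5 : (4 / (n : ℝ)) * (((n : ℝ) - 1) / 2) ≤ 2 := by
    rw [div_mul_eq_mul_div, div_le_iff₀ (by positivity)]
    nlinarith
  linarith

def DependsOn {n : ℕ} (F : Om n → ℝ) (I : Finset (Fin n)) : Prop :=
  ∀ σ τ : Om n, (∀ i ∈ I, σ i = τ i) → F σ = F τ

lemma key_identity {n : ℕ} (I : Finset (Fin n)) (j : Fin n) (hj : j ∉ I)
    (F : Om n → ℝ) (hF : DependsOn F I) (g : Fin n → ℝ) :
    ((n : ℝ) - I.card) * ∑ σ : Om n, F σ * g (σ j) =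
      (∑ q, g q) * (∑ σ : Om n, F σ) - ∑ i ∈ I, ∑ σ : Om n, F σ * g (σ i) := by
  have hswap : ∀ k : Fin n, k ∉ I → (∑ σ : Om n, F σ * g (σ k)) = ∑ σ : Om n, F σ * g (σ j) := by
    intro k hk
    calc ∑ σ : Om n, F σ * g (σ k)
        = ∑ σ : Om n, F ((Equiv.mulRight (Equiv.swap k j)) σ)
            * g (((Equiv.mulRight (Equiv.swap k j)) σ) j) := by
          refine Finset.sum_congr rfl fun σ _ => ?_
          have h1 : F (σ * Equiv.swap k j) = F σ := by
            refine hF _ _ fun i hi => ?_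
            have hik : i ≠ k := fun h => hk (h ▸ hi)
            have hij : i ≠ j := fun h => hj (h ▸ hi)
            simp [Equiv.Perm.mul_apply, Equiv.swap_apply_of_ne_of_ne hik hij]
          have h2 : (σ * Equiv.swap k j) j = σ k := by
            simp [Equiv.Perm.mul_apply]
          simp only [Equiv.coe_mulRight]
          rw [h1, h2]
      _ = ∑ σ : Om n, F σ * g (σ j) :=
        Equiv.sum_comp (Equiv.mulRight (Equiv.swap k j)) (fun τ => F τ * g (τ j))
  have hall : (∑ q, g q) * (∑ σ : Om n, F σ) = ∑ k : Fin n, ∑ σ : Om n, F σ * g (σ k) := by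
    rw [Finset.sum_comm]
    rw [mul_comm, Finset.sum_mul]
    refine Finset.sum_congr rfl fun σ _ => ?_
    rw [← Equiv.sum_comp σ g, Finset.mul_sum]
  have hsplit : (∑ k ∈ I, ∑ σ : Om n, F σ * g (σ k)) + ∑ k ∈ Iᶜ, ∑ σ : Om n, F σ * g (σ k)
      = ∑ k : Fin n, ∑ σ : Om n, F σ * g (σ k) := Finset.sum_add_sum_compl I _
  have hIle : I.card ≤ n := le_of_le_of_eq (Finset.card_le_univ I) (Fintype.card_fin n)
  have hcomp : ∑ k ∈ Iᶜ, ∑ σ : Om n, F σ * g (σ k)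
      = ((n : ℝ) - I.card) * ∑ σ : Om n, F σ * g (σ j) := by
    rw [Finset.sum_congr rfl (fun k hk => hswap k (Finset.mem_compl.mp hk)), Finset.sum_const,
      nsmul_eq_mul, Finset.card_compl, Fintype.card_fin, Nat.cast_sub hIle]
  linarith

set_option linter.unusedSectionVars false

section Partitions

variable {ι : Type*} [Fintype ι] [DecidableEq ι] {n : ℕ}

lemma block_eq {P : Finset (Finset ι)} (hP : IsSetPartition P)
    {A B : Finset ι} (hA : A ∈ P) (hB : B ∈ P) {x : ι} (hxA : x ∈ A) (hxB : x ∈ B) : A = B := by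
  obtain ⟨C, -, hu⟩ := hP.2 x
  rw [hu A ⟨hA, hxA⟩, hu B ⟨hB, hxB⟩]

lemma exists_block {P : Finset (Finset ι)} (hP : IsSetPartition P) (α : ι) :
    ∃ A, A ∈ P ∧ α ∈ A := by
  obtain ⟨A, hA, -⟩ := hP.2 α
  exact ⟨A, hA.1, hA.2⟩

def blockS (n : ℕ) (ξ : ι → Om n → ℝ) (A : Finset ι) : ℝ := ∑ σ : Om n, ∏ i ∈ A, ξ i σ

def termS (n : ℕ) (ξ : ι → Om n → ℝ) (P : Finset (Finset ι)) : ℝ :=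
  (-1 : ℝ) ^ (P.card - 1) * (Nat.factorial (P.card - 1) : ℝ) *
    ∏ A ∈ P, (blockS n ξ A / cardP n)

lemma jointCumulant_eq_sum (ξ : ι → Om n → ℝ) :
    jointCumulant (permMeasure n) ξ =
      ∑ P ∈ Finset.univ.filter (fun P : Finset (Finset ι) => IsSetPartition P), termS n ξ P := by
  unfold jointCumulant termS blockS
  refine Finset.sum_congr rfl fun P _ => ?_
  congr 1
  exact Finset.prod_congr rfl fun A _ => integral_perm _

lemma prod_update_of_mem {ξ : ι → Om n → ℝ} {α : ι} {A : Finset ι} (hα : α ∈ A)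
    (f : Om n → ℝ) (σ : Om n) :
    ∏ i ∈ A, Function.update ξ α f i σ = f σ * ∏ i ∈ A.erase α, ξ i σ := by
  rw [← Finset.mul_prod_erase A _ hα, Function.update_self]
  congr 1
  exact Finset.prod_congr rfl fun i hi => by
    rw [Function.update_of_ne (Finset.ne_of_mem_erase hi)]

lemma blockS_update_of_not_mem {ξ : ι → Om n → ℝ} {α : ι} {A : Finset ι} (hα : α ∉ A)
    (f : Om n → ℝ) : blockS n (Function.update ξ α f) A = blockS n ξ A := by
  unfold blockS
  refine Finset.sum_congr rfl fun σ _ => Finset.prod_congr rfl fun i hi => ?_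
  have : i ≠ α := fun h => hα (h ▸ hi)
  rw [Function.update_of_ne this]

lemma termS_update_eq_mul {ξ : ι → Om n → ℝ} {P : Finset (Finset ι)} (hP : IsSetPartition P)
    {α : ι} {A₀ : Finset ι} (hA₀ : A₀ ∈ P) (hαA₀ : α ∈ A₀) (f : Om n → ℝ) :
    termS n (Function.update ξ α f) P =
      ((-1 : ℝ) ^ (P.card - 1) * (Nat.factorial (P.card - 1) : ℝ) *
        ∏ A ∈ P.erase A₀, (blockS n ξ A / cardP n)) *
      ((∑ σ : Om n, f σ * ∏ i ∈ A₀.erase α, ξ i σ) / cardP n) := by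
  unfold termS
  rw [← Finset.mul_prod_erase P _ hA₀]
  have h1 : blockS n (Function.update ξ α f) A₀ = ∑ σ : Om n, f σ * ∏ i ∈ A₀.erase α, ξ i σ :=
    Finset.sum_congr rfl fun σ _ => prod_update_of_mem hαA₀ f σ
  have h2 : ∏ A ∈ P.erase A₀, (blockS n (Function.update ξ α f) A / cardP n)
      = ∏ A ∈ P.erase A₀, (blockS n ξ A / cardP n) := by
    refine Finset.prod_congr rfl fun A hA => ?_
    have hαA : α ∉ A := fun hmem => (Finset.ne_of_mem_erase hA)
      (block_eq hP (Finset.mem_of_mem_erase hA) hA₀ hmem hαA₀)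
    rw [blockS_update_of_not_mem hαA]
  rw [h1, h2]; ring

lemma termS_update_add {ξ : ι → Om n → ℝ} {P : Finset (Finset ι)} (hP : IsSetPartition P)
    (α : ι) (f g : Om n → ℝ) :
    termS n (Function.update ξ α (fun σ => f σ + g σ)) P
      = termS n (Function.update ξ α f) P + termS n (Function.update ξ α g) P := by
  obtain ⟨A₀, hA₀, hα⟩ := exists_block hP α
  rw [termS_update_eq_mul hP hA₀ hα, termS_update_eq_mul hP hA₀ hα, termS_update_eq_mul hP hA₀ hα]
  rw [show (∑ σ : Om n, (f σ + g σ) * ∏ i ∈ A₀.erase α, ξ i σ)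
      = (∑ σ : Om n, f σ * ∏ i ∈ A₀.erase α, ξ i σ)
        + ∑ σ : Om n, g σ * ∏ i ∈ A₀.erase α, ξ i σ by
    rw [← Finset.sum_add_distrib]; exact Finset.sum_congr rfl fun σ _ => by ring]
  ring

lemma termS_update_smul {ξ : ι → Om n → ℝ} {P : Finset (Finset ι)} (hP : IsSetPartition P)
    (α : ι) (c : ℝ) (f : Om n → ℝ) :
    termS n (Function.update ξ α (fun σ => c * f σ)) P
      = c * termS n (Function.update ξ α f) P := by
  obtain ⟨A₀, hA₀, hα⟩ := exists_block hP α
  rw [termS_update_eq_mul hP hA₀ hα, termS_update_eq_mul hP hA₀ hα]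
  rw [show (∑ σ : Om n, (c * f σ) * ∏ i ∈ A₀.erase α, ξ i σ)
      = c * ∑ σ : Om n, f σ * ∏ i ∈ A₀.erase α, ξ i σ by
    rw [Finset.mul_sum]; exact Finset.sum_congr rfl fun σ _ => by ring]
  ring

lemma termS_update_zero {ξ : ι → Om n → ℝ} {P : Finset (Finset ι)} (hP : IsSetPartition P)
    (α : ι) : termS n (Function.update ξ α (fun _ => (0 : ℝ))) P = 0 := by
  obtain ⟨A₀, hA₀, hα⟩ := exists_block hP α
  rw [termS_update_eq_mul hP hA₀ hα]
  simp

lemma termS_update_finsum {ξ : ι → Om n → ℝ} {P : Finset (Finset ι)} (hP : IsSetPartition P)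
    (α : ι) {γ : Type*} [DecidableEq γ] (t : Finset γ) (f : γ → Om n → ℝ) :
    termS n (Function.update ξ α (fun σ => ∑ i ∈ t, f i σ)) P
      = ∑ i ∈ t, termS n (Function.update ξ α (f i)) P := by
  classical
  induction t using Finset.induction_on with
  | empty => simpa using termS_update_zero hP α
  | @insert c t hc ih =>
      rw [Finset.sum_insert hc,
        show (fun σ => ∑ i ∈ insert c t, f i σ) = fun σ => f c σ + ∑ i ∈ t, f i σ from
          funext fun σ => Finset.sum_insert hc,
        termS_update_add hP, ih]

lemma dependsOn_coord {I : Finset (Fin n)} {v : Fin n} (hv : v ∈ I) (g : Fin n → ℝ) :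
    DependsOn (fun σ => g (σ v)) I := fun σ τ h => by simp only; rw [h v hv]

lemma dependsOn_const (c : ℝ) (I : Finset (Fin n)) : DependsOn (fun _ => c) I := fun _ _ _ => rfl

lemma dependsOn_prod {t : Finset ι} {ξ : ι → Om n → ℝ} {I : Finset (Fin n)}
    (h : ∀ i ∈ t, DependsOn (ξ i) I) :
    DependsOn (fun σ => ∏ i ∈ t, ξ i σ) I := fun σ τ hst =>
  Finset.prod_congr rfl fun i hi => h i hi σ τ hst

lemma dependsOn_mul {F G : Om n → ℝ} {I : Finset (Fin n)} (hF : DependsOn F I)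
    (hG : DependsOn G I) :
    DependsOn (fun σ => F σ * G σ) I := fun σ τ h => by
  simp only; rw [hF σ τ h, hG σ τ h]

lemma termS_replace {ξ : ι → Om n → ℝ} {P : Finset (Finset ι)} (hP : IsSetPartition P) (α : ι)
    (I : Finset (Fin n)) (j : Fin n) (hj : j ∉ I)
    (hdep : ∀ β, β ≠ α → DependsOn (ξ β) I)
    (g : Fin n → ℝ) (H : Om n → ℝ) (hH : DependsOn H I) :
    ((n : ℝ) - I.card) * termS n (Function.update ξ α (fun σ => g (σ j) * H σ)) P
      = termS n (Function.update ξ α (fun σ => (∑ q, g q) * H σ)) P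
        - ∑ i ∈ I, termS n (Function.update ξ α (fun σ => g (σ i) * H σ)) P := by
  obtain ⟨A₀, hA₀, hα⟩ := exists_block hP α
  set R := (-1 : ℝ) ^ (P.card - 1) * (Nat.factorial (P.card - 1) : ℝ) *
    ∏ A ∈ P.erase A₀, (blockS n ξ A / cardP n) with hR
  have hTT : ∀ f : Om n → ℝ, termS n (Function.update ξ α f) P
      = R * ((∑ σ : Om n, f σ * ∏ i ∈ A₀.erase α, ξ i σ) / cardP n) := fun f => by
    rw [hR]; exact termS_update_eq_mul hP hA₀ hα f
  have hF : DependsOn (fun σ => H σ * ∏ i ∈ A₀.erase α, ξ i σ) I :=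
    dependsOn_mul hH (dependsOn_prod fun i hi => hdep i (Finset.ne_of_mem_erase hi))
  have key := key_identity I j hj _ hF g
  have e1 : ∀ v : Fin n, (∑ σ : Om n, (g (σ v) * H σ) * ∏ i ∈ A₀.erase α, ξ i σ)
      = ∑ σ : Om n, (H σ * ∏ i ∈ A₀.erase α, ξ i σ) * g (σ v) := fun v =>
    Finset.sum_congr rfl fun σ _ => by ring
  have e2 : (∑ σ : Om n, ((∑ q, g q) * H σ) * ∏ i ∈ A₀.erase α, ξ i σ)
      = (∑ q, g q) * ∑ σ : Om n, (H σ * ∏ i ∈ A₀.erase α, ξ i σ) := by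
    rw [Finset.mul_sum]; exact Finset.sum_congr rfl fun σ _ => by ring
  rw [hTT, hTT, e1 j, e2]
  rw [show (∑ i ∈ I, termS n (Function.update ξ α (fun σ => g (σ i) * H σ)) P)
      = ∑ i ∈ I, R * ((∑ σ : Om n, (H σ * ∏ i' ∈ A₀.erase α, ξ i' σ) * g (σ i)) / cardP n) from
    Finset.sum_congr rfl fun i _ => by rw [hTT, e1 i]]
  rw [← Finset.mul_sum, ← Finset.sum_div]
  have hcp := cardP_ne n
  field_simp
  linear_combination (R * key)

lemma termS_eq_zero_of_centered {ξ : ι → Om n → ℝ} {P : Finset (Finset ι)}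
    (hP : IsSetPartition P) {a b : ι}
    (hcent : ∀ A : Finset ι, a ∈ A → b ∉ A → blockS n ξ A = 0)
    (hng : ¬ ∃ A ∈ P, a ∈ A ∧ b ∈ A) : termS n ξ P = 0 := by
  obtain ⟨A₀, hA₀, haA₀⟩ := exists_block hP a
  have hb : b ∉ A₀ := fun hb => hng ⟨A₀, hA₀, haA₀, hb⟩
  unfold termS
  rw [Finset.prod_eq_zero hA₀ (by rw [hcent A₀ haA₀ hb, zero_div]), mul_zero]

lemma termS_pair {ξ : ι → Om n → ℝ} {P : Finset (Finset ι)} (hP : IsSetPartition P)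
    {a b : ι} (hab : a ≠ b)
    {A₀ : Finset ι} (hA₀ : A₀ ∈ P) (ha : a ∈ A₀) (hb : b ∈ A₀) :
    termS n ξ P = termS n (Function.update (Function.update ξ a (fun _ => (1:ℝ))) b
      (fun σ => ξ a σ * ξ b σ)) P := by
  unfold termS
  congr 1
  refine Finset.prod_congr rfl fun A hA => ?_
  congr 1
  by_cases hAA : A = A₀
  · subst hAA
    unfold blockS
    refine Finset.sum_congr rfl fun σ _ => ?_
    have hba : a ∈ A.erase b := Finset.mem_erase.mpr ⟨hab, ha⟩
    have hL : ∏ i ∈ A, ξ i σ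
        = ξ b σ * (ξ a σ * ∏ i ∈ (A.erase b).erase a, ξ i σ) := by
      rw [Finset.mul_prod_erase (A.erase b) (fun i => ξ i σ) hba,
        Finset.mul_prod_erase A (fun i => ξ i σ) hb]
    have hR : ∏ i ∈ A, Function.update (Function.update ξ a (fun _ => (1:ℝ))) b
          (fun σ => ξ a σ * ξ b σ) i σ
        = (ξ a σ * ξ b σ) * ((1:ℝ) * ∏ i ∈ (A.erase b).erase a, ξ i σ) := by
      rw [← Finset.mul_prod_erase A _ hb, ← Finset.mul_prod_erase (A.erase b) _ hba]
      rw [Function.update_self]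
      congr 1
      congr 1
      · rw [Function.update_of_ne hab, Function.update_self]
      · refine Finset.prod_congr rfl fun i hi => ?_
        have hib : i ≠ b := Finset.ne_of_mem_erase (Finset.mem_of_mem_erase hi)
        have hia : i ≠ a := Finset.ne_of_mem_erase hi
        rw [Function.update_of_ne hib, Function.update_of_ne hia]
    rw [hL, hR]; ring
  · have haA : a ∉ A := fun hmem =>
      hAA (block_eq hP hA hA₀ hmem ha)
    have hbA : b ∉ A := fun hmem =>
      hAA (block_eq hP hA hA₀ hmem hb)
    rw [blockS_update_of_not_mem hbA, blockS_update_of_not_mem haA]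

lemma sum_termS_restrict {ξ : ι → Om n → ℝ} {a b : ι}
    (hcent : ∀ A : Finset ι, a ∈ A → b ∉ A → blockS n ξ A = 0) :
    ∑ P ∈ Finset.univ.filter (fun P : Finset (Finset ι) => IsSetPartition P), termS n ξ P
      = ∑ P ∈ Finset.univ.filter (fun P : Finset (Finset ι) =>
          IsSetPartition P ∧ ∃ A ∈ P, a ∈ A ∧ b ∈ A), termS n ξ P := by
  rw [← Finset.filter_filter]
  exact (Finset.sum_filter_of_ne fun P hP hne => by
    by_contra hng
    exact hne (termS_eq_zero_of_centered (Finset.mem_filter.mp hP).2 hcent hng)).symm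

end Partitions

section MoreLemmas

set_option linter.unusedSectionVars false

variable {ι : Type*} [Fintype ι] [DecidableEq ι] {n : ℕ}

lemma termS_congr_update {ξ : ι → Om n → ℝ} {P : Finset (Finset ι)} (α : ι)
    {f g : Om n → ℝ} (h : ∀ σ, f σ = g σ) :
    termS n (Function.update ξ α f) P = termS n (Function.update ξ α g) P := by
  rw [funext h]

lemma termS_replace1 {ξ : ι → Om n → ℝ} {P : Finset (Finset ι)} (hP : IsSetPartition P) (α : ι)
    (I : Finset (Fin n)) (v : Fin n) (hv : v ∉ I)
    (hdep : ∀ β, β ≠ α → DependsOn (ξ β) I) (g : Fin n → ℝ) :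
    ((n : ℝ) - I.card) * termS n (Function.update ξ α (fun σ => g (σ v))) P
      = (∑ q, g q) * termS n (Function.update ξ α (fun _ => (1:ℝ))) P
        - ∑ i ∈ I, termS n (Function.update ξ α (fun σ => g (σ i))) P := by
  obtain ⟨A₀, hA₀, hα⟩ := exists_block hP α
  set R := (-1 : ℝ) ^ (P.card - 1) * (Nat.factorial (P.card - 1) : ℝ) *
    ∏ A ∈ P.erase A₀, (blockS n ξ A / cardP n) with hR
  have hTT : ∀ f : Om n → ℝ, termS n (Function.update ξ α f) P
      = R * ((∑ σ : Om n, f σ * ∏ i ∈ A₀.erase α, ξ i σ) / cardP n) := fun f => by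
    rw [hR]; exact termS_update_eq_mul hP hA₀ hα f
  have hF : DependsOn (fun σ => ∏ i ∈ A₀.erase α, ξ i σ) I :=
    dependsOn_prod fun i hi => hdep i (Finset.ne_of_mem_erase hi)
  have key := key_identity I v hv _ hF g
  have e1 : ∀ w : Fin n, (∑ σ : Om n, g (σ w) * ∏ i ∈ A₀.erase α, ξ i σ)
      = ∑ σ : Om n, (∏ i ∈ A₀.erase α, ξ i σ) * g (σ w) := fun w =>
    Finset.sum_congr rfl fun σ _ => by ring
  have e2 : (∑ σ : Om n, (1:ℝ) * ∏ i ∈ A₀.erase α, ξ i σ)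
      = ∑ σ : Om n, ∏ i ∈ A₀.erase α, ξ i σ :=
    Finset.sum_congr rfl fun σ _ => one_mul _
  rw [hTT, hTT, e1 v, e2]
  rw [show (∑ i ∈ I, termS n (Function.update ξ α (fun σ => g (σ i))) P)
      = ∑ i ∈ I, R * ((∑ σ : Om n, (∏ i' ∈ A₀.erase α, ξ i' σ) * g (σ i)) / cardP n) from
    Finset.sum_congr rfl fun i _ => by rw [hTT, e1 i]]
  rw [← Finset.mul_sum, ← Finset.sum_div]
  have hcp := cardP_ne n
  field_simp
  linear_combination (R * key)

lemma sum_termS_slot_comb {T : Finset (Finset (Finset ι))}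
    (hT : ∀ P ∈ T, IsSetPartition P) (ζ : ι → Om n → ℝ) (α : ι) (c : ℝ)
    {γ : Type*} [DecidableEq γ] (t : Finset γ) (f : γ → Om n → ℝ) :
    ∑ P ∈ T, termS n (Function.update ζ α (fun σ => c * ∑ i ∈ t, f i σ)) P
      = c * ∑ i ∈ t, ∑ P ∈ T, termS n (Function.update ζ α (f i)) P := by
  have hper : ∀ P ∈ T, termS n (Function.update ζ α (fun σ => c * ∑ i ∈ t, f i σ)) P
      = c * ∑ i ∈ t, termS n (Function.update ζ α (f i)) P := by
    intro P hP
    rw [termS_congr_update α (f := fun σ => c * ∑ i ∈ t, f i σ)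
        (g := fun σ => c * (fun σ' : Om n => ∑ i ∈ t, f i σ') σ) (fun σ => rfl),
      termS_update_smul (hT P hP) α c,
      termS_update_finsum (hT P hP) α t f]
  rw [Finset.sum_congr rfl hper, ← Finset.mul_sum, Finset.sum_comm]

lemma sum_termS_replace1 (T : Finset (Finset (Finset ι)))
    (hT : ∀ P ∈ T, IsSetPartition P) (ζ : ι → Om n → ℝ) (α : ι)
    (I : Finset (Fin n)) (v : Fin n) (hv : v ∉ I)
    (hdepζ : ∀ β, β ≠ α → DependsOn (ζ β) I) (g : Fin n → ℝ) :
    ((n : ℝ) - I.card) * ∑ P ∈ T, termS n (Function.update ζ α (fun σ => g (σ v))) P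
      = (∑ q, g q) * (∑ P ∈ T, termS n (Function.update ζ α (fun _ => (1:ℝ))) P)
        - ∑ i ∈ I, ∑ P ∈ T, termS n (Function.update ζ α (fun σ => g (σ i))) P := by
  have hper := fun P (hP : P ∈ T) => termS_replace1 (hT P hP) α I v hv hdepζ g
  calc ((n : ℝ) - I.card) * ∑ P ∈ T, termS n (Function.update ζ α (fun σ => g (σ v))) P
      = ∑ P ∈ T, ((n : ℝ) - I.card)
          * termS n (Function.update ζ α (fun σ => g (σ v))) P := Finset.mul_sum _ _ _
    _ = ∑ P ∈ T, ((∑ q, g q) * termS n (Function.update ζ α (fun _ => (1:ℝ))) P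
          - ∑ i ∈ I, termS n (Function.update ζ α (fun σ => g (σ i))) P) :=
        Finset.sum_congr rfl hper
    _ = _ := by
        rw [Finset.sum_sub_distrib, ← Finset.mul_sum, Finset.sum_comm]

end MoreLemmas

section MoreLemmas2
set_option linter.unusedSectionVars false
variable {n : ℕ}
lemma dependsOn_mono {F : Om n → ℝ} {I J : Finset (Fin n)} (h : DependsOn F I)
    (hIJ : I ⊆ J) : DependsOn F J := fun σ τ hst => h σ τ fun i hi => hst i (hIJ hi)
end MoreLemmas2

section GluedE4

set_option linter.unusedSectionVars false
set_option maxHeartbeats 1000000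

variable {ι : Type*} [Fintype ι] [DecidableEq ι] {n : ℕ}

def rmab (a b : ι) (P : Finset (Finset ι)) : Finset (Finset ι) :=
  (P.image (fun A => (A.erase a).erase b)).erase ∅

lemma notmem_of_erase {a : ι} {P : Finset (Finset ι)} (hsp : IsSetPartition P)
    {A₀ : Finset ι} (hA₀ : A₀ ∈ P) (ha : a ∈ A₀)
    {A : Finset ι} (hA : A ∈ P.erase A₀) : a ∉ A := fun hm =>
  Finset.ne_of_mem_erase hA (block_eq hsp (Finset.mem_of_mem_erase hA) hA₀ hm ha)

lemma rmab_glued {a b : ι} {P : Finset (Finset ι)} (hsp : IsSetPartition P)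
    {A₀ : Finset ι} (hA₀ : A₀ ∈ P) (ha : a ∈ A₀) (hb : b ∈ A₀) :
    rmab a b P = (insert ((A₀.erase a).erase b) (P.erase A₀)).erase ∅ := by
  unfold rmab
  conv_lhs => rw [(Finset.insert_erase hA₀).symm]
  rw [Finset.image_insert]
  have heq : ∀ A ∈ P.erase A₀, (A.erase a).erase b = A := by
    intro A hA
    rw [Finset.erase_eq_of_notMem (notmem_of_erase hsp hA₀ ha hA),
      Finset.erase_eq_of_notMem (notmem_of_erase hsp hA₀ hb hA)]
  have himg : (P.erase A₀).image (fun A => (A.erase a).erase b) = P.erase A₀ :=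
    calc (P.erase A₀).image (fun A => (A.erase a).erase b)
        = (P.erase A₀).image id := Finset.image_congr (fun A hA =>
          heq A (by simpa [Finset.mem_erase, and_comm] using hA))
      _ = P.erase A₀ := Finset.image_id
  rw [himg]

lemma sum_glued_const {a b : ι} (hab : a ≠ b) {x₀ : ι} (hxa : x₀ ≠ a) (hxb : x₀ ≠ b)
    (u v : ℝ) (ξ : ι → Om n → ℝ) (hξa : ξ a = fun _ => u) (hξb : ξ b = fun _ => v) :
    ∑ P ∈ Finset.univ.filter (fun P : Finset (Finset ι) =>
        IsSetPartition P ∧ ∃ A ∈ P, a ∈ A ∧ b ∈ A), termS n ξ P = 0 := by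
  rw [← Finset.sum_fiberwise_of_maps_to
    (fun P hP => Finset.mem_image_of_mem (rmab a b) hP) (termS n ξ)]
  refine Finset.sum_eq_zero fun ρ hρ => ?_
  obtain ⟨P₀, hP₀T, hP₀ρ⟩ := Finset.mem_image.mp hρ
  obtain ⟨hsp₀, A₀', hA₀', ha₀', hb₀'⟩ := (Finset.mem_filter.mp hP₀T).2
  -- properties of ρ
  have hρmem : ∀ B, B ∈ ρ ↔ (B ≠ ∅ ∧ ∃ A ∈ P₀, (A.erase a).erase b = B) := by
    intro B
    rw [← hP₀ρ]
    unfold rmab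
    constructor
    · intro h
      have h1 := Finset.mem_erase.mp h
      obtain ⟨A, hA, hAB⟩ := Finset.mem_image.mp h1.2
      exact ⟨h1.1, A, hA, hAB⟩
    · rintro ⟨hne, A, hA, hAB⟩
      exact Finset.mem_erase.mpr ⟨hne, Finset.mem_image.mpr ⟨A, hA, hAB⟩⟩
  have hρblocks : ∀ B ∈ ρ, B.Nonempty ∧ a ∉ B ∧ b ∉ B := by
    intro B hB
    obtain ⟨hne, A, -, hAB⟩ := (hρmem B).mp hB
    refine ⟨Finset.nonempty_iff_ne_empty.mpr hne, ?_, ?_⟩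
    · rw [← hAB]; intro hmem
      exact (Finset.ne_of_mem_erase (Finset.mem_of_mem_erase hmem)) rfl
    · rw [← hAB]; intro hmem
      exact (Finset.ne_of_mem_erase hmem) rfl
  have hρcover : ∀ x : ι, x ≠ a → x ≠ b → ∃! B, B ∈ ρ ∧ x ∈ B := by
    intro x hxa' hxb'
    obtain ⟨A, ⟨hAP, hxA⟩, hAu⟩ := hsp₀.2 x
    refine ⟨(A.erase a).erase b, ⟨(hρmem _).mpr ⟨?_, A, hAP, rfl⟩, ?_⟩, ?_⟩
    · intro hempty
      have : x ∈ (A.erase a).erase b := Finset.mem_erase.mpr ⟨hxb', Finset.mem_erase.mpr ⟨hxa', hxA⟩⟩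
      rw [hempty] at this; exact absurd this (Finset.notMem_empty x)
    · exact Finset.mem_erase.mpr ⟨hxb', Finset.mem_erase.mpr ⟨hxa', hxA⟩⟩
    · rintro B ⟨hBρ, hxB⟩
      obtain ⟨-, A', hA'P, hA'B⟩ := (hρmem B).mp hBρ
      have hxA' : x ∈ A' := by
        rw [← hA'B] at hxB
        exact Finset.mem_of_mem_erase (Finset.mem_of_mem_erase hxB)
      rw [← hA'B, hAu A' ⟨hA'P, hxA'⟩]
  have hρdisj : ∀ B ∈ ρ, ∀ B' ∈ ρ, ∀ x, x ∈ B → x ∈ B' → B = B' := by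
    intro B hB B' hB' x hxB hxB'
    have hxa' : x ≠ a := fun h => (hρblocks B hB).2.1 (h ▸ hxB)
    have hxb' : x ≠ b := fun h => (hρblocks B hB).2.2 (h ▸ hxB)
    obtain ⟨C, -, hCu⟩ := hρcover x hxa' hxb'
    rw [hCu B ⟨hB, hxB⟩, hCu B' ⟨hB', hxB'⟩]
  have hρempty : (∅ : Finset ι) ∉ ρ := fun h => by
    obtain ⟨⟨y, hy⟩, -, -⟩ := hρblocks ∅ h
    exact Finset.notMem_empty y hy
  have hρne : ρ.Nonempty := by
    obtain ⟨B, ⟨hB, -⟩, -⟩ := hρcover x₀ hxa hxb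
    exact ⟨B, hB⟩
  have hr1 : 1 ≤ ρ.card := Finset.card_pos.mpr hρne
  -- the two kinds of preimages
  set pairAB : Finset ι := insert a {b} with hpairAB
  have hapair : a ∈ pairAB := Finset.mem_insert_self a {b}
  have hbpair : b ∈ pairAB := Finset.mem_insert_of_mem (Finset.mem_singleton_self b)
  have hmempair : ∀ x, x ∈ pairAB ↔ x = a ∨ x = b := by
    intro x; simp [hpairAB]
  set Pe : Finset (Finset ι) := insert pairAB ρ with hPe
  set PB : Finset ι → Finset (Finset ι) :=
    fun B => insert (insert a (insert b B)) (ρ.erase B) with hPB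
  have hpairnotρ : pairAB ∉ ρ := fun h => (hρblocks pairAB h).2.1 hapair
  -- set partition facts
  have hspPe : IsSetPartition Pe := by
    constructor
    · intro A hA
      rcases Finset.mem_insert.mp hA with h | h
      · exact h ▸ ⟨a, hapair⟩
      · exact (hρblocks A h).1
    · intro x
      by_cases hx : x = a ∨ x = b
      · refine ⟨pairAB, ⟨Finset.mem_insert_self _ _, (hmempair x).mpr hx⟩, ?_⟩
        rintro A ⟨hA, hxA⟩
        rcases Finset.mem_insert.mp hA with h | h
        · exact h
        · exfalso
          rcases hx with rfl | rfl
          · exact (hρblocks A h).2.1 hxA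
          · exact (hρblocks A h).2.2 hxA
      · push_neg at hx
        obtain ⟨B, ⟨hBρ, hxB⟩, hBu⟩ := hρcover x hx.1 hx.2
        refine ⟨B, ⟨Finset.mem_insert_of_mem hBρ, hxB⟩, ?_⟩
        rintro A ⟨hA, hxA⟩
        rcases Finset.mem_insert.mp hA with h | h
        · exfalso
          rcases (hmempair x).mp (h ▸ hxA) with h' | h'
          · exact hx.1 h'
          · exact hx.2 h'
        · exact hBu A ⟨h, hxA⟩
  have hrmabPe : rmab a b Pe = ρ := by
    rw [rmab_glued hspPe (Finset.mem_insert_self _ _) hapair hbpair]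
    have h1 : (pairAB.erase a).erase b = ∅ := by
      rw [hpairAB, Finset.erase_insert (by simp [hab]), Finset.erase_singleton]
    have h2 : Pe.erase pairAB = ρ := by rw [hPe, Finset.erase_insert hpairnotρ]
    rw [h1, h2, Finset.erase_insert hρempty]
  have hstarnotmem : ∀ B, insert a (insert b B) ∉ ρ.erase B := fun B h =>
    (hρblocks _ (Finset.mem_of_mem_erase h)).2.1 (Finset.mem_insert_self a _)
  have hspPB : ∀ B ∈ ρ, IsSetPartition (PB B) := by
    intro B hBρ
    constructor
    · intro A hA
      rcases Finset.mem_insert.mp hA with h | h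
      · exact h ▸ ⟨a, Finset.mem_insert_self a _⟩
      · exact (hρblocks A (Finset.mem_of_mem_erase h)).1
    · intro x
      by_cases hx : x = a ∨ x = b
      · refine ⟨insert a (insert b B), ⟨Finset.mem_insert_self _ _, ?_⟩, ?_⟩
        · rcases hx with rfl | rfl
          · exact Finset.mem_insert_self _ _
          · exact Finset.mem_insert_of_mem (Finset.mem_insert_self _ _)
        · rintro A ⟨hA, hxA⟩
          rcases Finset.mem_insert.mp hA with h | h
          · exact h
          · exfalso
            rcases hx with rfl | rfl
            · exact (hρblocks A (Finset.mem_of_mem_erase h)).2.1 hxA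
            · exact (hρblocks A (Finset.mem_of_mem_erase h)).2.2 hxA
      · push_neg at hx
        obtain ⟨B', ⟨hB'ρ, hxB'⟩, hB'u⟩ := hρcover x hx.1 hx.2
        by_cases hBB : B' = B
        · subst hBB
          refine ⟨insert a (insert b B'), ⟨Finset.mem_insert_self _ _,
            Finset.mem_insert_of_mem (Finset.mem_insert_of_mem hxB')⟩, ?_⟩
          rintro A ⟨hA, hxA⟩
          rcases Finset.mem_insert.mp hA with h | h
          · exact h
          · exfalso
            have : A = B' := hρdisj A (Finset.mem_of_mem_erase h) B' hB'ρ x hxA hxB'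
            exact (Finset.ne_of_mem_erase h) this
        · refine ⟨B', ⟨Finset.mem_insert_of_mem (Finset.mem_erase.mpr ⟨hBB, hB'ρ⟩), hxB'⟩, ?_⟩
          rintro A ⟨hA, hxA⟩
          rcases Finset.mem_insert.mp hA with h | h
          · exfalso
            subst h
            rcases Finset.mem_insert.mp hxA with h' | h'
            · exact hx.1 h'
            rcases Finset.mem_insert.mp h' with h'' | h''
            · exact hx.2 h''
            · exact hBB (hB'u B ⟨hBρ, h''⟩).symm
          · exact hB'u A ⟨Finset.mem_of_mem_erase h, hxA⟩
  have hrmabPB : ∀ B ∈ ρ, rmab a b (PB B) = ρ := by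
    intro B hBρ
    have haB : a ∉ B := (hρblocks B hBρ).2.1
    have hbB : b ∉ B := (hρblocks B hBρ).2.2
    rw [rmab_glued (hspPB B hBρ) (Finset.mem_insert_self _ _)
      (Finset.mem_insert_self _ _) (Finset.mem_insert_of_mem (Finset.mem_insert_self _ _))]
    have h1 : ((insert a (insert b B)).erase a).erase b = B := by
      rw [Finset.erase_insert (by simp [hab, haB]), Finset.erase_insert hbB]
    have h2 : (PB B).erase (insert a (insert b B)) = ρ.erase B := by
      rw [hPB]; exact Finset.erase_insert (hstarnotmem B)
    rw [h1, h2, Finset.insert_erase hBρ, Finset.erase_eq_of_notMem hρempty]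
  -- fiber characterization
  have hfiber : (Finset.univ.filter (fun P : Finset (Finset ι) =>
        IsSetPartition P ∧ ∃ A ∈ P, a ∈ A ∧ b ∈ A)).filter (fun P => rmab a b P = ρ)
      = insert Pe (ρ.image PB) := by
    ext P
    simp only [Finset.mem_filter, Finset.mem_univ, true_and, Finset.mem_insert, Finset.mem_image]
    constructor
    · rintro ⟨⟨hsp, A₁, hA₁, ha₁, hb₁⟩, hrm⟩
      rw [rmab_glued hsp hA₁ ha₁ hb₁] at hrm
      have hemptyerase : (∅ : Finset ι) ∉ P.erase A₁ := fun h => by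
        obtain ⟨y, hy⟩ := hsp.1 ∅ (Finset.mem_of_mem_erase h)
        exact Finset.notMem_empty y hy
      by_cases hR : (A₁.erase a).erase b = ∅
      · left
        rw [hR, Finset.erase_insert hemptyerase] at hrm
        have hA₁eq : A₁ = pairAB := by
          ext x
          rw [hmempair x]
          constructor
          · intro hx
            by_contra hcon
            push_neg at hcon
            have : x ∈ (A₁.erase a).erase b :=
              Finset.mem_erase.mpr ⟨hcon.2, Finset.mem_erase.mpr ⟨hcon.1, hx⟩⟩
            rw [hR] at this
            exact Finset.notMem_empty x this
          · rintro (rfl | rfl)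
            · exact ha₁
            · exact hb₁
        rw [hPe, ← hrm, ← hA₁eq, Finset.insert_erase hA₁]
      · right
        have hZ : ρ = insert ((A₁.erase a).erase b) (P.erase A₁) := by
          rw [← hrm, Finset.erase_eq_of_notMem]
          simp only [Finset.mem_insert]
          rintro (h | h)
          · exact hR h.symm
          · exact hemptyerase h
        refine ⟨(A₁.erase a).erase b, by rw [hZ]; exact Finset.mem_insert_self _ _, ?_⟩
        have hA₁eq : insert a (insert b ((A₁.erase a).erase b)) = A₁ := by
          ext x
          simp only [Finset.mem_insert, Finset.mem_erase]
          constructor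
          · rintro (rfl | rfl | ⟨-, -, hx⟩)
            · exact ha₁
            · exact hb₁
            · exact hx
          · intro hx
            by_cases h1 : x = a
            · exact Or.inl h1
            by_cases h2 : x = b
            · exact Or.inr (Or.inl h2)
            · exact Or.inr (Or.inr ⟨h2, h1, hx⟩)
        have hErase : ρ.erase ((A₁.erase a).erase b) = P.erase A₁ := by
          rw [hZ]
          refine Finset.erase_insert ?_
          intro hcon
          obtain ⟨y, hy⟩ := Finset.nonempty_iff_ne_empty.mpr hR
          have hyA₁ : y ∈ A₁ := Finset.mem_of_mem_erase (Finset.mem_of_mem_erase hy)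
          exact (Finset.ne_of_mem_erase hcon)
            (block_eq hsp (Finset.mem_of_mem_erase hcon) hA₁ hy hyA₁)
        rw [hPB]
        simp only
        rw [hA₁eq, hErase, Finset.insert_erase hA₁]
    · rintro (rfl | ⟨B, hBρ, rfl⟩)
      · exact ⟨⟨hspPe, pairAB, Finset.mem_insert_self _ _, hapair, hbpair⟩, hrmabPe⟩
      · exact ⟨⟨hspPB B hBρ, insert a (insert b B), Finset.mem_insert_self _ _,
          Finset.mem_insert_self _ _,
          Finset.mem_insert_of_mem (Finset.mem_insert_self _ _)⟩, hrmabPB B hBρ⟩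
  rw [hfiber]
  -- now compute the sum
  have hPenotim : Pe ∉ ρ.image PB := by
    rintro h
    obtain ⟨B, hBρ, hBPe⟩ := Finset.mem_image.mp h
    have hpairmem : pairAB ∈ PB B := by rw [hBPe]; exact Finset.mem_insert_self _ _
    rcases Finset.mem_insert.mp hpairmem with h' | h'
    · obtain ⟨y, hy⟩ := (hρblocks B hBρ).1
      have : y ∈ pairAB := by
        rw [h']
        exact Finset.mem_insert_of_mem (Finset.mem_insert_of_mem hy)
      rcases (hmempair y).mp this with rfl | rfl
      · exact (hρblocks B hBρ).2.1 hy
      · exact (hρblocks B hBρ).2.2 hy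
    · exact (hρblocks pairAB (Finset.mem_of_mem_erase h')).2.1 hapair
  have hPBinj : ∀ B ∈ ρ, ∀ B' ∈ ρ, PB B = PB B' → B = B' := by
    intro B hB B' hB' heq
    have hmem : insert a (insert b B) ∈ PB B' := by
      rw [← heq]; exact Finset.mem_insert_self _ _
    rcases Finset.mem_insert.mp hmem with h | h
    · ext x
      constructor
      · intro hx
        have hxa' : x ≠ a := fun hc => (hρblocks B hB).2.1 (hc ▸ hx)
        have hxb' : x ≠ b := fun hc => (hρblocks B hB).2.2 (hc ▸ hx)
        have : x ∈ insert a (insert b B') := h ▸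
          (Finset.mem_insert_of_mem (Finset.mem_insert_of_mem hx))
        rcases Finset.mem_insert.mp this with h' | h'
        · exact absurd h' hxa'
        rcases Finset.mem_insert.mp h' with h'' | h''
        · exact absurd h'' hxb'
        · exact h''
      · intro hx
        have hxa' : x ≠ a := fun hc => (hρblocks B' hB').2.1 (hc ▸ hx)
        have hxb' : x ≠ b := fun hc => (hρblocks B' hB').2.2 (hc ▸ hx)
        have : x ∈ insert a (insert b B) := h.symm ▸
          (Finset.mem_insert_of_mem (Finset.mem_insert_of_mem hx))
        rcases Finset.mem_insert.mp this with h' | h'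
        · exact absurd h' hxa'
        rcases Finset.mem_insert.mp h' with h'' | h''
        · exact absurd h'' hxb'
        · exact h''
    · exact absurd (Finset.mem_of_mem_erase h)
        (fun hc => (hρblocks _ hc).2.1 (Finset.mem_insert_self a _))
  rw [Finset.sum_insert hPenotim, Finset.sum_image (fun B hB B' hB' => hPBinj B hB B' hB')]
  -- values
  set Pi : ℝ := ∏ B ∈ ρ, (blockS n ξ B / cardP n) with hPi
  have hblockpair : blockS n ξ pairAB / cardP n = u * v := by
    have hval : blockS n ξ pairAB = cardP n * (u * v) := by
      unfold blockS
      have hprod : ∀ σ : Om n, ∏ i ∈ pairAB, ξ i σ = u * v := fun σ => by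
        rw [hpairAB, Finset.prod_insert (by simp [hab]), Finset.prod_singleton, hξa, hξb]
      rw [Finset.sum_congr rfl fun σ _ => hprod σ, Finset.sum_const, Finset.card_univ,
        nsmul_eq_mul]
      rfl
    rw [hval, mul_div_cancel_left₀ _ (cardP_ne n)]
  have hcardPe : Pe.card = ρ.card + 1 := by
    rw [hPe, Finset.card_insert_of_notMem hpairnotρ]
  have htermPe : termS n ξ Pe
      = (-1 : ℝ) ^ ρ.card * (Nat.factorial ρ.card : ℝ) * (u * v * Pi) := by
    unfold termS
    rw [hcardPe, Nat.add_sub_cancel, hPe, Finset.prod_insert hpairnotρ]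
    rw [hblockpair, ← hPi]
  have htermPB : ∀ B ∈ ρ, termS n ξ (PB B)
      = (-1 : ℝ) ^ (ρ.card - 1) * (Nat.factorial (ρ.card - 1) : ℝ) * (u * v * Pi) := by
    intro B hBρ
    have haB : a ∉ B := (hρblocks B hBρ).2.1
    have hbB : b ∉ B := (hρblocks B hBρ).2.2
    have hcard : (PB B).card = ρ.card := by
      rw [hPB]
      simp only
      rw [Finset.card_insert_of_notMem (hstarnotmem B), Finset.card_erase_of_mem hBρ,
        Nat.sub_add_cancel hr1]
    have hblockstar : blockS n ξ (insert a (insert b B)) = u * v * blockS n ξ B := by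
      have hua : ∀ σ : Om n, ξ a σ = u := fun σ => by rw [hξa]
      have hvb : ∀ σ : Om n, ξ b σ = v := fun σ => by rw [hξb]
      unfold blockS
      rw [Finset.mul_sum]
      refine Finset.sum_congr rfl fun σ _ => ?_
      rw [Finset.prod_insert (by simp [hab, haB]), Finset.prod_insert hbB, hua σ, hvb σ]
      ring
    unfold termS
    rw [hcard, hPB]
    simp only
    rw [Finset.prod_insert (hstarnotmem B), hblockstar, hPi,
      ← Finset.mul_prod_erase ρ (fun A => blockS n ξ A / cardP n) hBρ]
    ring
  rw [htermPe, Finset.sum_congr rfl htermPB, Finset.sum_const, nsmul_eq_mul]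
  obtain ⟨r', hr'⟩ : ∃ r', ρ.card = r' + 1 := ⟨ρ.card - 1, (Nat.succ_pred_eq_of_pos hr1).symm⟩
  rw [hr', Nat.add_sub_cancel, pow_succ, Nat.factorial_succ]
  push_cast
  ring

end GluedE4

section Bound

set_option linter.unusedSectionVars false

variable {ι : Type*} [Fintype ι] [DecidableEq ι] {n : ℕ}

lemma prod_partition {P : Finset (Finset ι)} (hP : IsSetPartition P) (M : ι → ℝ) :
    ∏ A ∈ P, ∏ i ∈ A, M i = ∏ i : ι, M i := by
  have hd : Set.PairwiseDisjoint (↑P : Set (Finset ι)) (id : Finset ι → Finset ι) := by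
    intro A hA B hB hne
    simp only [Function.onFun, id_eq]
    rw [Finset.disjoint_left]
    intro x hxA hxB
    exact hne (block_eq hP (by simpa using hA) (by simpa using hB) hxA hxB)
  have hb : P.biUnion id = Finset.univ := by
    ext x
    simp only [Finset.mem_biUnion, Finset.mem_univ, iff_true, id_eq]
    obtain ⟨A, hA, hxA⟩ := exists_block hP x
    exact ⟨A, hA, hxA⟩
  calc ∏ A ∈ P, ∏ i ∈ A, M i = ∏ A ∈ P, ∏ i ∈ id A, M i := rfl
    _ = ∏ i ∈ P.biUnion id, M i := (Finset.prod_biUnion hd).symm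
    _ = ∏ i : ι, M i := by rw [hb]

lemma abs_termS_le {ξ : ι → Om n → ℝ} {P : Finset (Finset ι)} (hP : IsSetPartition P)
    (M : ι → ℝ) (hM : ∀ i, 0 ≤ M i) (hξ : ∀ i σ, |ξ i σ| ≤ M i) :
    |termS n ξ P| ≤ (Nat.factorial (2 ^ Fintype.card ι) : ℝ) * ∏ i : ι, M i := by
  have hMprod : (0:ℝ) ≤ ∏ i : ι, M i := Finset.prod_nonneg fun i _ => hM i
  unfold termS
  rw [abs_mul, abs_mul, abs_pow, abs_neg, abs_one, one_pow, one_mul]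
  have hfact : |((Nat.factorial (P.card - 1) : ℝ))| ≤ (Nat.factorial (2 ^ Fintype.card ι) : ℝ) := by
    rw [abs_of_nonneg (by positivity)]
    have h1 : P.card ≤ 2 ^ Fintype.card ι := by
      calc P.card ≤ Fintype.card (Finset ι) := Finset.card_le_univ P
        _ = 2 ^ Fintype.card ι := Fintype.card_finset
    exact_mod_cast Nat.factorial_le (le_trans (Nat.sub_le _ _) h1)
  have hprod : |∏ A ∈ P, (blockS n ξ A / cardP n)| ≤ ∏ i : ι, M i := by
    rw [Finset.abs_prod]
    calc ∏ A ∈ P, |blockS n ξ A / cardP n| ≤ ∏ A ∈ P, ∏ i ∈ A, M i := by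
          refine Finset.prod_le_prod (fun A _ => abs_nonneg _) fun A hA => ?_
          rw [abs_div, abs_of_pos (cardP_pos n), div_le_iff₀ (cardP_pos n)]
          calc |blockS n ξ A| ≤ ∑ σ : Om n, ∏ i ∈ A, M i := by
                refine (Finset.abs_sum_le_sum_abs _ _).trans ?_
                refine Finset.sum_le_sum fun σ _ => ?_
                rw [Finset.abs_prod]
                exact Finset.prod_le_prod (fun i _ => abs_nonneg _) fun i _ => hξ i σ
            _ = (∏ i ∈ A, M i) * cardP n := by
                rw [Finset.sum_const, Finset.card_univ, nsmul_eq_mul, mul_comm]; rfl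
      _ = ∏ i : ι, M i := prod_partition hP M
  exact mul_le_mul hfact hprod (abs_nonneg _) (by positivity)

def KK (ι : Type*) [Fintype ι] : ℝ :=
  (2 ^ (2 ^ Fintype.card ι) : ℝ) * (Nat.factorial (2 ^ Fintype.card ι) : ℝ)
    * 4 ^ (Fintype.card ι)

lemma KK_nonneg (ι : Type*) [Fintype ι] : 0 ≤ KK ι := by unfold KK; positivity

lemma abs_sum_termS_le (T : Finset (Finset (Finset ι))) (hT : ∀ P ∈ T, IsSetPartition P)
    {ξ : ι → Om n → ℝ} (hξ : ∀ i σ, |ξ i σ| ≤ 4) :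
    |∑ P ∈ T, termS n ξ P| ≤ KK ι := by
  have h4 : ∏ i : ι, (4:ℝ) = 4 ^ Fintype.card ι := by
    rw [Finset.prod_const, Finset.card_univ]
  calc |∑ P ∈ T, termS n ξ P| ≤ ∑ P ∈ T, |termS n ξ P| := Finset.abs_sum_le_sum_abs _ _
    _ ≤ ∑ P ∈ T, (Nat.factorial (2 ^ Fintype.card ι) : ℝ) * ∏ i : ι, (4:ℝ) :=
        Finset.sum_le_sum fun P hP =>
          abs_termS_le (hT P hP) (fun _ => (4:ℝ)) (fun _ => by norm_num) hξ
    _ = T.card * ((Nat.factorial (2 ^ Fintype.card ι) : ℝ) * ∏ i : ι, (4:ℝ)) := by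
        rw [Finset.sum_const, nsmul_eq_mul]
    _ ≤ (2 ^ (2 ^ Fintype.card ι) : ℝ) * ((Nat.factorial (2 ^ Fintype.card ι) : ℝ)
          * ∏ i : ι, (4:ℝ)) := by
        refine mul_le_mul_of_nonneg_right ?_ (by positivity)
        have h1 : T.card ≤ 2 ^ (2 ^ Fintype.card ι) := by
          calc T.card ≤ Fintype.card (Finset (Finset ι)) := Finset.card_le_univ T
            _ = 2 ^ Fintype.card (Finset ι) := Fintype.card_finset
            _ = 2 ^ (2 ^ Fintype.card ι) := by rw [Fintype.card_finset]
        exact_mod_cast h1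
    _ = KK ι := by rw [h4, KK]; ring

end Bound

section RepeatedBound

set_option linter.unusedSectionVars false
set_option maxHeartbeats 1000000

variable {ι : Type*} [Fintype ι] [DecidableEq ι]

lemma bound_repeated {a b x₀ : ι} (hab : a ≠ b) (hxa : x₀ ≠ a) (hxb : x₀ ≠ b)
    {n : ℕ} (hn2 : 2 ≤ n) {L : Finset (Fin n)} {j : Fin n} (hjL : j ∉ L)
    (hLn : 2 * (L.card + 2) ≤ n)
    {ξ : ι → Om n → ℝ}
    (hξa : ξ a = fun σ => zval n (σ j)) (hξb : ξ b = fun σ => zval n (σ j))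
    (hdep : ∀ β, β ≠ a → β ≠ b → DependsOn (ξ β) L)
    (hbdd : ∀ β, β ≠ a → β ≠ b → ∀ σ, |ξ β σ| ≤ 2) :
    |∑ P ∈ Finset.univ.filter (fun P : Finset (Finset ι) => IsSetPartition P), termS n ξ P|
      ≤ 16 * ((L.card : ℝ) + 1) ^ 2 * KK ι / n := by
  classical
  have hz2 : ∀ q : Fin n, |zval n q| ≤ 2 := abs_zval_le hn2
  have hn2' : (2:ℝ) ≤ (n:ℝ) := by exact_mod_cast hn2
  have hnpos : (0:ℝ) < (n:ℝ) := by linarith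
  have hmn : 2 * ((L.card : ℝ) + 2) ≤ (n:ℝ) := by exact_mod_cast hLn
  set m : ℝ := (L.card : ℝ) with hmdef
  have hm0 : 0 ≤ m := by rw [hmdef]; positivity
  set c0 : ℝ := (n:ℝ) - (L.card : ℝ) with hc0def
  have hc0 : (n:ℝ)/2 ≤ c0 := by rw [hc0def]; linarith
  have hc0pos : (0:ℝ) < c0 := by linarith
  have hKK := KK_nonneg ι
  set T₀ := Finset.univ.filter (fun P : Finset (Finset ι) => IsSetPartition P) with hT₀def
  have hT₀ : ∀ P ∈ T₀, IsSetPartition P := fun P hP => (Finset.mem_filter.mp hP).2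
  set Tg := Finset.univ.filter (fun P : Finset (Finset ι) =>
    IsSetPartition P ∧ ∃ A ∈ P, a ∈ A ∧ b ∈ A) with hTgdef
  have hTg : ∀ P ∈ Tg, IsSetPartition P := fun P hP => (Finset.mem_filter.mp hP).2.1
  -- dependency helper for updated families
  have hdepupd : ∀ (f : Om n → ℝ), DependsOn f L →
      ∀ β, β ≠ b → DependsOn ((Function.update ξ a f) β) L := by
    intro f hf β hβb
    by_cases hβa : β = a
    · subst hβa; rw [Function.update_self]; exact hf
    · rw [Function.update_of_ne hβa]; exact hdep β hβa hβb
  -- boundedness helper for doubly updated families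
  have hbdd2 : ∀ (f g : Om n → ℝ), (∀ σ, |f σ| ≤ 4) → (∀ σ, |g σ| ≤ 4) →
      ∀ i σ, |Function.update (Function.update ξ a f) b g i σ| ≤ 4 := by
    intro f g hf hg i σ
    by_cases hib : i = b
    · subst hib; rw [Function.update_self]; exact hg σ
    · rw [Function.update_of_ne hib]
      by_cases hia : i = a
      · subst hia; rw [Function.update_self]; exact hf σ
      · rw [Function.update_of_ne hia]; exact le_trans (hbdd i hia hib σ) (by norm_num)
  -- Step (I) : bound for κ_i, i ∈ L
  have hkappai : ∀ i ∈ L,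
      |∑ P ∈ T₀, termS n (Function.update ξ a (fun σ => zval n (σ i))) P|
        ≤ m * KK ι / c0 := by
    intro i hi
    set ζ := Function.update ξ a (fun σ : Om n => zval n (σ i)) with hζdef
    have hζb : ζ b = fun σ : Om n => zval n (σ j) := by
      rw [hζdef, Function.update_of_ne hab.symm, hξb]
    have hζself : ζ = Function.update ζ b (fun σ : Om n => zval n (σ j)) := by
      rw [← hζb, Function.update_eq_self]
    have hdepζ : ∀ β, β ≠ b → DependsOn (ζ β) L :=
      hdepupd _ (dependsOn_coord hi (zval n))
    have hrep := sum_termS_replace1 T₀ hT₀ ζ b L j hjL hdepζ (zval n)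
    rw [sum_zval n, zero_mul, zero_sub, ← hζself, ← hc0def] at hrep
    have habs : ∀ i' ∈ L,
        |∑ P ∈ T₀, termS n (Function.update ζ b (fun σ => zval n (σ i'))) P| ≤ KK ι := by
      intro i' _
      refine abs_sum_termS_le T₀ hT₀ ?_
      rw [hζdef]
      exact hbdd2 _ _ (fun σ => (hz2 _).trans (by norm_num))
        (fun σ => (hz2 _).trans (by norm_num))
    have h2 : |∑ i' ∈ L, ∑ P ∈ T₀,
        termS n (Function.update ζ b (fun σ => zval n (σ i'))) P| ≤ m * KK ι := by
      refine (Finset.abs_sum_le_sum_abs _ _).trans ?_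
      calc ∑ i' ∈ L, |∑ P ∈ T₀, termS n (Function.update ζ b (fun σ => zval n (σ i'))) P|
          ≤ L.card • KK ι := Finset.sum_le_card_nsmul L _ (KK ι) habs
        _ = m * KK ι := by rw [nsmul_eq_mul, hmdef]
    have h3 : |c0 * ∑ P ∈ T₀, termS n ζ P| ≤ m * KK ι := by rw [hrep, abs_neg]; exact h2
    rw [abs_mul, abs_of_pos hc0pos] at h3
    rw [le_div_iff₀ hc0pos]
    linarith
  -- Step (II) : first term
  set A' : Om n → ℝ := fun σ => -(c0)⁻¹ * ∑ i ∈ L, zval n (σ i) with hA'def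
  have hTermI : |∑ P ∈ T₀, termS n (Function.update ξ a A') P|
      ≤ m * (m * KK ι / c0) / c0 := by
    have hcomb := sum_termS_slot_comb hT₀ ξ a (-(c0)⁻¹) L
      (fun (i : Fin n) (σ : Om n) => zval n (σ i))
    rw [hA'def]
    rw [hcomb]
    rw [abs_mul, abs_neg, abs_inv, abs_of_pos hc0pos]
    have h2 : |∑ i ∈ L, ∑ P ∈ T₀,
        termS n (Function.update ξ a (fun σ => zval n (σ i))) P| ≤ m * (m * KK ι / c0) := by
      refine (Finset.abs_sum_le_sum_abs _ _).trans ?_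
      calc ∑ i ∈ L, |∑ P ∈ T₀, termS n (Function.update ξ a (fun σ => zval n (σ i))) P|
          ≤ L.card • (m * KK ι / c0) := Finset.sum_le_card_nsmul L _ _ hkappai
        _ = m * (m * KK ι / c0) := by rw [nsmul_eq_mul, hmdef]
    calc (c0)⁻¹ * |∑ i ∈ L, ∑ P ∈ T₀,
            termS n (Function.update ξ a (fun σ => zval n (σ i))) P|
        ≤ (c0)⁻¹ * (m * (m * KK ι / c0)) :=
          mul_le_mul_of_nonneg_left h2 (by positivity)
      _ = m * (m * KK ι / c0) / c0 := by ring
  -- Step (III): B and centering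
  set B : Om n → ℝ := fun σ => zval n (σ j) + (c0)⁻¹ * ∑ i ∈ L, zval n (σ i) with hBdef
  have hsplitfam : ξ = Function.update ξ a (fun σ => A' σ + B σ) := by
    have h : (fun σ : Om n => A' σ + B σ) = ξ a := by
      rw [hξa]; funext σ; simp only [hA'def, hBdef]; ring
    rw [h, Function.update_eq_self]
  have hstep1 : ∑ P ∈ T₀, termS n ξ P
      = (∑ P ∈ T₀, termS n (Function.update ξ a A') P)
        + ∑ P ∈ T₀, termS n (Function.update ξ a B) P := by
    rw [← Finset.sum_add_distrib]
    conv_lhs => rw [hsplitfam]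
    exact Finset.sum_congr rfl fun P hP => termS_update_add (hT₀ P hP) a A' B
  have hcent : ∀ A : Finset ι, a ∈ A → b ∉ A → blockS n (Function.update ξ a B) A = 0 := by
    intro A haA hbA
    have hexp : blockS n (Function.update ξ a B) A
        = ∑ σ : Om n, B σ * ∏ i ∈ A.erase a, ξ i σ :=
      Finset.sum_congr rfl fun σ _ => prod_update_of_mem haA B σ
    have hFdep : DependsOn (fun σ => ∏ i ∈ A.erase a, ξ i σ) L := by
      refine dependsOn_prod fun i hi => ?_
      have hia : i ≠ a := Finset.ne_of_mem_erase hi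
      have hib : i ≠ b := fun h => hbA (h ▸ Finset.mem_of_mem_erase hi)
      exact hdep i hia hib
    have key := key_identity L j hjL _ hFdep (zval n)
    rw [sum_zval n, zero_mul, zero_sub, ← hc0def] at key
    have hpt : ∀ σ : Om n, B σ * ∏ i ∈ A.erase a, ξ i σ
        = (∏ i ∈ A.erase a, ξ i σ) * zval n (σ j)
          + ∑ i ∈ L, (c0)⁻¹ * ((∏ i' ∈ A.erase a, ξ i' σ) * zval n (σ i)) := by
      intro σ
      have hsm : (∑ i ∈ L, zval n (σ i)) * (∏ i' ∈ A.erase a, ξ i' σ)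
          = ∑ i ∈ L, (∏ i' ∈ A.erase a, ξ i' σ) * zval n (σ i) := by
        rw [Finset.sum_mul]
        exact Finset.sum_congr rfl fun i _ => mul_comm _ _
      simp only [hBdef]
      rw [← Finset.mul_sum]
      linear_combination (c0)⁻¹ * hsm
    have hexpand : ∑ σ : Om n, B σ * ∏ i ∈ A.erase a, ξ i σ
        = (∑ σ : Om n, (∏ i ∈ A.erase a, ξ i σ) * zval n (σ j))
          + (c0)⁻¹ * ∑ i ∈ L, ∑ σ : Om n, (∏ i' ∈ A.erase a, ξ i' σ) * zval n (σ i) := by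
      rw [Finset.sum_congr rfl fun σ _ => hpt σ, Finset.sum_add_distrib]
      congr 1
      rw [Finset.sum_comm, Finset.mul_sum]
      exact Finset.sum_congr rfl fun i _ => (Finset.mul_sum _ _ _).symm
    have hkey2 : ∑ σ : Om n, (∏ i ∈ A.erase a, ξ i σ) * zval n (σ j)
        = -(c0)⁻¹ * ∑ i ∈ L, ∑ σ : Om n, (∏ i' ∈ A.erase a, ξ i' σ) * zval n (σ i) := by
      have hc0ne : c0 ≠ 0 := ne_of_gt hc0pos
      field_simp
      linarith [key]
    rw [hexp, hexpand, hkey2]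
    ring
  -- Step (IV): restriction to glued partitions and the pair trick
  set Th : ι → Om n → ℝ :=
    Function.update (Function.update ξ a B) a (fun _ => (1:ℝ)) with hThdef
  have hrestrict : ∑ P ∈ T₀, termS n (Function.update ξ a B) P
      = ∑ P ∈ Tg, termS n (Function.update ξ a B) P := by
    rw [hT₀def, hTgdef]
    exact sum_termS_restrict hcent
  have hpair : ∑ P ∈ Tg, termS n (Function.update ξ a B) P
      = ∑ P ∈ Tg, termS n (Function.update Th b (fun σ => B σ * zval n (σ j))) P := by
    refine Finset.sum_congr rfl fun P hP => ?_
    obtain ⟨A₀, hA₀, ha₀, hb₀⟩ := (Finset.mem_filter.mp hP).2.2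
    rw [termS_pair (hTg P hP) hab hA₀ ha₀ hb₀ (ξ := Function.update ξ a B), ← hThdef]
    refine termS_congr_update b fun σ => ?_
    rw [Function.update_self, Function.update_of_ne hab.symm, hξb]
  have hWsplit : ∑ P ∈ Tg, termS n (Function.update Th b (fun σ => B σ * zval n (σ j))) P
      = (∑ P ∈ Tg, termS n (Function.update Th b
            (fun σ => zval n (σ j) * zval n (σ j))) P)
        + ∑ P ∈ Tg, termS n (Function.update Th b
            (fun σ => (c0)⁻¹ * ∑ i ∈ L, zval n (σ i) * zval n (σ j))) P := by
    rw [← Finset.sum_add_distrib]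
    refine Finset.sum_congr rfl fun P hP => ?_
    have hWeq : ∀ σ : Om n, B σ * zval n (σ j)
        = (fun σ' : Om n => zval n (σ' j) * zval n (σ' j)) σ
          + (fun σ' : Om n => (c0)⁻¹ * ∑ i ∈ L, zval n (σ' i) * zval n (σ' j)) σ := by
      intro σ
      simp only [hBdef]
      linear_combination (c0)⁻¹ * (Finset.sum_mul L (fun i => zval n (σ i)) (zval n (σ j)))
    rw [termS_congr_update b hWeq, termS_update_add (hTg P hP) b]
  -- helpers for the Th family
  have hbddTh : ∀ (f : Om n → ℝ), (∀ σ, |f σ| ≤ 4) →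
      ∀ i σ, |Function.update Th b f i σ| ≤ 4 := by
    intro f hf i σ
    by_cases hib : i = b
    · subst hib; rw [Function.update_self]; exact hf σ
    · rw [Function.update_of_ne hib]
      by_cases hia : i = a
      · subst hia; rw [hThdef, Function.update_self]; norm_num
      · rw [hThdef, Function.update_of_ne hia, Function.update_of_ne hia]
        exact le_trans (hbdd i hia hib σ) (by norm_num)
  have hdepTh : ∀ β, β ≠ b → DependsOn (Th β) L := by
    intro β hβb
    by_cases hβa : β = a
    · subst hβa; rw [hThdef, Function.update_self]; exact dependsOn_const 1 L
    · rw [hThdef, Function.update_of_ne hβa, Function.update_of_ne hβa]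
      exact hdep β hβa hβb
  have hzz4 : ∀ (v w : Fin n) (σ : Om n), |zval n (σ v) * zval n (σ w)| ≤ 4 := by
    intro v w σ
    rw [abs_mul]
    calc |zval n (σ v)| * |zval n (σ w)| ≤ 2 * 2 :=
          mul_le_mul (hz2 _) (hz2 _) (abs_nonneg _) (by norm_num)
      _ = 4 := by norm_num
  -- Step (V): second piece bound
  have hR2 : |∑ P ∈ Tg, termS n (Function.update Th b
        (fun σ => (c0)⁻¹ * ∑ i ∈ L, zval n (σ i) * zval n (σ j))) P|
      ≤ (c0)⁻¹ * (m * KK ι) := by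
    have hcomb := sum_termS_slot_comb hTg Th b ((c0)⁻¹) L
      (fun (i : Fin n) (σ : Om n) => zval n (σ i) * zval n (σ j))
    rw [hcomb, abs_mul, abs_inv, abs_of_pos hc0pos]
    refine mul_le_mul_of_nonneg_left ?_ (by positivity)
    refine (Finset.abs_sum_le_sum_abs _ _).trans ?_
    calc ∑ i ∈ L, |∑ P ∈ Tg, termS n (Function.update Th b
            (fun σ => zval n (σ i) * zval n (σ j))) P|
        ≤ L.card • KK ι := Finset.sum_le_card_nsmul L _ (KK ι) (fun i _ =>
          abs_sum_termS_le Tg hTg (hbddTh _ (fun σ => hzz4 i j σ)))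
      _ = m * KK ι := by rw [nsmul_eq_mul, hmdef]
  -- Step (VI): square piece bound via replacement and the glued-constant vanishing
  have hRsq : |∑ P ∈ Tg, termS n (Function.update Th b
        (fun σ => zval n (σ j) * zval n (σ j))) P| ≤ m * KK ι / c0 := by
    have hrep := sum_termS_replace1 Tg hTg Th b L j hjL hdepTh
      (fun q => zval n q * zval n q)
    rw [← hc0def] at hrep
    have hzero : ∑ P ∈ Tg, termS n (Function.update Th b (fun _ => (1:ℝ))) P = 0 := by
      rw [hTgdef]
      refine sum_glued_const hab hxa hxb 1 1 _ ?_ ?_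
      · rw [Function.update_of_ne hab, hThdef, Function.update_self]
      · rw [Function.update_self]
    rw [hzero, mul_zero, zero_sub] at hrep
    have h2 : |∑ i ∈ L, ∑ P ∈ Tg, termS n (Function.update Th b
        (fun σ => zval n (σ i) * zval n (σ i))) P| ≤ m * KK ι := by
      refine (Finset.abs_sum_le_sum_abs _ _).trans ?_
      calc ∑ i ∈ L, |∑ P ∈ Tg, termS n (Function.update Th b
              (fun σ => zval n (σ i) * zval n (σ i))) P|
          ≤ L.card • KK ι := Finset.sum_le_card_nsmul L _ (KK ι) (fun i _ =>
            abs_sum_termS_le Tg hTg (hbddTh _ (fun σ => hzz4 i i σ)))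
        _ = m * KK ι := by rw [nsmul_eq_mul, hmdef]
    have h3 : |c0 * ∑ P ∈ Tg, termS n (Function.update Th b
        (fun σ => zval n (σ j) * zval n (σ j))) P| ≤ m * KK ι := by
      rw [hrep, abs_neg]; exact h2
    rw [abs_mul, abs_of_pos hc0pos] at h3
    rw [le_div_iff₀ hc0pos]
    linarith
  -- Step (VII): conclusion
  have hsum3 : |∑ P ∈ T₀, termS n ξ P|
      ≤ m * (m * KK ι / c0) / c0 + (m * KK ι / c0 + (c0)⁻¹ * (m * KK ι)) := by
    rw [hstep1, hrestrict, hpair, hWsplit]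
    refine le_trans (abs_add_le _ _) ?_
    have h4 := abs_add_le (∑ P ∈ Tg, termS n (Function.update Th b
        (fun σ => zval n (σ j) * zval n (σ j))) P)
      (∑ P ∈ Tg, termS n (Function.update Th b
        (fun σ => (c0)⁻¹ * ∑ i ∈ L, zval n (σ i) * zval n (σ j))) P)
    linarith [hTermI, hRsq, hR2]
  refine hsum3.trans ?_
  have hc0ne : c0 ≠ 0 := ne_of_gt hc0pos
  have h1 : m * (m * KK ι / c0) / c0 = (m * m * KK ι) / (c0 * c0) := by
    field_simp
  have h2 : (c0)⁻¹ * (m * KK ι) = (m * KK ι) / c0 := (div_eq_inv_mul _ _).symm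
  rw [h1, h2]
  have hb1 : (m * m * KK ι) / (c0 * c0) ≤ 4 * (m * m * KK ι) / n := by
    rw [div_le_div_iff₀ (by positivity) hnpos]
    have hx : (0:ℝ) ≤ m * m * KK ι := mul_nonneg (mul_nonneg hm0 hm0) hKK
    have h4 : (n:ℝ) * (n:ℝ) ≤ 4 * (c0 * c0) := by nlinarith [hc0, hnpos]
    have h5 : (n:ℝ) ≤ (n:ℝ) * (n:ℝ) := by nlinarith [hn2']
    calc m * m * KK ι * n ≤ m * m * KK ι * ((n:ℝ) * (n:ℝ)) :=
          mul_le_mul_of_nonneg_left h5 hx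
      _ ≤ m * m * KK ι * (4 * (c0 * c0)) := mul_le_mul_of_nonneg_left h4 hx
      _ = 4 * (m * m * KK ι) * (c0 * c0) := by ring
  have hb2 : (m * KK ι) / c0 ≤ 2 * (m * KK ι) / n := by
    rw [div_le_div_iff₀ hc0pos hnpos]
    have hx : (0:ℝ) ≤ m * KK ι := mul_nonneg hm0 hKK
    have h4 : (n:ℝ) ≤ 2 * c0 := by linarith
    calc m * KK ι * n ≤ m * KK ι * (2 * c0) := mul_le_mul_of_nonneg_left h4 hx
      _ = 2 * (m * KK ι) * c0 := by ring
  calc (m * m * KK ι) / (c0 * c0) + (m * KK ι / c0 + (m * KK ι) / c0)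
      ≤ 4 * (m * m * KK ι) / n + (2 * (m * KK ι) / n + 2 * (m * KK ι) / n) := by
        linarith
    _ = (4 * (m * m * KK ι) + 2 * (m * KK ι) + 2 * (m * KK ι)) / n := by ring
    _ ≤ 16 * (m + 1) ^ 2 * KK ι / n := by
        gcongr
        nlinarith [mul_nonneg hm0 hKK, mul_nonneg (mul_nonneg hm0 hm0) hKK, hKK]

end RepeatedBound

section DistinctBound

set_option linter.unusedSectionVars false
set_option maxHeartbeats 1000000

variable {ι : Type*} [Fintype ι] [DecidableEq ι]

lemma bound_distinct {a b x₀ : ι} (hab : a ≠ b) (hxa : x₀ ≠ a) (hxb : x₀ ≠ b)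
    {n : ℕ} (hn2 : 2 ≤ n) {L : Finset (Fin n)} {h0 h1 : Fin n}
    (hne : h0 ≠ h1) (hh0 : h0 ∉ L) (hh1 : h1 ∉ L)
    (hLn : 2 * (L.card + 3) ≤ n)
    {ξ : ι → Om n → ℝ}
    (hξa : ξ a = fun σ => zval n (σ h0)) (hξb : ξ b = fun σ => zval n (σ h1))
    (hdep : ∀ β, β ≠ a → β ≠ b → DependsOn (ξ β) L)
    (hbdd : ∀ β, β ≠ a → β ≠ b → ∀ σ, |ξ β σ| ≤ 2) :
    |∑ P ∈ Finset.univ.filter (fun P : Finset (Finset ι) => IsSetPartition P), termS n ξ P|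
      ≤ 80 * ((L.card : ℝ) + 2) ^ 3 * KK ι / ((n : ℝ) * n) := by
  classical
  have hz2 : ∀ q : Fin n, |zval n q| ≤ 2 := abs_zval_le hn2
  have hn2' : (2:ℝ) ≤ (n:ℝ) := by exact_mod_cast hn2
  have hnpos : (0:ℝ) < (n:ℝ) := by linarith
  have hmn : 2 * ((L.card : ℝ) + 3) ≤ (n:ℝ) := by exact_mod_cast hLn
  set m : ℝ := (L.card : ℝ) with hmdef
  have hm0 : 0 ≤ m := by rw [hmdef]; positivity
  set c0 : ℝ := (n:ℝ) - (L.card : ℝ) with hc0def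
  have hc0 : (n:ℝ)/2 ≤ c0 := by rw [hc0def]; linarith
  have hc0pos : (0:ℝ) < c0 := by linarith
  set c1 : ℝ := (n:ℝ) - ((L.card : ℝ) + 1) with hc1def
  have hc1 : (n:ℝ)/2 ≤ c1 := by rw [hc1def]; linarith
  have hc1pos : (0:ℝ) < c1 := by linarith
  have hKK := KK_nonneg ι
  set T₀ := Finset.univ.filter (fun P : Finset (Finset ι) => IsSetPartition P) with hT₀def
  have hT₀ : ∀ P ∈ T₀, IsSetPartition P := fun P hP => (Finset.mem_filter.mp hP).2
  -- the inner bound for κ_i, i ∈ L (second replacement at slot b)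
  have hkappai : ∀ i ∈ L,
      |∑ P ∈ T₀, termS n (Function.update ξ a (fun σ => zval n (σ i))) P|
        ≤ m * KK ι / c0 := by
    intro i hi
    set ζ := Function.update ξ a (fun σ : Om n => zval n (σ i)) with hζdef
    have hζb : ζ b = fun σ : Om n => zval n (σ h1) := by
      rw [hζdef, Function.update_of_ne hab.symm, hξb]
    have hζself : ζ = Function.update ζ b (fun σ : Om n => zval n (σ h1)) := by
      rw [← hζb, Function.update_eq_self]
    have hdepζ : ∀ β, β ≠ b → DependsOn (ζ β) L := by
      intro β hβb
      by_cases hβa : β = a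
      · subst hβa; rw [hζdef, Function.update_self]; exact dependsOn_coord hi _
      · rw [hζdef, Function.update_of_ne hβa]; exact hdep β hβa hβb
    have hrep2 := sum_termS_replace1 T₀ hT₀ ζ b L h1 hh1 hdepζ (zval n)
    rw [sum_zval n, zero_mul, zero_sub, ← hζself, ← hc0def] at hrep2
    have hbdd2 : ∀ i' ∈ L, |∑ P ∈ T₀,
        termS n (Function.update ζ b (fun σ => zval n (σ i'))) P| ≤ KK ι := by
      intro i' _
      refine abs_sum_termS_le T₀ hT₀ ?_
      intro β σ
      by_cases hβb : β = b
      · subst hβb; rw [Function.update_self]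
        exact (hz2 _).trans (by norm_num)
      · rw [Function.update_of_ne hβb]
        by_cases hβa : β = a
        · subst hβa; rw [hζdef, Function.update_self]
          exact (hz2 _).trans (by norm_num)
        · rw [hζdef, Function.update_of_ne hβa]
          exact (hbdd β hβa hβb σ).trans (by norm_num)
    have h2 : |∑ i' ∈ L, ∑ P ∈ T₀,
        termS n (Function.update ζ b (fun σ => zval n (σ i'))) P| ≤ m * KK ι := by
      refine (Finset.abs_sum_le_sum_abs _ _).trans ?_
      calc ∑ i' ∈ L, |∑ P ∈ T₀, termS n (Function.update ζ b
              (fun σ => zval n (σ i'))) P|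
          ≤ L.card • KK ι := Finset.sum_le_card_nsmul L _ (KK ι) hbdd2
        _ = m * KK ι := by rw [nsmul_eq_mul, hmdef]
    have h3 : |c0 * ∑ P ∈ T₀, termS n ζ P| ≤ m * KK ι := by rw [hrep2, abs_neg]; exact h2
    rw [abs_mul, abs_of_pos hc0pos] at h3
    rw [le_div_iff₀ hc0pos]
    linarith
  -- first replacement, at slot a, with I = insert h1 L
  have hh0I : h0 ∉ insert h1 L := by
    simp only [Finset.mem_insert]
    rintro (h | h)
    · exact hne h
    · exact hh0 h
  have hdepI : ∀ β, β ≠ a → DependsOn (ξ β) (insert h1 L) := by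
    intro β hβa
    by_cases hβb : β = b
    · subst hβb; rw [hξb]
      exact dependsOn_coord (Finset.mem_insert_self h1 L) _
    · exact dependsOn_mono (hdep β hβa hβb) (Finset.subset_insert h1 L)
  have hξself : ξ = Function.update ξ a (fun σ : Om n => zval n (σ h0)) := by
    rw [← hξa, Function.update_eq_self]
  have hrep := sum_termS_replace1 T₀ hT₀ ξ a (insert h1 L) h0 hh0I hdepI (zval n)
  rw [sum_zval n, zero_mul, zero_sub, ← hξself] at hrep
  have hcast : ((n:ℝ) - ((insert h1 L).card : ℝ)) = c1 := by
    rw [Finset.card_insert_of_notMem hh1, hc1def]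
    push_cast
    ring
  rw [hcast, Finset.sum_insert hh1] at hrep
  -- bound the repeated-coordinate term via bound_repeated
  have hκrep : |∑ P ∈ T₀, termS n (Function.update ξ a (fun σ => zval n (σ h1))) P|
      ≤ 16 * ((L.card : ℝ) + 1) ^ 2 * KK ι / n := by
    have hbr := bound_repeated hab hxa hxb hn2 hh1 (by omega)
      (ξ := Function.update ξ a (fun σ : Om n => zval n (σ h1)))
      (Function.update_self _ _ _)
      (by rw [Function.update_of_ne hab.symm, hξb])
      (fun β hβa hβb => by
        rw [Function.update_of_ne hβa]; exact hdep β hβa hβb)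
      (fun β hβa hβb σ => by
        rw [Function.update_of_ne hβa]; exact hbdd β hβa hβb σ)
    rw [← hT₀def] at hbr
    exact hbr
  -- combine
  have hκsum : |∑ i ∈ L, ∑ P ∈ T₀,
      termS n (Function.update ξ a (fun σ => zval n (σ i))) P| ≤ m * (m * KK ι / c0) := by
    refine (Finset.abs_sum_le_sum_abs _ _).trans ?_
    calc ∑ i ∈ L, |∑ P ∈ T₀, termS n (Function.update ξ a (fun σ => zval n (σ i))) P|
        ≤ L.card • (m * KK ι / c0) := Finset.sum_le_card_nsmul L _ _ hkappai
      _ = m * (m * KK ι / c0) := by rw [nsmul_eq_mul, hmdef]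
  set Xn : ℝ := 16 * (m + 1) ^ 2 * KK ι + 2 * (m * m * KK ι) with hXdef
  have hX0 : 0 ≤ Xn := by rw [hXdef]; exact add_nonneg (mul_nonneg (mul_nonneg (by norm_num) (sq_nonneg _)) hKK) (mul_nonneg (by norm_num) (mul_nonneg (mul_nonneg hm0 hm0) hKK))
  have hmid : m * (m * KK ι / c0) ≤ 2 * (m * m * KK ι) / n := by
    have he : m * (m * KK ι / c0) = (m * m * KK ι) / c0 := by
      field_simp
    rw [he, div_le_div_iff₀ hc0pos hnpos]
    calc m * m * KK ι * n ≤ m * m * KK ι * (2 * c0) :=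
          mul_le_mul_of_nonneg_left (by linarith) (mul_nonneg (mul_nonneg hm0 hm0) hKK)
      _ = 2 * (m * m * KK ι) * c0 := by ring
  have h6 : |c1 * ∑ P ∈ T₀, termS n ξ P|
      ≤ 16 * (m + 1) ^ 2 * KK ι / n + m * (m * KK ι / c0) := by
    rw [hrep, abs_neg]
    refine (abs_add_le _ _).trans ?_
    have hmm : 16 * ((L.card : ℝ) + 1) ^ 2 * KK ι / n = 16 * (m + 1) ^ 2 * KK ι / n := by
      rw [hmdef]
    exact add_le_add (hmm ▸ hκrep) hκsum
  rw [abs_mul, abs_of_pos hc1pos] at h6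
  have h7 : 16 * (m + 1) ^ 2 * KK ι / n + m * (m * KK ι / c0) ≤ Xn / n := by
    have he : Xn / n = 16 * (m + 1) ^ 2 * KK ι / n + 2 * (m * m * KK ι) / n := by
      rw [hXdef]; ring
    rw [he]
    linarith
  have hgoal1 : |∑ P ∈ T₀, termS n ξ P| ≤ Xn / n / c1 := by
    rw [le_div_iff₀ hc1pos]
    linarith
  refine hgoal1.trans ?_
  rw [div_div, div_le_div_iff₀ (by positivity) (by positivity)]
  have hp : (m + 1) ^ 2 ≤ (m + 2) ^ 3 := by nlinarith [hm0]
  have hq : m * m ≤ (m + 2) ^ 3 := by nlinarith [hm0]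
  have hXle : Xn ≤ 40 * (m + 2) ^ 3 * KK ι := by
    rw [hXdef]
    nlinarith [mul_le_mul_of_nonneg_right hp hKK, mul_le_mul_of_nonneg_right hq hKK]
  calc Xn * ((n:ℝ) * (n:ℝ)) ≤ (40 * (m + 2) ^ 3 * KK ι) * ((n:ℝ) * (n:ℝ)) :=
        mul_le_mul_of_nonneg_right hXle (by positivity)
    _ = (80 * (m + 2) ^ 3 * KK ι) * ((n:ℝ) * ((n:ℝ) / 2)) := by ring
    _ ≤ (80 * (m + 2) ^ 3 * KK ι) * ((n:ℝ) * c1) := by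
        refine mul_le_mul_of_nonneg_left ?_ (mul_nonneg (mul_nonneg (by norm_num) (pow_nonneg (by linarith) 3)) hKK)
        exact mul_le_mul_of_nonneg_left hc1 hnpos.le

end DistinctBound

section Expectations

set_option linter.unusedSectionVars false

lemma sum_perm_zz_same {n : ℕ} (hn2 : 2 ≤ n) (v : Fin n) :
    ∑ σ : Om n, zval n (σ v) * zval n (σ v) = cardP n := by
  have key := key_identity (∅ : Finset (Fin n)) v (Finset.notMem_empty v)
    (fun _ => (1:ℝ)) (dependsOn_const 1 ∅) (fun q => zval n q * zval n q)
  simp only [Finset.card_empty, Nat.cast_zero, sub_zero, Finset.sum_empty, one_mul] at key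
  rw [sum_zval_sq hn2] at key
  have hone : ∑ σ : Om n, (1:ℝ) = cardP n := by
    rw [Finset.sum_const, Finset.card_univ, nsmul_eq_mul, mul_one]; rfl
  rw [hone] at key
  have hn0 : (n:ℝ) ≠ 0 := by
    have : (2:ℝ) ≤ (n:ℝ) := by exact_mod_cast hn2
    linarith
  exact mul_left_cancel₀ hn0 key

lemma sum_perm_zz_distinct {n : ℕ} (hn2 : 2 ≤ n) {v w : Fin n} (hvw : v ≠ w) :
    ∑ σ : Om n, zval n (σ v) * zval n (σ w) = -(cardP n) / ((n:ℝ) - 1) := by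
  have key := key_identity ({v} : Finset (Fin n)) w
    (Finset.notMem_singleton.mpr hvw.symm)
    (fun σ => zval n (σ v)) (dependsOn_coord (Finset.mem_singleton_self v) _) (zval n)
  simp only [Finset.card_singleton, Nat.cast_one, Finset.sum_singleton] at key
  rw [sum_zval n, zero_mul, sum_perm_zz_same hn2 v] at key
  have hn1 : (0:ℝ) < (n:ℝ) - 1 := by
    have : (2:ℝ) ≤ (n:ℝ) := by exact_mod_cast hn2
    linarith
  have hne : (n:ℝ) - 1 ≠ 0 := ne_of_gt hn1
  field_simp
  linarith [key]

lemma integral_ZZ_same {n : ℕ} (hn2 : 2 ≤ n) (v : Fin n) :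
    ∫ σ, Zr n v σ * Zr n v σ ∂(permMeasure n) = 1 := by
  rw [integral_perm]
  rw [show (∑ σ : Om n, Zr n v σ * Zr n v σ)
      = ∑ σ : Om n, zval n (σ v) * zval n (σ v) from rfl]
  rw [sum_perm_zz_same hn2 v, div_self (cardP_ne n)]

lemma integral_ZZ_distinct {n : ℕ} (hn2 : 2 ≤ n) {v w : Fin n} (hvw : v ≠ w) :
    ∫ σ, Zr n v σ * Zr n w σ ∂(permMeasure n) = -1 / ((n:ℝ) - 1) := by
  rw [integral_perm]
  rw [show (∑ σ : Om n, Zr n v σ * Zr n w σ)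
      = ∑ σ : Om n, zval n (σ v) * zval n (σ w) from rfl]
  rw [sum_perm_zz_distinct hn2 hvw]
  have hn1 : (0:ℝ) < (n:ℝ) - 1 := by
    have : (2:ℝ) ≤ (n:ℝ) := by exact_mod_cast hn2
    linarith
  have hne : (n:ℝ) - 1 ≠ 0 := ne_of_gt hn1
  have hc := cardP_ne n
  field_simp

end Expectations

end SpearmanProof

set_option maxHeartbeats 1000000 in
/-- For fixed `s ≥ 2` there is a constant `C` such that, for all large enough `n` and all
indices `l_1,…,l_s, h_1, h_2` with `l_1 = l_2`, with `l_2,…,l_s` mutually distinct and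
distinct from `h_1, h_2`,
`|C(Z_{l_1},Z_{l_1},…,Z_{l_s},Z_{l_s},Z_{h_1},Z_{h_2})| ≤ C·n^{−1}·|E[Z_{h_1}Z_{h_2}]|`. -/
theorem spearman_cumulant_repeated_l_bound (s : ℕ) (hs : 2 ≤ s) :
    ∃ C : ℝ, ∃ N : ℕ, ∀ n : ℕ, N ≤ n →
      ∀ l : Fin s → Fin n, ∀ h : Fin 2 → Fin n,
        l ⟨0, by omega⟩ = l ⟨1, by omega⟩ →
        (∀ i j : Fin s, 1 ≤ (i : ℕ) → 1 ≤ (j : ℕ) → i ≠ j → l i ≠ l j) →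
        (∀ i : Fin s, 1 ≤ (i : ℕ) → l i ≠ h 0 ∧ l i ≠ h 1) →
        |jointCumulant (permMeasure n)
            (fun x : (Fin s × Fin 2) ⊕ Fin 2 =>
              Sum.elim (fun i : Fin s × Fin 2 => Zr n (l i.1)) (fun a => Zr n (h a)) x)| ≤
          C * (n : ℝ) ^ (-1 : ℤ) *
            |∫ σ, Zr n (h 0) σ * Zr n (h 1) σ ∂(permMeasure n)| := by
  classical
  refine ⟨100 * ((s:ℝ) + 2) ^ 3 * SpearmanProof.KK ((Fin s × Fin 2) ⊕ Fin 2),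
    2 * s + 6, ?_⟩
  intro n hn l h hl01 hldist hlh
  have hn2 : 2 ≤ n := by omega
  have hn2' : (2:ℝ) ≤ (n:ℝ) := by exact_mod_cast hn2
  have hs' : (2:ℝ) ≤ (s:ℝ) := by exact_mod_cast hs
  have hnpos : (0:ℝ) < (n:ℝ) := by linarith
  have hKK := SpearmanProof.KK_nonneg ((Fin s × Fin 2) ⊕ Fin 2)
  have hC0 : (0:ℝ) ≤ 100 * ((s:ℝ) + 2) ^ 3 * SpearmanProof.KK ((Fin s × Fin 2) ⊕ Fin 2) := by
    have h3 : (0:ℝ) ≤ ((s:ℝ)+2)^3 := by positivity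
    nlinarith
  set a : (Fin s × Fin 2) ⊕ Fin 2 := Sum.inr 0 with hadef
  set b : (Fin s × Fin 2) ⊕ Fin 2 := Sum.inr 1 with hbdef
  have hab : a ≠ b := by
    rw [hadef, hbdef]
    simp only [ne_eq, Sum.inr.injEq]
    simp [Fin.ext_iff]
  set x₀ : (Fin s × Fin 2) ⊕ Fin 2 := Sum.inl (⟨0, by omega⟩, 0) with hxdef
  have hxa : x₀ ≠ a := by rw [hxdef, hadef]; simp
  have hxb : x₀ ≠ b := by rw [hxdef, hbdef]; simp
  set L : Finset (Fin n) := (Finset.univ.erase (⟨0, by omega⟩ : Fin s)).image l with hLdef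
  have hLcard : L.card ≤ s - 1 := by
    refine le_trans Finset.card_image_le ?_
    rw [Finset.card_erase_of_mem (Finset.mem_univ _), Finset.card_univ, Fintype.card_fin]
  have hLs : L.card + 1 ≤ s := by omega
  have hmemL : ∀ i : Fin s, l i ∈ L := by
    intro i
    by_cases hi : (i : ℕ) = 0
    · have hieq : i = ⟨0, by omega⟩ := Fin.ext hi
      rw [hLdef, hieq, hl01]
      refine Finset.mem_image_of_mem l (Finset.mem_erase.mpr ⟨?_, Finset.mem_univ _⟩)
      simp [Fin.ext_iff]
    · rw [hLdef]
      exact Finset.mem_image_of_mem l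
        (Finset.mem_erase.mpr ⟨fun hc => hi (by rw [hc]), Finset.mem_univ _⟩)
  have hh0L : h 0 ∉ L := by
    rw [hLdef]
    intro hc
    obtain ⟨i, hi, hli⟩ := Finset.mem_image.mp hc
    have h1i : 1 ≤ (i : ℕ) := by
      have hne0 : (i:ℕ) ≠ 0 := fun hz => (Finset.mem_erase.mp hi).1 (Fin.ext hz)
      omega
    exact (hlh i h1i).1 hli
  have hh1L : h 1 ∉ L := by
    rw [hLdef]
    intro hc
    obtain ⟨i, hi, hli⟩ := Finset.mem_image.mp hc
    have h1i : 1 ≤ (i : ℕ) := by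
      have hne0 : (i:ℕ) ≠ 0 := fun hz => (Finset.mem_erase.mp hi).1 (Fin.ext hz)
      omega
    exact (hlh i h1i).2 hli
  set ξ : ((Fin s × Fin 2) ⊕ Fin 2) → SpearmanProof.Om n → ℝ := fun x =>
    Sum.elim (fun i : Fin s × Fin 2 => Zr n (l i.1)) (fun a => Zr n (h a)) x with hξdef
  have hξa : ξ a = fun σ => SpearmanProof.zval n (σ (h 0)) := rfl
  have hξb : ξ b = fun σ => SpearmanProof.zval n (σ (h 1)) := rfl
  have hdep : ∀ β, β ≠ a → β ≠ b → SpearmanProof.DependsOn (ξ β) L := by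
    intro β hβa hβb
    rcases β with ⟨i, k⟩ | t
    · have he : ξ (Sum.inl (i, k)) = fun σ => SpearmanProof.zval n (σ (l i)) := rfl
      rw [he]
      exact SpearmanProof.dependsOn_coord (hmemL i) _
    · exfalso
      rcases t with ⟨tv, htv⟩
      match tv, htv with
      | 0, htv => exact hβa (by rw [hadef]; simp [Fin.ext_iff])
      | 1, htv => exact hβb (by rw [hbdef]; simp [Fin.ext_iff])
  have hbdd : ∀ β, β ≠ a → β ≠ b → ∀ σ, |ξ β σ| ≤ 2 := by
    intro β hβa hβb σ
    rcases β with ⟨i, k⟩ | t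
    · exact SpearmanProof.abs_zval_le hn2 _
    · exact SpearmanProof.abs_zval_le hn2 _
  rw [SpearmanProof.jointCumulant_eq_sum ξ]
  by_cases hcase : h 0 = h 1
  · have hint : ∫ σ, Zr n (h 0) σ * Zr n (h 1) σ ∂(permMeasure n) = 1 := by
      rw [hcase]; exact SpearmanProof.integral_ZZ_same hn2 (h 1)
    rw [hint, abs_one, mul_one]
    have hbound := SpearmanProof.bound_repeated hab hxa hxb hn2 hh1L
      (by omega : 2 * (L.card + 2) ≤ n)
      (by rw [hξa, hcase]) hξb hdep hbdd
    refine hbound.trans ?_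
    rw [zpow_neg_one, div_eq_mul_inv]
    refine mul_le_mul_of_nonneg_right ?_ (by positivity)
    have hms : ((L.card:ℝ) + 1) ≤ (s:ℝ) := by exact_mod_cast hLs
    have hm1 : (0:ℝ) ≤ (L.card:ℝ) + 1 := by positivity
    have hs2 : ((L.card:ℝ) + 1) ^ 2 ≤ ((s:ℝ) + 2) ^ 3 := by
      have h1 : ((L.card:ℝ) + 1) ^ 2 ≤ (s:ℝ) * (s:ℝ) := by nlinarith
      nlinarith [h1, hs']
    nlinarith [mul_le_mul_of_nonneg_right hs2 hKK,
      mul_nonneg (by positivity : (0:ℝ) ≤ ((s:ℝ)+2)^3) hKK]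
  · have hint : ∫ σ, Zr n (h 0) σ * Zr n (h 1) σ ∂(permMeasure n)
        = -1 / ((n:ℝ) - 1) := SpearmanProof.integral_ZZ_distinct hn2 hcase
    rw [hint]
    have hn1 : (0:ℝ) < (n:ℝ) - 1 := by linarith
    have habs : |(-1 : ℝ) / ((n:ℝ) - 1)| = 1 / ((n:ℝ) - 1) := by
      rw [abs_div, abs_neg, abs_one, abs_of_pos hn1]
    rw [habs]
    have hbound := SpearmanProof.bound_distinct hab hxa hxb hn2 hcase hh0L hh1L
      (by omega : 2 * (L.card + 3) ≤ n) hξa hξb hdep hbdd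
    refine hbound.trans ?_
    rw [zpow_neg_one]
    have hrhs : 100 * ((s:ℝ) + 2) ^ 3 * SpearmanProof.KK ((Fin s × Fin 2) ⊕ Fin 2)
        * ((n:ℝ))⁻¹ * (1 / ((n:ℝ) - 1))
        = 100 * ((s:ℝ) + 2) ^ 3 * SpearmanProof.KK ((Fin s × Fin 2) ⊕ Fin 2)
          / ((n:ℝ) * ((n:ℝ) - 1)) := by
      field_simp
    rw [hrhs, div_le_div_iff₀ (by positivity) (by positivity)]
    have hms : ((L.card:ℝ) + 2) ≤ (s:ℝ) + 2 := by
      have h' : (L.card : ℝ) ≤ (s:ℝ) := by exact_mod_cast (by omega : L.card ≤ s)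
      linarith
    have hcube : ((L.card:ℝ) + 2) ^ 3 ≤ ((s:ℝ) + 2) ^ 3 :=
      pow_le_pow_left₀ (by positivity) hms 3
    have hstep : 80 * ((L.card:ℝ) + 2) ^ 3 * SpearmanProof.KK ((Fin s × Fin 2) ⊕ Fin 2)
        ≤ 100 * ((s:ℝ) + 2) ^ 3 * SpearmanProof.KK ((Fin s × Fin 2) ⊕ Fin 2) := by
      nlinarith [mul_le_mul_of_nonneg_right hcube hKK,
        mul_nonneg (by positivity : (0:ℝ) ≤ ((s:ℝ)+2)^3) hKK]
    calc 80 * ((L.card:ℝ) + 2) ^ 3 * SpearmanProof.KK ((Fin s × Fin 2) ⊕ Fin 2)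
          * ((n:ℝ) * ((n:ℝ) - 1))
        ≤ (100 * ((s:ℝ) + 2) ^ 3 * SpearmanProof.KK ((Fin s × Fin 2) ⊕ Fin 2))
          * ((n:ℝ) * ((n:ℝ) - 1)) := mul_le_mul_of_nonneg_right hstep (by positivity)
      _ ≤ (100 * ((s:ℝ) + 2) ^ 3 * SpearmanProof.KK ((Fin s × Fin 2) ⊕ Fin 2))
          * ((n:ℝ) * (n:ℝ)) := by
          refine mul_le_mul_of_nonneg_left ?_ hC0
          nlinarith [hnpos]
end
end
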